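/- arXiv:1406.1779 — 10 statements merged into one kernel-verified Lean document; each statement's English description precedes it below -/
import Mathlib

section
/- (Fréchet–Hoeffding bound.) Let X₁ and X₂ be real-valued random variables defined on a common probability space, with cumulative distribution functions F₁ and F₂ respectively, each with finite nonzero variance, and suppose X₁X₂, F₁^{-1}(U)F₂^{-1}(U) and F₁^{-1}(U)F₂^{-1}(1−U) are integrable, where U is uniformly distributed on [0,1]. Then Corr(F₁^{-1}(U), F₂^{-1}(1−U)) ≤ Corr(X₁, X₂) ≤ Corr(F₁^{-1}(U), F₂^{-1}(U)). -/
set_option linter.unusedSectionVars false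
set_option linter.unusedVariables false
set_option linter.unnecessarySeqFocus false
set_option maxHeartbeats 1600000

open MeasureTheory ProbabilityTheory

/-- The pseudoinverse `F⁻¹(u) = inf{x : F(x) ≥ u}` of a cdf `F`. -/
noncomputable def pseudoInv (F : ℝ → ℝ) (u : ℝ) : ℝ := sInf {x : ℝ | u ≤ F x}

/-- Correlation of two real random variables:
`Corr(X,Y) = (E[XY] − E[X]E[Y]) / √(Var(X)·Var(Y))`. -/
noncomputable def corr {Ω : Type*} [MeasurableSpace Ω] (μ : Measure Ω) (X Y : Ω → ℝ) : ℝ :=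
  ((∫ ω, X ω * Y ω ∂μ) - (∫ ω, X ω ∂μ) * (∫ ω, Y ω ∂μ)) /
    Real.sqrt (variance X μ * variance Y μ)

namespace FrechetAux
open Set

section P1
noncomputable def gg (a s : ℝ) : ℝ := (if s < a then 1 else 0) - (if s < 0 then 1 else 0)

lemma gg_of_nonneg {a : ℝ} (ha : 0 ≤ a) :
    gg a = (Ico (0:ℝ) a).indicator (fun _ => (1:ℝ)) := by
  funext s
  rcases lt_or_ge s 0 with h0 | h0
  · have hsa : s < a := lt_of_lt_of_le h0 ha
    have hni : ¬(0 ≤ s ∧ s < a) := fun h => absurd h.1 (not_le.mpr h0)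
    simp [gg, indicator_apply, mem_Ico, h0, hsa, hni]
  · rcases lt_or_ge s a with h1 | h1
    · simp [gg, indicator_apply, mem_Ico, h0, h1, not_lt.mpr h0]
    · have hni : ¬(0 ≤ s ∧ s < a) := fun h => absurd h.2 (not_lt.mpr h1)
      simp [gg, indicator_apply, mem_Ico, not_lt.mpr h0, not_lt.mpr h1, hni]

lemma gg_of_neg {a : ℝ} (ha : a < 0) :
    gg a = fun s => -((Ico a (0:ℝ)).indicator (fun _ => (1:ℝ)) s) := by
  funext s
  rcases lt_or_ge s a with h1 | h1
  · have hs0 : s < 0 := lt_trans h1 ha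
    have hni : ¬(a ≤ s ∧ s < 0) := fun h => absurd h.1 (not_le.mpr h1)
    simp [gg, indicator_apply, mem_Ico, h1, hs0, hni]
  · rcases lt_or_ge s 0 with h0 | h0
    · simp [gg, indicator_apply, mem_Ico, h0, h1, not_lt.mpr h1]
    · have hni : ¬(a ≤ s ∧ s < 0) := fun h => absurd h.2 (not_lt.mpr h0)
      simp [gg, indicator_apply, mem_Ico, not_lt.mpr h0, not_lt.mpr h1, hni]

lemma integrable_indicator_one_Ico (a b : ℝ) :
    Integrable ((Ico a b).indicator (fun _ => (1:ℝ))) volume := by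
  rw [integrable_indicator_iff measurableSet_Ico]
  exact integrableOn_const measure_Ico_lt_top.ne

lemma integrable_gg (a : ℝ) : Integrable (gg a) volume := by
  rcases le_or_gt 0 a with ha | ha
  · rw [gg_of_nonneg ha]; exact integrable_indicator_one_Ico 0 a
  · rw [gg_of_neg ha]; exact (integrable_indicator_one_Ico a 0).neg

lemma integral_gg (a : ℝ) : ∫ s, gg a s = a := by
  rcases le_or_gt 0 a with ha | ha
  · rw [gg_of_nonneg ha, MeasureTheory.integral_indicator_const (1:ℝ) measurableSet_Ico]
    simp [Real.volume_Ico, ENNReal.toReal_ofReal ha, ha]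
  · rw [gg_of_neg ha]
    rw [integral_neg, MeasureTheory.integral_indicator_const (1:ℝ) measurableSet_Ico]
    simp only [measureReal_def, Real.volume_Ico, smul_eq_mul, mul_one]
    rw [ENNReal.toReal_ofReal (by linarith)]
    ring

lemma abs_gg (a : ℝ) : (fun s => |gg a s|) = (Ico (min a 0) (max a 0)).indicator (fun _ => (1:ℝ)) := by
  rcases le_or_gt 0 a with ha | ha
  · rw [gg_of_nonneg ha]
    funext s
    rw [min_eq_right ha, max_eq_left ha]
    simp [indicator_apply]; split_ifs <;> norm_num
  · rw [gg_of_neg ha]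
    funext s
    rw [min_eq_left ha.le, max_eq_right ha.le]
    simp [indicator_apply]; split_ifs <;> norm_num

lemma integral_abs_gg (a : ℝ) : ∫ s, |gg a s| = |a| := by
  rw [abs_gg, MeasureTheory.integral_indicator_const (1:ℝ) measurableSet_Ico]
  rcases le_or_gt 0 a with ha | ha
  · rw [min_eq_right ha, max_eq_left ha]
    simp [Real.volume_Ico, ENNReal.toReal_ofReal ha, abs_of_nonneg ha, ha]
  · rw [min_eq_left ha.le, max_eq_right ha.le]
    simp only [measureReal_def, Real.volume_Ico, smul_eq_mul, mul_one]
    rw [ENNReal.toReal_ofReal (by linarith : (0:ℝ) ≤ 0 - a), abs_of_neg ha]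
    ring

lemma integrable_abs_gg (a : ℝ) : Integrable (fun s => |gg a s|) volume := (integrable_gg a).abs

end P1

section P2
variable {Ω : Type*} [MeasurableSpace Ω]
lemma integrable_ind (μ : Measure Ω) [IsFiniteMeasure μ] {A : Set Ω} (hA : MeasurableSet A) :
    Integrable (A.indicator (fun _ => (1:ℝ))) μ := by
  rw [integrable_indicator_iff hA]
  exact integrableOn_const (measure_lt_top μ A).ne

lemma integral_ind (μ : Measure Ω) {A : Set Ω} (hA : MeasurableSet A) :
    ∫ ω, A.indicator (fun _ => (1:ℝ)) ω ∂μ = (μ A).toReal := by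
  rw [MeasureTheory.integral_indicator_const (1:ℝ) hA, smul_eq_mul, mul_one, measureReal_def]

/-- measurability of the product-space signed indicator -/
lemma measurable_gg_prod {X : Ω → ℝ} (hX : Measurable X) :
    Measurable (fun p : Ω × ℝ => gg (X p.1) p.2) := by
  have h1 : MeasurableSet {q : Ω × ℝ | q.2 < X q.1} :=
    measurableSet_lt measurable_snd (hX.comp measurable_fst)
  have h2 : MeasurableSet {q : Ω × ℝ | q.2 < (0:ℝ)} :=
    measurableSet_lt measurable_snd measurable_const
  have : (fun p : Ω × ℝ => gg (X p.1) p.2) =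
      fun p => ({q : Ω × ℝ | q.2 < X q.1}.indicator (fun _ => (1:ℝ)) p) -
        ({q : Ω × ℝ | q.2 < (0:ℝ)}.indicator (fun _ => (1:ℝ)) p) := by
    funext p; simp [gg, indicator_apply]
  rw [this]
  exact ((measurable_const.indicator h1).sub (measurable_const.indicator h2))

lemma integrable_gg_prod (μ : Measure Ω) [IsProbabilityMeasure μ] {X : Ω → ℝ}
    (hX : Measurable X) (hXi : Integrable X μ) :
    Integrable (Function.uncurry fun ω s => gg (X ω) s) (μ.prod volume) := by
  have : Integrable (fun p : Ω × ℝ => gg (X p.1) p.2) (μ.prod volume) := by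
    rw [integrable_prod_iff ((measurable_gg_prod hX).aestronglyMeasurable)]
    constructor
    · exact Filter.Eventually.of_forall fun ω => integrable_gg (X ω)
    · have : (fun ω => ∫ s, ‖gg (X ω) s‖) = fun ω => |X ω| := by
        funext ω; simp only [Real.norm_eq_abs]; exact integral_abs_gg (X ω)
      rw [this]; exact hXi.abs
  exact this

/-- mean formula: `E X = ∫ (S(s) - 1_{s<0}) ds` -/
lemma mean_repr (μ : Measure Ω) [IsProbabilityMeasure μ] {X : Ω → ℝ}
    (hX : Measurable X) (hXi : Integrable X μ) :
    Integrable (fun s => (μ (X ⁻¹' Ioi s)).toReal - (if s < (0:ℝ) then 1 else 0)) volume ∧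
    ∫ s, ((μ (X ⁻¹' Ioi s)).toReal - (if s < (0:ℝ) then 1 else 0)) = ∫ ω, X ω ∂μ := by
  have hprod := integrable_gg_prod μ hX hXi
  have hsec : ∀ s : ℝ, ∫ ω, gg (X ω) s ∂μ =
      (μ (X ⁻¹' Ioi s)).toReal - (if s < (0:ℝ) then 1 else 0) := by
    intro s
    have h1 : (fun ω => gg (X ω) s) =
        fun ω => (X ⁻¹' Ioi s).indicator (fun _ => (1:ℝ)) ω - (if s < (0:ℝ) then 1 else 0) := by
      funext ω
      by_cases h : s < X ω <;> simp [gg, h, indicator_apply, mem_preimage, mem_Ioi]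
    rw [h1, integral_sub (integrable_ind μ (hX measurableSet_Ioi)) (integrable_const _),
      integral_ind μ (hX measurableSet_Ioi), integral_const]
    simp
  constructor
  · have := hprod.integral_prod_right
    refine this.congr (Filter.Eventually.of_forall fun s => ?_)
    exact (hsec s)
  · have hswap := MeasureTheory.integral_integral_swap (f := fun ω s => gg (X ω) s) hprod
    have hleft : ∫ ω, ∫ s, gg (X ω) s ∂volume ∂μ = ∫ ω, X ω ∂μ :=
      integral_congr_ae (Filter.Eventually.of_forall fun ω => integral_gg (X ω))
    rw [hleft] at hswap
    have h2 : ∫ s, ((μ (X ⁻¹' Ioi s)).toReal - if s < (0:ℝ) then 1 else 0) =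
        ∫ s, ∫ ω, gg (X ω) s ∂μ :=
      integral_congr_ae (Filter.Eventually.of_forall fun s => (hsec s).symm)
    rw [h2]
    exact hswap.symm
end P2

section P3
variable {Ω : Type*} [MeasurableSpace Ω]
noncomputable def SV (μ : Measure Ω) (X : Ω → ℝ) (s : ℝ) : ℝ := (μ (X ⁻¹' Ioi s)).toReal
/-- integrable tail of the survival function -/
noncomputable def BV (μ : Measure Ω) (X : Ω → ℝ) (s : ℝ) : ℝ :=
  SV μ X s - (if s < (0:ℝ) then 1 else 0)
/-- centered indicator -/
noncomputable def hC (μ : Measure Ω) (X : Ω → ℝ) (s : ℝ) (ω : Ω) : ℝ :=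
  (X ⁻¹' Ioi s).indicator (fun _ => (1:ℝ)) ω - SV μ X s

variable (μ : Measure Ω) [IsProbabilityMeasure μ] {X Y : Ω → ℝ}

lemma SV_nonneg (s : ℝ) : 0 ≤ SV μ X s := ENNReal.toReal_nonneg

lemma SV_le_one (s : ℝ) : SV μ X s ≤ 1 := by
  have h := prob_le_one (μ := μ) (s := X ⁻¹' Ioi s)
  simpa [SV] using ENNReal.toReal_mono ENNReal.one_ne_top h

lemma measurable_SV : Measurable (SV μ X) := by
  have : Antitone (SV μ X) := by
    intro a b hab
    exact ENNReal.toReal_mono (measure_ne_top μ _)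
      (measure_mono (preimage_mono (Ioi_subset_Ioi hab)))
  exact this.measurable

lemma hC_eq (hX : Measurable X) : ∀ s ω, hC μ X s ω = gg (X ω) s - BV μ X s := by
  intro s ω
  by_cases h : s < X ω <;>
    simp [hC, gg, BV, h, indicator_apply, mem_preimage, mem_Ioi] <;> ring

lemma BV_integrable (hX : Measurable X) (hXi : Integrable X μ) :
    Integrable (fun s => BV μ X s) volume := (mean_repr μ hX hXi).1

lemma BV_integral (hX : Measurable X) (hXi : Integrable X μ) :
    ∫ s, BV μ X s = ∫ ω, X ω ∂μ := (mean_repr μ hX hXi).2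

lemma integrable_hC (hX : Measurable X) (hXi : Integrable X μ) (ω : Ω) :
    Integrable (fun s => hC μ X s ω) volume := by
  have : (fun s => hC μ X s ω) = fun s => gg (X ω) s - BV μ X s := by
    funext s; exact hC_eq μ hX s ω
  rw [this]
  exact (integrable_gg (X ω)).sub (BV_integrable μ hX hXi)

lemma integral_hC (hX : Measurable X) (hXi : Integrable X μ) (ω : Ω) :
    ∫ s, hC μ X s ω = X ω - ∫ ω', X ω' ∂μ := by
  have h : (fun s => hC μ X s ω) = fun s => gg (X ω) s - BV μ X s := by
    funext s; exact hC_eq μ hX s ω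
  rw [h, integral_sub (integrable_gg (X ω)) (BV_integrable μ hX hXi),
    integral_gg (X ω), BV_integral μ hX hXi]

lemma abs_hC_le_one (s : ℝ) (ω : Ω) : |hC μ X s ω| ≤ 1 := by
  have h1 := SV_nonneg μ (X := X) s
  have h2 := SV_le_one μ (X := X) s
  by_cases h : ω ∈ X ⁻¹' Ioi s <;>
    simp [hC, h, indicator_apply, abs_le] <;> constructor <;> linarith

lemma abs_hC_le (hX : Measurable X) (s : ℝ) (ω : Ω) :
    |hC μ X s ω| ≤ |gg (X ω) s| + |BV μ X s| := by
  rw [hC_eq μ hX s ω]; exact abs_sub _ _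

lemma measurable_hC_prod (hX : Measurable X) :
    Measurable (fun p : Ω × ℝ => hC μ X p.2 p.1) := by
  have h1 : MeasurableSet {q : Ω × ℝ | q.2 < X q.1} :=
    measurableSet_lt measurable_snd (hX.comp measurable_fst)
  have : (fun p : Ω × ℝ => hC μ X p.2 p.1) = fun p =>
      ({q : Ω × ℝ | q.2 < X q.1}.indicator (fun _ => (1:ℝ)) p) - SV μ X p.2 := by
    funext p
    by_cases h : p.2 < X p.1 <;>
      simp [hC, h, indicator_apply, mem_preimage, mem_Ioi]
  rw [this]
  exact (measurable_const.indicator h1).sub ((measurable_SV μ).comp measurable_snd)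

lemma int_abs_hC_le (hX : Measurable X) (hXi : Integrable X μ) (ω : Ω) :
    ∫ s, |hC μ X s ω| ≤ |X ω| + ∫ s, |BV μ X s| := by
  have hint : Integrable (fun s => |gg (X ω) s| + |BV μ X s|) volume :=
    (integrable_gg (X ω)).abs.add (BV_integrable μ hX hXi).abs
  calc ∫ s, |hC μ X s ω| ≤ ∫ s, (|gg (X ω) s| + |BV μ X s|) := by
        apply integral_mono (integrable_hC μ hX hXi ω).abs hint
        intro s; exact abs_hC_le μ hX s ω
    _ = |X ω| + ∫ s, |BV μ X s| := by
        rw [integral_add (integrable_gg (X ω)).abs (BV_integrable μ hX hXi).abs,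
          integral_abs_gg (X ω)]

end P3

section P4
variable {Ω : Type*} [MeasurableSpace Ω]
variable (μ : Measure Ω) [IsProbabilityMeasure μ] {X Y : Ω → ℝ}
lemma measurable_BV : Measurable (fun s => BV μ X s) := by
  have h : (fun s => BV μ X s) =
      fun s => SV μ X s - (Iio (0:ℝ)).indicator (fun _ => (1:ℝ)) s := by
    funext s
    by_cases h : s < 0 <;> simp [BV, h, indicator_apply, mem_Iio]
  rw [h]
  exact (measurable_SV μ).sub (measurable_const.indicator measurableSet_Iio)

lemma measurable_hC_fixed (hX : Measurable X) (s : ℝ) :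
    Measurable (fun ω => hC μ X s ω) :=
  (measurable_const.indicator (hX measurableSet_Ioi)).sub measurable_const

/-- the inner covariance of indicators -/
lemma hPsi (hX : Measurable X) (hY : Measurable Y) (s t : ℝ) :
    ∫ ω, hC μ X s ω * hC μ Y t ω ∂μ
      = (μ (X ⁻¹' Ioi s ∩ Y ⁻¹' Ioi t)).toReal - SV μ X s * SV μ Y t := by
  have hIX : Integrable ((X ⁻¹' Ioi s).indicator (fun _ => (1:ℝ))) μ :=
    integrable_ind μ (hX measurableSet_Ioi)
  have hIY : Integrable ((Y ⁻¹' Ioi t).indicator (fun _ => (1:ℝ))) μ :=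
    integrable_ind μ (hY measurableSet_Ioi)
  have hprod : (fun ω => (X ⁻¹' Ioi s).indicator (fun _ => (1:ℝ)) ω *
      (Y ⁻¹' Ioi t).indicator (fun _ => (1:ℝ)) ω) =
      (X ⁻¹' Ioi s ∩ Y ⁻¹' Ioi t).indicator (fun _ => (1:ℝ)) := by
    funext ω
    by_cases h1 : ω ∈ X ⁻¹' Ioi s <;> by_cases h2 : ω ∈ Y ⁻¹' Ioi t <;>
      simp [indicator_apply, h1, h2, mem_inter_iff]
  have hIXY : Integrable (fun ω => (X ⁻¹' Ioi s).indicator (fun _ => (1:ℝ)) ω *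
      (Y ⁻¹' Ioi t).indicator (fun _ => (1:ℝ)) ω) μ := by
    rw [hprod]; exact integrable_ind μ ((hX measurableSet_Ioi).inter (hY measurableSet_Ioi))
  have hexp : ∀ ω, hC μ X s ω * hC μ Y t ω =
      ((X ⁻¹' Ioi s).indicator (fun _ => (1:ℝ)) ω * (Y ⁻¹' Ioi t).indicator (fun _ => (1:ℝ)) ω
        - SV μ Y t * (X ⁻¹' Ioi s).indicator (fun _ => (1:ℝ)) ω)
        - (SV μ X s * (Y ⁻¹' Ioi t).indicator (fun _ => (1:ℝ)) ω - SV μ X s * SV μ Y t) := by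
    intro ω; simp only [hC]; ring
  have i1 : Integrable (fun ω => (X ⁻¹' Ioi s).indicator (fun _ => (1:ℝ)) ω *
      (Y ⁻¹' Ioi t).indicator (fun _ => (1:ℝ)) ω
      - SV μ Y t * (X ⁻¹' Ioi s).indicator (fun _ => (1:ℝ)) ω) μ :=
    hIXY.sub (hIX.const_mul _)
  have i2 : Integrable (fun ω => SV μ X s * (Y ⁻¹' Ioi t).indicator (fun _ => (1:ℝ)) ω
      - SV μ X s * SV μ Y t) μ := (hIY.const_mul _).sub (integrable_const _)
  have i3 : Integrable (fun ω => SV μ Y t * (X ⁻¹' Ioi s).indicator (fun _ => (1:ℝ)) ω) μ :=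
    hIX.const_mul _
  have i4 : Integrable (fun ω => SV μ X s * (Y ⁻¹' Ioi t).indicator (fun _ => (1:ℝ)) ω) μ :=
    hIY.const_mul _
  rw [integral_congr_ae (Filter.Eventually.of_forall hexp),
    integral_sub i1 i2, integral_sub hIXY i3, integral_sub i4 (integrable_const _),
    MeasureTheory.integral_const_mul, MeasureTheory.integral_const_mul, integral_const, hprod,
    integral_ind μ ((hX measurableSet_Ioi).inter (hY measurableSet_Ioi)),
    integral_ind μ (hX measurableSet_Ioi), integral_ind μ (hY measurableSet_Ioi)]
  simp only [probReal_univ, smul_eq_mul, one_mul]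
  show _ = _ - SV μ X s * SV μ Y t
  simp only [SV]
  ring

/-- inner Fubini, for fixed `s` -/
lemma hswap2 (hX : Measurable X) (hY : Measurable Y)
    (hXi : Integrable X μ) (hYi : Integrable Y μ) (s : ℝ) :
    Integrable (fun t => ∫ ω, hC μ X s ω * hC μ Y t ω ∂μ) volume ∧
    ∫ ω, hC μ X s ω * (Y ω - ∫ ω', Y ω' ∂μ) ∂μ = ∫ t, ∫ ω, hC μ X s ω * hC μ Y t ω ∂μ := by
  have hmeas : Measurable (fun p : Ω × ℝ => hC μ X s p.1 * hC μ Y p.2 p.1) :=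
    ((measurable_hC_fixed μ hX s).comp measurable_fst).mul (measurable_hC_prod μ hY)
  have hdom1 : Integrable (fun p : Ω × ℝ => |gg (Y p.1) p.2|) (μ.prod volume) := by
    rw [integrable_prod_iff ((measurable_gg_prod hY).abs.aestronglyMeasurable)]
    constructor
    · exact Filter.Eventually.of_forall fun ω => (integrable_gg (Y ω)).abs
    · have h : (fun ω => ∫ t, ‖|gg (Y ω) t|‖) = fun ω => |Y ω| := by
        funext ω
        simp only [Real.norm_eq_abs, abs_abs]
        exact integral_abs_gg (Y ω)
      rw [h]; exact hYi.abs
  have hdom2 : Integrable (fun p : Ω × ℝ => |BV μ Y p.2|) (μ.prod volume) := by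
    have hm2 : Measurable (fun p : Ω × ℝ => |BV μ Y p.2|) :=
      ((measurable_BV μ).abs).comp measurable_snd
    rw [integrable_prod_iff hm2.aestronglyMeasurable]
    constructor
    · exact Filter.Eventually.of_forall fun ω => (BV_integrable μ hY hYi).abs
    · exact integrable_const (∫ t, ‖|BV μ Y t|‖)
  have hGint : Integrable (fun p : Ω × ℝ => hC μ X s p.1 * hC μ Y p.2 p.1) (μ.prod volume) := by
    refine Integrable.mono' (hdom1.add hdom2) hmeas.aestronglyMeasurable
      (Filter.Eventually.of_forall fun p => ?_)
    rw [Real.norm_eq_abs, abs_mul]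
    calc |hC μ X s p.1| * |hC μ Y p.2 p.1| ≤ 1 * |hC μ Y p.2 p.1| := by
          apply mul_le_mul_of_nonneg_right (abs_hC_le_one μ s p.1) (abs_nonneg _)
      _ = |hC μ Y p.2 p.1| := one_mul _
      _ ≤ |gg (Y p.1) p.2| + |BV μ Y p.2| := abs_hC_le μ hY p.2 p.1
  constructor
  · exact hGint.integral_prod_right
  · have h1 : ∀ ω, hC μ X s ω * (Y ω - ∫ ω', Y ω' ∂μ) = ∫ t, hC μ X s ω * hC μ Y t ω := by
      intro ω
      rw [MeasureTheory.integral_const_mul, integral_hC μ hY hYi ω]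
    rw [integral_congr_ae (Filter.Eventually.of_forall h1)]
    exact integral_integral_swap (f := fun ω t => hC μ X s ω * hC μ Y t ω) hGint

/-- outer Fubini -/
lemma hswap1 (hX : Measurable X) (hY : Measurable Y)
    (hXi : Integrable X μ) (hYi : Integrable Y μ)
    (hXYabs : Integrable (fun ω => |X ω| * |Y ω|) μ) :
    Integrable (fun s => ∫ ω, hC μ X s ω * (Y ω - ∫ ω', Y ω' ∂μ) ∂μ) volume ∧
    ∫ ω, (X ω - ∫ ω', X ω' ∂μ) * (Y ω - ∫ ω', Y ω' ∂μ) ∂μ =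
      ∫ s, ∫ ω, hC μ X s ω * (Y ω - ∫ ω', Y ω' ∂μ) ∂μ := by
  set EY := ∫ ω', Y ω' ∂μ with hEY
  set CB := ∫ s, |BV μ X s| with hCB
  have hCB0 : 0 ≤ CB := integral_nonneg fun s => abs_nonneg _
  have hmeas : Measurable (fun p : Ω × ℝ => hC μ X p.2 p.1 * (Y p.1 - EY)) :=
    (measurable_hC_prod μ hX).mul ((hY.comp measurable_fst).sub measurable_const)
  have hFint : Integrable (fun p : Ω × ℝ => hC μ X p.2 p.1 * (Y p.1 - EY)) (μ.prod volume) := by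
    rw [integrable_prod_iff hmeas.aestronglyMeasurable]
    constructor
    · exact Filter.Eventually.of_forall fun ω => (integrable_hC μ hX hXi ω).mul_const (Y ω - EY)
    · have hdomi : Integrable (fun ω => (|X ω| + CB) * (|Y ω| + |EY|)) μ := by
        have heq : (fun ω => (|X ω| + CB) * (|Y ω| + |EY|)) = fun ω =>
            |X ω| * |Y ω| + |EY| * |X ω| + CB * |Y ω| + CB * |EY| := by
          funext ω; ring
        rw [heq]
        exact ((hXYabs.add (hXi.abs.const_mul _)).add (hYi.abs.const_mul _)).add
          (integrable_const _)
      refine Integrable.mono' hdomi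
        (hmeas.norm.aestronglyMeasurable.integral_prod_right')
        (Filter.Eventually.of_forall fun ω => ?_)
      have hnn : (0:ℝ) ≤ ∫ t, ‖hC μ X t ω * (Y ω - EY)‖ :=
        integral_nonneg fun t => norm_nonneg _
      rw [Real.norm_eq_abs, abs_of_nonneg hnn]
      have heq2 : (fun t => ‖hC μ X t ω * (Y ω - EY)‖) = fun t => |hC μ X t ω| * |Y ω - EY| := by
        funext t; rw [Real.norm_eq_abs, abs_mul]
      rw [heq2, MeasureTheory.integral_mul_const]
      have h3 : ∫ t, |hC μ X t ω| ≤ |X ω| + CB := int_abs_hC_le μ hX hXi ω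
      have h4 : |Y ω - EY| ≤ |Y ω| + |EY| := abs_sub _ _
      have h5 : (0:ℝ) ≤ ∫ t, |hC μ X t ω| := integral_nonneg fun t => abs_nonneg _
      exact mul_le_mul h3 h4 (abs_nonneg _) (by linarith)
  constructor
  · exact hFint.integral_prod_right
  · have h1 : ∀ ω, (X ω - ∫ ω', X ω' ∂μ) * (Y ω - EY) = ∫ s, hC μ X s ω * (Y ω - EY) := by
      intro ω
      rw [MeasureTheory.integral_mul_const, integral_hC μ hX hXi ω]
    rw [integral_congr_ae (Filter.Eventually.of_forall h1)]
    exact integral_integral_swap (f := fun ω s => hC μ X s ω * (Y ω - EY)) hFint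

/-- covariance expansion -/
lemma hcovexp (hXi : Integrable X μ) (hYi : Integrable Y μ)
    (hXY : Integrable (fun ω => X ω * Y ω) μ) :
    (∫ ω, X ω * Y ω ∂μ) - (∫ ω, X ω ∂μ) * (∫ ω, Y ω ∂μ) =
      ∫ ω, (X ω - ∫ ω', X ω' ∂μ) * (Y ω - ∫ ω', Y ω' ∂μ) ∂μ := by
  set EX := ∫ ω', X ω' ∂μ with hEX
  set EY := ∫ ω', Y ω' ∂μ with hEY
  have h1 : ∀ ω, (X ω - EX) * (Y ω - EY) = X ω * Y ω - EX * Y ω - EY * X ω + EX * EY := by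
    intro ω; ring
  rw [integral_congr_ae (Filter.Eventually.of_forall h1)]
  have i1 : Integrable (fun ω => X ω * Y ω - EX * Y ω - EY * X ω) μ :=
    (hXY.sub (hYi.const_mul _)).sub (hXi.const_mul _)
  have i2 : Integrable (fun ω => X ω * Y ω - EX * Y ω) μ := hXY.sub (hYi.const_mul _)
  rw [integral_add i1 (integrable_const _), integral_sub i2 (hXi.const_mul _),
    integral_sub hXY (hYi.const_mul _), MeasureTheory.integral_const_mul,
    MeasureTheory.integral_const_mul, integral_const]
  simp only [probReal_univ, smul_eq_mul, one_mul]
  rw [← hEX, ← hEY]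
  ring

/-- The covariance representation (Hoeffding). -/
lemma cov_repr (hX : Measurable X) (hY : Measurable Y)
    (h2X : MemLp X 2 μ) (h2Y : MemLp Y 2 μ)
    (hXY : Integrable (fun ω => X ω * Y ω) μ) :
    (∀ s : ℝ, Integrable (fun t => (μ (X ⁻¹' Ioi s ∩ Y ⁻¹' Ioi t)).toReal
        - SV μ X s * SV μ Y t) volume) ∧
    Integrable (fun s => ∫ t, ((μ (X ⁻¹' Ioi s ∩ Y ⁻¹' Ioi t)).toReal
        - SV μ X s * SV μ Y t)) volume ∧
    (∫ ω, X ω * Y ω ∂μ) - (∫ ω, X ω ∂μ) * (∫ ω, Y ω ∂μ) =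
      ∫ s, ∫ t, ((μ (X ⁻¹' Ioi s ∩ Y ⁻¹' Ioi t)).toReal - SV μ X s * SV μ Y t) := by
  have hXi : Integrable X μ := h2X.integrable one_le_two
  have hYi : Integrable Y μ := h2Y.integrable one_le_two
  have hXYabs : Integrable (fun ω => |X ω| * |Y ω|) μ := by
    have := hXY.abs
    refine this.congr (Filter.Eventually.of_forall fun ω => ?_)
    exact (abs_mul _ _)
  refine ⟨?_, ?_, ?_⟩
  · intro s
    exact ((hswap2 μ hX hY hXi hYi s).1).congr
      (Filter.Eventually.of_forall fun t => hPsi μ hX hY s t)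
  · refine ((hswap1 μ hX hY hXi hYi hXYabs).1).congr (Filter.Eventually.of_forall fun s => ?_)
    beta_reduce
    rw [(hswap2 μ hX hY hXi hYi s).2]
    exact integral_congr_ae (Filter.Eventually.of_forall fun t => hPsi μ hX hY s t)
  · rw [hcovexp μ hXi hYi hXY, (hswap1 μ hX hY hXi hYi hXYabs).2]
    refine integral_congr_ae (Filter.Eventually.of_forall fun s => ?_)
    beta_reduce
    rw [(hswap2 μ hX hY hXi hYi s).2]
    exact integral_congr_ae (Filter.Eventually.of_forall fun t => hPsi μ hX hY s t)

end P4

section P5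
variable {Ω : Type*} [MeasurableSpace Ω]
variable (μ : Measure Ω) [IsProbabilityMeasure μ] {X : Ω → ℝ} {F : ℝ → ℝ}
lemma F_eq (hF : ∀ x, F x = (μ (X ⁻¹' Iic x)).toReal) (x : ℝ) :
    ENNReal.ofReal (F x) = μ (X ⁻¹' Iic x) := by
  rw [hF x, ENNReal.ofReal_toReal (measure_ne_top μ _)]

lemma F_mono (hF : ∀ x, F x = (μ (X ⁻¹' Iic x)).toReal) : Monotone F := by
  intro a b hab
  rw [hF a, hF b]
  exact ENNReal.toReal_mono (measure_ne_top μ _)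
    (measure_mono (preimage_mono (Iic_subset_Iic.mpr hab)))

lemma F_nonneg (hF : ∀ x, F x = (μ (X ⁻¹' Iic x)).toReal) (x : ℝ) : 0 ≤ F x := by
  rw [hF x]; exact ENNReal.toReal_nonneg

lemma F_le_one (hF : ∀ x, F x = (μ (X ⁻¹' Iic x)).toReal) (x : ℝ) : F x ≤ 1 := by
  rw [hF x]
  exact ENNReal.toReal_mono ENNReal.one_ne_top (prob_le_one)

lemma exists_F_lt (hX : Measurable X) (hF : ∀ x, F x = (μ (X ⁻¹' Iic x)).toReal)
    {u : ℝ} (hu : 0 < u) : ∃ y : ℝ, F y < u := by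
  by_contra hcon
  push_neg at hcon
  have hle : ∀ n : ℕ, ENNReal.ofReal u ≤ μ (X ⁻¹' Iic (-(n:ℝ))) := fun n =>
    ENNReal.ofReal_le_of_le_toReal (by rw [← hF]; exact hcon _)
  have hemp : ⋂ n : ℕ, X ⁻¹' Iic (-(n:ℝ)) = ∅ := by
    ext ω
    simp only [mem_iInter, mem_preimage, mem_Iic, mem_empty_iff_false, iff_false, not_forall]
    obtain ⟨n, hn⟩ := exists_nat_gt (-X ω)
    exact ⟨n, by push_neg; linarith⟩
  have key : ∀ m n : ℕ, m ≤ n → X ⁻¹' Iic (-(n:ℝ)) ⊆ X ⁻¹' Iic (-(m:ℝ)) := by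
    intro m n hmn
    refine preimage_mono (Iic_subset_Iic.mpr ?_)
    have : (m:ℝ) ≤ (n:ℝ) := by exact_mod_cast hmn
    linarith
  have hdir : Directed (· ⊇ ·) (fun n : ℕ => X ⁻¹' Iic (-(n:ℝ))) :=
    fun m n => ⟨max m n, key m _ (le_max_left m n), key n _ (le_max_right m n)⟩
  have h0 : μ (⋂ n : ℕ, X ⁻¹' Iic (-(n:ℝ))) = ⨅ n : ℕ, μ (X ⁻¹' Iic (-(n:ℝ))) :=
    Directed.measure_iInter (fun n => (hX measurableSet_Iic).nullMeasurableSet) hdir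
      ⟨0, measure_ne_top μ _⟩
  rw [hemp, measure_empty] at h0
  have : ENNReal.ofReal u ≤ 0 := h0 ▸ le_iInf hle
  simp only [nonpos_iff_eq_zero, ENNReal.ofReal_eq_zero] at this
  linarith

lemma exists_F_ge (hX : Measurable X) (hF : ∀ x, F x = (μ (X ⁻¹' Iic x)).toReal)
    {u : ℝ} (hu : u < 1) : ∃ x : ℝ, u ≤ F x := by
  have huniv : ⋃ n : ℕ, X ⁻¹' Iic (n:ℝ) = univ := by
    ext ω
    simp only [mem_iUnion, mem_preimage, mem_Iic, mem_univ, iff_true]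
    obtain ⟨n, hn⟩ := exists_nat_gt (X ω)
    exact ⟨n, hn.le⟩
  have key : ∀ m n : ℕ, m ≤ n → X ⁻¹' Iic ((m:ℝ)) ⊆ X ⁻¹' Iic ((n:ℝ)) := by
    intro m n hmn
    refine preimage_mono (Iic_subset_Iic.mpr ?_)
    exact_mod_cast hmn
  have hdir : Directed (· ⊆ ·) (fun n : ℕ => X ⁻¹' Iic (n:ℝ)) :=
    fun m n => ⟨max m n, key m _ (le_max_left m n), key n _ (le_max_right m n)⟩
  have h1 : (1:ENNReal) = ⨆ n : ℕ, μ (X ⁻¹' Iic (n:ℝ)) := by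
    rw [← hdir.measure_iUnion, huniv, measure_univ]
  have hlt : ENNReal.ofReal u < ⨆ n : ℕ, μ (X ⁻¹' Iic (n:ℝ)) := by
    rw [← h1]; exact ENNReal.ofReal_lt_one.mpr hu
  obtain ⟨n, hn⟩ := lt_iSup_iff.mp hlt
  refine ⟨n, ?_⟩
  rw [hF]
  exact (ENNReal.ofReal_le_iff_le_toReal (measure_ne_top μ _)).mp hn.le

lemma bddBelow_FSet (hX : Measurable X) (hF : ∀ x, F x = (μ (X ⁻¹' Iic x)).toReal)
    {u : ℝ} (hu : 0 < u) : BddBelow {x : ℝ | u ≤ F x} := by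
  obtain ⟨y, hy⟩ := exists_F_lt μ hX hF hu
  refine ⟨y, fun z hz => ?_⟩
  by_contra hzy
  push_neg at hzy
  exact absurd (le_trans hz (F_mono μ hF hzy.le)) (not_le.mpr hy)

lemma galois (hX : Measurable X) (hF : ∀ x, F x = (μ (X ⁻¹' Iic x)).toReal)
    {u : ℝ} (hu : u ∈ Ioo (0:ℝ) 1) (x : ℝ) :
    pseudoInv F u ≤ x ↔ u ≤ F x := by
  have hne : {x : ℝ | u ≤ F x}.Nonempty := exists_F_ge μ hX hF hu.2
  have hbdd := bddBelow_FSet μ hX hF hu.1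
  constructor
  · intro h
    have hclaim : ∀ n : ℕ, ENNReal.ofReal u ≤ μ (X ⁻¹' Iic (x + 1/(n+1))) := by
      intro n
      have hpos : (0:ℝ) < 1/((n:ℝ)+1) := by positivity
      have hlt : sInf {x : ℝ | u ≤ F x} < x + 1/((n:ℝ)+1) := by
        calc sInf {x : ℝ | u ≤ F x} ≤ x := h
          _ < x + 1/((n:ℝ)+1) := by linarith
      obtain ⟨z, hz, hzlt⟩ := exists_lt_of_csInf_lt hne hlt
      have : u ≤ F (x + 1/((n:ℝ)+1)) := le_trans hz (F_mono μ hF hzlt.le)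
      exact ENNReal.ofReal_le_of_le_toReal (by rw [← hF]; exact this)
    have hset : X ⁻¹' Iic x = ⋂ n : ℕ, X ⁻¹' Iic (x + 1/((n:ℝ)+1)) := by
      ext ω
      simp only [mem_preimage, mem_Iic, mem_iInter]
      constructor
      · intro h n
        have : (0:ℝ) < 1/((n:ℝ)+1) := by positivity
        linarith
      · intro h
        by_contra hcon
        push_neg at hcon
        obtain ⟨n, hn⟩ := exists_nat_one_div_lt (by linarith : (0:ℝ) < X ω - x)
        have := h n
        linarith
    have key : ∀ m n : ℕ, m ≤ n →
        X ⁻¹' Iic (x + 1/((n:ℝ)+1)) ⊆ X ⁻¹' Iic (x + 1/((m:ℝ)+1)) := by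
      intro m n hmn
      refine preimage_mono (Iic_subset_Iic.mpr ?_)
      have h1 : (1:ℝ)/((n:ℝ)+1) ≤ 1/((m:ℝ)+1) := by
        apply one_div_le_one_div_of_le (by positivity)
        have : (m:ℝ) ≤ (n:ℝ) := by exact_mod_cast hmn
        linarith
      linarith
    have hdir : Directed (· ⊇ ·) (fun n : ℕ => X ⁻¹' Iic (x + 1/((n:ℝ)+1))) :=
      fun m n => ⟨max m n, key m _ (le_max_left m n), key n _ (le_max_right m n)⟩
    have hinter : μ (X ⁻¹' Iic x) = ⨅ n : ℕ, μ (X ⁻¹' Iic (x + 1/((n:ℝ)+1))) := by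
      rw [hset]
      exact Directed.measure_iInter (fun n => (hX measurableSet_Iic).nullMeasurableSet) hdir
        ⟨0, measure_ne_top μ _⟩
    have : ENNReal.ofReal u ≤ μ (X ⁻¹' Iic x) := hinter ▸ le_iInf hclaim
    rw [hF]
    exact (ENNReal.ofReal_le_iff_le_toReal (measure_ne_top μ _)).mp this
  · intro h
    exact csInf_le hbdd h

end P5

section P6
variable {Ω : Type*} [MeasurableSpace Ω]
variable (μ : Measure Ω) [IsProbabilityMeasure μ] {X : Ω → ℝ} {F : ℝ → ℝ}
noncomputable def qf (F : ℝ → ℝ) (u : ℝ) : ℝ :=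
  if u ∈ Ioo (0:ℝ) 1 then pseudoInv F u else 0

lemma qf_eq_on {u : ℝ} (hu : u ∈ Ioo (0:ℝ) 1) : qf F u = pseudoInv F u := if_pos hu

lemma qf_measurable (hX : Measurable X) (hF : ∀ x, F x = (μ (X ⁻¹' Iic x)).toReal) :
    Measurable (qf F) := by
  apply measurable_of_Iic
  intro c
  classical
  have hset : qf F ⁻¹' Iic c =
      (Ioo (0:ℝ) 1 ∩ Iic (F c)) ∪ ((Ioo (0:ℝ) 1)ᶜ ∩ (if (0:ℝ) ≤ c then univ else ∅)) := by
    ext u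
    by_cases hu : u ∈ Ioo (0:ℝ) 1
    · simp only [mem_preimage, mem_Iic, qf_eq_on hu, mem_union, mem_inter_iff, hu,
        mem_compl_iff, not_true_eq_false, false_and, or_false, true_and]
      exact galois μ hX hF hu c
    · by_cases hc : (0:ℝ) ≤ c
      · simp [qf, hu, hc, mem_union, mem_inter_iff]
      · simp only [mem_preimage, mem_Iic, qf, if_neg hu, mem_union, mem_inter_iff,
          mem_compl_iff, hu, not_false_eq_true, true_and, false_and, false_or, if_neg hc,
          mem_empty_iff_false, iff_false, and_false]
        exact not_le.mpr (not_le.mp hc)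
  rw [hset]
  refine (measurableSet_Ioo.inter measurableSet_Iic).union
    (measurableSet_Ioo.compl.inter ?_)
  split_ifs <;> simp

variable (ν : Measure ℝ) (hν : ν = volume.restrict (Icc (0:ℝ) 1))

lemma nu_prob : IsProbabilityMeasure (volume.restrict (Icc (0:ℝ) 1)) := by
  constructor
  rw [Measure.restrict_apply MeasurableSet.univ, univ_inter, Real.volume_Icc]
  norm_num

lemma nu_compl_Ioo : (volume.restrict (Icc (0:ℝ) 1)) ((Ioo (0:ℝ) 1)ᶜ) = 0 := by
  rw [Measure.restrict_apply measurableSet_Ioo.compl]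
  have h : (Ioo (0:ℝ) 1)ᶜ ∩ Icc 0 1 = ({0, 1} : Set ℝ) := by
    rw [inter_comm, ← diff_eq, Icc_diff_Ioo_same (by norm_num : (0:ℝ) ≤ 1)]
  rw [h]
  exact (((Set.finite_singleton (1:ℝ)).insert 0).countable).measure_zero volume

lemma nu_ae_Ioo : ∀ᵐ u ∂(volume.restrict (Icc (0:ℝ) 1)), u ∈ Ioo (0:ℝ) 1 := by
  rw [ae_iff]
  have h : {u : ℝ | ¬ u ∈ Ioo (0:ℝ) 1} = (Ioo (0:ℝ) 1)ᶜ := rfl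
  rw [h]
  exact nu_compl_Ioo

lemma qf_ae_eq : qf F =ᵐ[volume.restrict (Icc (0:ℝ) 1)] pseudoInv F := by
  filter_upwards [nu_ae_Ioo] with u hu
  exact qf_eq_on hu

lemma qf_reflect_ae_eq :
    (fun u => qf F (1 - u)) =ᵐ[volume.restrict (Icc (0:ℝ) 1)]
      (fun u => pseudoInv F (1 - u)) := by
  filter_upwards [nu_ae_Ioo] with u hu
  have h1u : (1 - u) ∈ Ioo (0:ℝ) 1 := by
    simp only [mem_Ioo] at hu ⊢
    constructor <;> linarith [hu.1, hu.2]
  exact qf_eq_on h1u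

/-- the quantile map pushes uniform to the law of `X` -/
lemma map_qf (hX : Measurable X) (hF : ∀ x, F x = (μ (X ⁻¹' Iic x)).toReal) :
    Measure.map (qf F) (volume.restrict (Icc (0:ℝ) 1)) = Measure.map X μ := by
  have hprob := nu_prob
  have h1 : IsProbabilityMeasure (Measure.map (qf F) (volume.restrict (Icc (0:ℝ) 1))) :=
    Measure.isProbabilityMeasure_map (qf_measurable μ hX hF).aemeasurable
  refine Measure.ext_of_Iic _ _ (fun a => ?_)
  rw [Measure.map_apply (qf_measurable μ hX hF) measurableSet_Iic,
    Measure.map_apply hX measurableSet_Iic]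
  have hae : (qf F ⁻¹' Iic a : Set ℝ) =ᵐ[volume.restrict (Icc (0:ℝ) 1)] (Iic (F a)) := by
    have h := nu_ae_Ioo
    rw [Filter.eventuallyEq_set]
    filter_upwards [h] with u hu
    simp only [mem_preimage, mem_Iic, qf_eq_on hu]
    exact galois μ hX hF hu a
  rw [measure_congr hae, Measure.restrict_apply measurableSet_Iic]
  have hIcc : Iic (F a) ∩ Icc 0 1 = Icc (0:ℝ) (F a) := by
    ext u
    simp only [mem_inter_iff, mem_Iic, mem_Icc]
    constructor
    · rintro ⟨h1, h2, h3⟩; exact ⟨h2, h1⟩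
    · rintro ⟨h1, h2⟩; exact ⟨h2, h1, le_trans h2 (F_le_one μ hF a)⟩
  rw [hIcc, Real.volume_Icc, sub_zero, hF a, ENNReal.ofReal_toReal (measure_ne_top μ _)]

/-- reflection `u ↦ 1 - u` preserves the uniform measure on `[0,1]` -/
lemma map_reflect :
    Measure.map (fun u : ℝ => 1 - u) (volume.restrict (Icc (0:ℝ) 1)) =
      volume.restrict (Icc (0:ℝ) 1) := by
  have hmp : MeasurePreserving (fun u : ℝ => 1 - u) volume volume := by
    have h1 : MeasurePreserving (fun u : ℝ => -u) volume volume :=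
      Measure.measurePreserving_neg volume
    have h2 : MeasurePreserving (fun u : ℝ => 1 + u) volume volume :=
      measurePreserving_add_left volume 1
    have h3 := h2.comp h1
    have heq : (fun u : ℝ => 1 - u) = (fun u : ℝ => 1 + u) ∘ (fun u : ℝ => -u) := by
      funext u; simp [sub_eq_add_neg]
    rw [heq]
    exact h3
  have hemb : MeasurableEmbedding (fun u : ℝ => 1 - u) := by
    have : (fun u : ℝ => 1 - u) = fun u : ℝ => -u + 1 := by funext u; ring
    rw [this]
    exact (MeasurableEquiv.neg ℝ).trans (MeasurableEquiv.addRight (1:ℝ)) |>.measurableEmbedding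
  have hpre : (fun u : ℝ => 1 - u) ⁻¹' Icc (0:ℝ) 1 = Icc (0:ℝ) 1 := by
    ext u
    simp only [mem_preimage, mem_Icc]
    constructor <;> intro h <;> constructor <;> linarith [h.1, h.2]
  calc Measure.map (fun u : ℝ => 1 - u) (volume.restrict (Icc (0:ℝ) 1))
      = Measure.map (fun u : ℝ => 1 - u) (volume.restrict ((fun u : ℝ => 1 - u) ⁻¹' Icc (0:ℝ) 1)) := by rw [hpre]
    _ = (Measure.map (fun u : ℝ => 1 - u) volume).restrict (Icc (0:ℝ) 1) :=
        (hemb.restrict_map volume (Icc (0:ℝ) 1)).symm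
    _ = volume.restrict (Icc (0:ℝ) 1) := by rw [hmp.map_eq]

end P6

section P7
variable {Ω : Type*} [MeasurableSpace Ω]
variable (μ : Measure Ω) [IsProbabilityMeasure μ] {X : Ω → ℝ} {F : ℝ → ℝ}
lemma qf_gt_iff (hX : Measurable X) (hF : ∀ x, F x = (μ (X ⁻¹' Iic x)).toReal)
    {u : ℝ} (hu : u ∈ Ioo (0:ℝ) 1) (s : ℝ) : s < qf F u ↔ F s < u := by
  have hq : qf F u = pseudoInv F u := if_pos hu
  constructor
  · intro h
    by_contra hc
    push_neg at hc
    exact absurd (hq ▸ (galois μ hX hF hu s).mpr hc) (not_le.mpr h)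
  · intro h
    by_contra hc
    push_neg at hc
    rw [hq] at hc
    exact absurd ((galois μ hX hF hu s).mp hc) (not_le.mpr h)

/-- reflected map also pushes to the law of `X` -/
lemma map_qf_reflect (hX : Measurable X) (hF : ∀ x, F x = (μ (X ⁻¹' Iic x)).toReal) :
    Measure.map (fun u => qf F (1 - u)) (volume.restrict (Icc (0:ℝ) 1)) = Measure.map X μ := by
  have h1 : (fun u : ℝ => qf F (1 - u)) = (qf F) ∘ (fun u : ℝ => 1 - u) := rfl
  have hr : Measurable (fun u : ℝ => 1 - u) := by fun_prop
  rw [h1, ← Measure.map_map (qf_measurable μ hX hF) hr, map_reflect, map_qf μ hX hF]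

/-- marginal survival transfer -/
lemma SV_transfer {g : ℝ → ℝ} (hg : Measurable g)
    (hmap : Measure.map g (volume.restrict (Icc (0:ℝ) 1)) = Measure.map X μ)
    (hX : Measurable X) (s : ℝ) :
    (volume.restrict (Icc (0:ℝ) 1)) (g ⁻¹' Ioi s) = μ (X ⁻¹' Ioi s) := by
  rw [← Measure.map_apply hg measurableSet_Ioi, hmap, Measure.map_apply hX measurableSet_Ioi]

lemma integral_transfer {g : ℝ → ℝ} (hg : Measurable g)
    (hmap : Measure.map g (volume.restrict (Icc (0:ℝ) 1)) = Measure.map X μ)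
    (hX : Measurable X) :
    ∫ u, g u ∂(volume.restrict (Icc (0:ℝ) 1)) = ∫ ω, X ω ∂μ := by
  have h1 : ∫ x, x ∂(Measure.map g (volume.restrict (Icc (0:ℝ) 1))) =
      ∫ u, g u ∂(volume.restrict (Icc (0:ℝ) 1)) :=
    integral_map hg.aemeasurable aestronglyMeasurable_id
  have h2 : ∫ x, x ∂(Measure.map X μ) = ∫ ω, X ω ∂μ :=
    integral_map hX.aemeasurable aestronglyMeasurable_id
  rw [← h1, ← h2, hmap]

lemma sq_integral_transfer {g : ℝ → ℝ} (hg : Measurable g)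
    (hmap : Measure.map g (volume.restrict (Icc (0:ℝ) 1)) = Measure.map X μ)
    (hX : Measurable X) :
    ∫ u, (g u)^2 ∂(volume.restrict (Icc (0:ℝ) 1)) = ∫ ω, (X ω)^2 ∂μ := by
  have hc : AEStronglyMeasurable (fun x : ℝ => x^2) (Measure.map X μ) :=
    (continuous_pow 2).aestronglyMeasurable
  have hc' : AEStronglyMeasurable (fun x : ℝ => x^2)
      (Measure.map g (volume.restrict (Icc (0:ℝ) 1))) := (continuous_pow 2).aestronglyMeasurable
  have h1 := integral_map (f := fun x : ℝ => x^2) hg.aemeasurable hc'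
  have h2 := integral_map (f := fun x : ℝ => x^2) hX.aemeasurable hc
  rw [← h1, ← h2, hmap]

lemma memLp_transfer {g : ℝ → ℝ} (hg : Measurable g)
    (hmap : Measure.map g (volume.restrict (Icc (0:ℝ) 1)) = Measure.map X μ)
    (hX : Measurable X) (hm : MemLp X 2 μ) : MemLp g 2 (volume.restrict (Icc (0:ℝ) 1)) := by
  have h2 : MemLp id 2 (Measure.map X μ) := by
    rw [memLp_map_measure_iff aestronglyMeasurable_id hX.aemeasurable]
    exact hm
  rw [← hmap] at h2
  rw [memLp_map_measure_iff aestronglyMeasurable_id hg.aemeasurable] at h2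
  exact h2

lemma variance_transfer {g : ℝ → ℝ} (hg : Measurable g)
    (hmap : Measure.map g (volume.restrict (Icc (0:ℝ) 1)) = Measure.map X μ)
    (hX : Measurable X) (hm : MemLp X 2 μ) :
    variance g (volume.restrict (Icc (0:ℝ) 1)) = variance X μ := by
  have := nu_prob
  have hg2 : MemLp g 2 (volume.restrict (Icc (0:ℝ) 1)) := memLp_transfer μ hg hmap hX hm
  rw [variance_eq_sub hg2, variance_eq_sub hm]
  simp only [Pi.pow_apply]
  rw [sq_integral_transfer μ hg hmap hX, integral_transfer μ hg hmap hX]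

lemma variance_congr'' {α : Type*} [MeasurableSpace α] {ν : Measure α} {X' Y' : α → ℝ}
    (h : X' =ᵐ[ν] Y') : variance X' ν = variance Y' ν := by
  have hev : evariance X' ν = evariance Y' ν := by
    unfold ProbabilityTheory.evariance
    rw [integral_congr_ae h]
    exact lintegral_congr_ae (h.mono fun ω hω => by simp only [hω])
  unfold ProbabilityTheory.variance
  rw [hev]

lemma corr_congr {α : Type*} [MeasurableSpace α] {ν : Measure α} {f f' g g' : α → ℝ}
    (h1 : f =ᵐ[ν] f') (h2 : g =ᵐ[ν] g') :
    corr ν f g = corr ν f' g' := by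
  unfold corr
  rw [integral_congr_ae (f := fun ω => f ω * g ω) (g := fun ω => f' ω * g' ω) (h1.mul h2), integral_congr_ae h1, integral_congr_ae h2,
    variance_congr'' h1, variance_congr'' h2]

/-- survival = 1 - cdf -/
lemma SV_eq (hX : Measurable X) (hF : ∀ x, F x = (μ (X ⁻¹' Iic x)).toReal) (s : ℝ) :
    (μ (X ⁻¹' Ioi s)).toReal = 1 - F s := by
  have hcompl : X ⁻¹' Ioi s = (X ⁻¹' Iic s)ᶜ := by
    rw [← preimage_compl, compl_Iic]
  have hadd : μ (X ⁻¹' Iic s) + μ ((X ⁻¹' Iic s)ᶜ) = 1 := by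
    rw [measure_add_measure_compl (hX measurableSet_Iic), measure_univ]
  have := congrArg ENNReal.toReal hadd
  rw [ENNReal.toReal_add (measure_ne_top μ _) (measure_ne_top μ _), ENNReal.toReal_one] at this
  rw [hcompl, hF]
  linarith

/-- comonotone joint survival -/
lemma joint_co {X₂ : Ω → ℝ} {F₂ : ℝ → ℝ} (hX : Measurable X) (hX₂ : Measurable X₂)
    (hF : ∀ x, F x = (μ (X ⁻¹' Iic x)).toReal)
    (hF₂ : ∀ x, F₂ x = (μ (X₂ ⁻¹' Iic x)).toReal) (s t : ℝ) :
    (volume.restrict (Icc (0:ℝ) 1)) ((qf F) ⁻¹' Ioi s ∩ (qf F₂) ⁻¹' Ioi t) =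
      ENNReal.ofReal (1 - max (F s) (F₂ t)) := by
  set m := max (F s) (F₂ t) with hm
  have hm0 : 0 ≤ m := le_trans (F_nonneg μ hF s) (le_max_left _ _)
  have hm1 : m ≤ 1 := max_le (F_le_one μ hF s) (F_le_one μ hF₂ t)
  have hae : ((qf F) ⁻¹' Ioi s ∩ (qf F₂) ⁻¹' Ioi t : Set ℝ)
      =ᵐ[volume.restrict (Icc (0:ℝ) 1)] (Ioi m) := by
    rw [Filter.eventuallyEq_set]
    filter_upwards [nu_ae_Ioo] with u hu
    simp only [mem_inter_iff, mem_preimage, mem_Ioi]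
    rw [qf_gt_iff μ hX hF hu s, qf_gt_iff μ hX₂ hF₂ hu t, hm, max_lt_iff]
  rw [measure_congr hae, Measure.restrict_apply measurableSet_Ioi]
  have : Ioi m ∩ Icc 0 1 = Ioc m 1 := by
    ext u
    simp only [mem_inter_iff, mem_Ioi, mem_Icc, mem_Ioc]
    constructor
    · rintro ⟨h1, h2, h3⟩; exact ⟨h1, h3⟩
    · rintro ⟨h1, h2⟩; exact ⟨h1, le_trans hm0 h1.le, h2⟩
  rw [this, Real.volume_Ioc]

/-- countermonotone joint survival -/
lemma joint_counter {X₂ : Ω → ℝ} {F₂ : ℝ → ℝ} (hX : Measurable X) (hX₂ : Measurable X₂)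
    (hF : ∀ x, F x = (μ (X ⁻¹' Iic x)).toReal)
    (hF₂ : ∀ x, F₂ x = (μ (X₂ ⁻¹' Iic x)).toReal) (s t : ℝ) :
    (volume.restrict (Icc (0:ℝ) 1)) ((qf F) ⁻¹' Ioi s ∩ (fun u => qf F₂ (1 - u)) ⁻¹' Ioi t) =
      ENNReal.ofReal ((1 - F₂ t) - F s) := by
  have ha0 : 0 ≤ F s := F_nonneg μ hF s
  have hb1 : 1 - F₂ t ≤ 1 := by linarith [F_nonneg μ hF₂ t]
  have hae : ((qf F) ⁻¹' Ioi s ∩ (fun u => qf F₂ (1 - u)) ⁻¹' Ioi t : Set ℝ)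
      =ᵐ[volume.restrict (Icc (0:ℝ) 1)] (Ioo (F s) (1 - F₂ t)) := by
    rw [Filter.eventuallyEq_set]
    filter_upwards [nu_ae_Ioo] with u hu
    have hu' : (1 - u) ∈ Ioo (0:ℝ) 1 := by
      simp only [mem_Ioo] at hu ⊢; constructor <;> linarith [hu.1, hu.2]
    simp only [mem_inter_iff, mem_preimage, mem_Ioi, mem_Ioo]
    rw [qf_gt_iff μ hX hF hu s, qf_gt_iff μ hX₂ hF₂ hu' t]
    constructor
    · rintro ⟨h1, h2⟩; exact ⟨h1, by linarith⟩
    · rintro ⟨h1, h2⟩; exact ⟨h1, by linarith⟩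
  rw [measure_congr hae, Measure.restrict_apply measurableSet_Ioo]
  have : Ioo (F s) (1 - F₂ t) ∩ Icc 0 1 = Ioo (F s) (1 - F₂ t) := by
    refine inter_eq_left.mpr ?_
    intro u hu
    simp only [mem_Ioo] at hu
    exact ⟨by linarith [hu.1], by linarith [hu.2]⟩
  rw [this, Real.volume_Ioo]

/-- Fréchet pointwise bounds -/
lemma H_le_min {A B : Set Ω} :
    (μ (A ∩ B)).toReal ≤ min ((μ A).toReal) ((μ B).toReal) := by
  refine le_min ?_ ?_ <;>
    exact ENNReal.toReal_mono (measure_ne_top μ _)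
      (measure_mono (by first | exact inter_subset_left | exact inter_subset_right))

lemma H_ge {A B : Set Ω} (hB : MeasurableSet B) :
    (μ A).toReal + (μ B).toReal - 1 ≤ (μ (A ∩ B)).toReal := by
  have h := measure_union_add_inter (μ := μ) A hB
  have := congrArg ENNReal.toReal h
  rw [ENNReal.toReal_add (measure_ne_top μ _) (measure_ne_top μ _),
    ENNReal.toReal_add (measure_ne_top μ _) (measure_ne_top μ _)] at this
  have hle : (μ (A ∪ B)).toReal ≤ 1 := by
    have := prob_le_one (μ := μ) (s := A ∪ B)
    exact ENNReal.toReal_mono ENNReal.one_ne_top this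
  linarith

end P7

end FrechetAux

/-- Fréchet–Hoeffding bound: for random variables `X₁, X₂` with cdfs `F₁, F₂`,
finite nonzero variances, and the relevant products integrable (`U` uniform on `[0,1]`),
`Corr(F₁⁻¹(U), F₂⁻¹(1−U)) ≤ Corr(X₁,X₂) ≤ Corr(F₁⁻¹(U), F₂⁻¹(U))`. -/
theorem frechet_hoeffding {Ω : Type*} [MeasurableSpace Ω] (μ : Measure Ω)
    [IsProbabilityMeasure μ] (X₁ X₂ : Ω → ℝ) (hX₁ : Measurable X₁) (hX₂ : Measurable X₂)
    (F₁ F₂ : ℝ → ℝ)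
    (hF₁ : ∀ x, F₁ x = (μ (X₁ ⁻¹' Set.Iic x)).toReal)
    (hF₂ : ∀ x, F₂ x = (μ (X₂ ⁻¹' Set.Iic x)).toReal)
    (hm₁ : MemLp X₁ 2 μ) (hm₂ : MemLp X₂ 2 μ)
    (hv₁ : variance X₁ μ ≠ 0) (hv₂ : variance X₂ μ ≠ 0)
    (ν : Measure ℝ) (hν : ν = volume.restrict (Set.Icc (0 : ℝ) 1))
    (hint : Integrable (fun ω => X₁ ω * X₂ ω) μ)
    (hint₁ : Integrable (fun u => pseudoInv F₁ u * pseudoInv F₂ u) ν)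
    (hint₂ : Integrable (fun u => pseudoInv F₁ u * pseudoInv F₂ (1 - u)) ν) :
    corr ν (fun u => pseudoInv F₁ u) (fun u => pseudoInv F₂ (1 - u)) ≤ corr μ X₁ X₂ ∧
      corr μ X₁ X₂ ≤ corr ν (fun u => pseudoInv F₁ u) (fun u => pseudoInv F₂ u) := by
  classical
  subst hν
  haveI hP : IsProbabilityMeasure (volume.restrict (Set.Icc (0:ℝ) 1)) := FrechetAux.nu_prob
  have hg₁m : Measurable (FrechetAux.qf F₁) := FrechetAux.qf_measurable μ hX₁ hF₁
  have hg₂m : Measurable (FrechetAux.qf F₂) := FrechetAux.qf_measurable μ hX₂ hF₂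
  have hrefl : Measurable (fun u : ℝ => 1 - u) := by fun_prop
  have hg₂'m : Measurable (fun u : ℝ => FrechetAux.qf F₂ (1 - u)) := hg₂m.comp hrefl
  have hmap₁ := FrechetAux.map_qf μ hX₁ hF₁
  have hmap₂ := FrechetAux.map_qf μ hX₂ hF₂
  have hmap₂' := FrechetAux.map_qf_reflect μ hX₂ hF₂
  have hae₁ : (fun u => pseudoInv F₁ u) =ᵐ[volume.restrict (Set.Icc (0:ℝ) 1)]
      FrechetAux.qf F₁ := (FrechetAux.qf_ae_eq (F := F₁)).symm
  have hae₂ : (fun u => pseudoInv F₂ u) =ᵐ[volume.restrict (Set.Icc (0:ℝ) 1)]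
      FrechetAux.qf F₂ := (FrechetAux.qf_ae_eq (F := F₂)).symm
  have hae₂' : (fun u => pseudoInv F₂ (1 - u)) =ᵐ[volume.restrict (Set.Icc (0:ℝ) 1)]
      (fun u => FrechetAux.qf F₂ (1 - u)) := (FrechetAux.qf_reflect_ae_eq (F := F₂)).symm
  have hcorrCo : corr (volume.restrict (Set.Icc (0:ℝ) 1)) (fun u => pseudoInv F₁ u)
      (fun u => pseudoInv F₂ u) =
      corr (volume.restrict (Set.Icc (0:ℝ) 1)) (FrechetAux.qf F₁) (FrechetAux.qf F₂) :=
    FrechetAux.corr_congr hae₁ hae₂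
  have hcorrCn : corr (volume.restrict (Set.Icc (0:ℝ) 1)) (fun u => pseudoInv F₁ u)
      (fun u => pseudoInv F₂ (1 - u)) =
      corr (volume.restrict (Set.Icc (0:ℝ) 1)) (FrechetAux.qf F₁)
        (fun u => FrechetAux.qf F₂ (1 - u)) :=
    FrechetAux.corr_congr hae₁ hae₂'
  rw [hcorrCn, hcorrCo]
  have hq₁2 := FrechetAux.memLp_transfer μ hg₁m hmap₁ hX₁ hm₁
  have hq₂2 := FrechetAux.memLp_transfer μ hg₂m hmap₂ hX₂ hm₂
  have hq₂'2 := FrechetAux.memLp_transfer μ hg₂'m hmap₂' hX₂ hm₂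
  have hi₁ : Integrable (fun u => FrechetAux.qf F₁ u * FrechetAux.qf F₂ u)
      (volume.restrict (Set.Icc (0:ℝ) 1)) := hint₁.congr (hae₁.mul hae₂)
  have hi₂ : Integrable (fun u => FrechetAux.qf F₁ u * FrechetAux.qf F₂ (1 - u))
      (volume.restrict (Set.Icc (0:ℝ) 1)) := hint₂.congr (hae₁.mul hae₂')
  obtain ⟨hKa, hKb, hKc⟩ := FrechetAux.cov_repr μ hX₁ hX₂ hm₁ hm₂ hint
  obtain ⟨hCa, hCb, hCc⟩ := FrechetAux.cov_repr (volume.restrict (Set.Icc (0:ℝ) 1))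
    hg₁m hg₂m hq₁2 hq₂2 hi₁
  obtain ⟨hDa, hDb, hDc⟩ := FrechetAux.cov_repr (volume.restrict (Set.Icc (0:ℝ) 1))
    hg₁m hg₂'m hq₁2 hq₂'2 hi₂
  have hSV₁ : ∀ s, FrechetAux.SV (volume.restrict (Set.Icc (0:ℝ) 1)) (FrechetAux.qf F₁) s =
      FrechetAux.SV μ X₁ s := fun s =>
    congrArg ENNReal.toReal (FrechetAux.SV_transfer μ hg₁m hmap₁ hX₁ s)
  have hSV₂ : ∀ t, FrechetAux.SV (volume.restrict (Set.Icc (0:ℝ) 1)) (FrechetAux.qf F₂) t =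
      FrechetAux.SV μ X₂ t := fun t =>
    congrArg ENNReal.toReal (FrechetAux.SV_transfer μ hg₂m hmap₂ hX₂ t)
  have hSV₂' : ∀ t, FrechetAux.SV (volume.restrict (Set.Icc (0:ℝ) 1))
      (fun u => FrechetAux.qf F₂ (1 - u)) t = FrechetAux.SV μ X₂ t := fun t =>
    congrArg ENNReal.toReal (FrechetAux.SV_transfer μ hg₂'m hmap₂' hX₂ t)
  have hupper : ∀ s t : ℝ,
      (μ (X₁ ⁻¹' Set.Ioi s ∩ X₂ ⁻¹' Set.Ioi t)).toReal -
        FrechetAux.SV μ X₁ s * FrechetAux.SV μ X₂ t ≤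
      ((volume.restrict (Set.Icc (0:ℝ) 1))
          ((FrechetAux.qf F₁) ⁻¹' Set.Ioi s ∩ (FrechetAux.qf F₂) ⁻¹' Set.Ioi t)).toReal -
        FrechetAux.SV (volume.restrict (Set.Icc (0:ℝ) 1)) (FrechetAux.qf F₁) s *
          FrechetAux.SV (volume.restrict (Set.Icc (0:ℝ) 1)) (FrechetAux.qf F₂) t := by
    intro s t
    rw [hSV₁ s, hSV₂ t, FrechetAux.joint_co μ hX₁ hX₂ hF₁ hF₂ s t]
    have hmax1 : max (F₁ s) (F₂ t) ≤ 1 :=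
      max_le (FrechetAux.F_le_one μ hF₁ s) (FrechetAux.F_le_one μ hF₂ t)
    rw [ENNReal.toReal_ofReal (by linarith)]
    have h1 : (μ (X₁ ⁻¹' Set.Ioi s ∩ X₂ ⁻¹' Set.Ioi t)).toReal ≤
        min (FrechetAux.SV μ X₁ s) (FrechetAux.SV μ X₂ t) := FrechetAux.H_le_min μ
    have h2 : min (FrechetAux.SV μ X₁ s) (FrechetAux.SV μ X₂ t) = 1 - max (F₁ s) (F₂ t) := by
      have e1 : FrechetAux.SV μ X₁ s = 1 - F₁ s := FrechetAux.SV_eq μ hX₁ hF₁ s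
      have e2 : FrechetAux.SV μ X₂ t = 1 - F₂ t := FrechetAux.SV_eq μ hX₂ hF₂ t
      rcases le_total (F₁ s) (F₂ t) with h | h
      · rw [max_eq_right h, e1, e2, min_eq_right (by linarith)]
      · rw [max_eq_left h, e1, e2, min_eq_left (by linarith)]
    linarith [h1, h2]
  have hlower : ∀ s t : ℝ,
      ((volume.restrict (Set.Icc (0:ℝ) 1))
          ((FrechetAux.qf F₁) ⁻¹' Set.Ioi s ∩
            (fun u => FrechetAux.qf F₂ (1 - u)) ⁻¹' Set.Ioi t)).toReal -
        FrechetAux.SV (volume.restrict (Set.Icc (0:ℝ) 1)) (FrechetAux.qf F₁) s *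
          FrechetAux.SV (volume.restrict (Set.Icc (0:ℝ) 1))
            (fun u => FrechetAux.qf F₂ (1 - u)) t ≤
      (μ (X₁ ⁻¹' Set.Ioi s ∩ X₂ ⁻¹' Set.Ioi t)).toReal -
        FrechetAux.SV μ X₁ s * FrechetAux.SV μ X₂ t := by
    intro s t
    rw [hSV₁ s, hSV₂' t, FrechetAux.joint_counter μ hX₁ hX₂ hF₁ hF₂ s t]
    have e1 : FrechetAux.SV μ X₁ s = 1 - F₁ s := FrechetAux.SV_eq μ hX₁ hF₁ s
    have e2 : FrechetAux.SV μ X₂ t = 1 - F₂ t := FrechetAux.SV_eq μ hX₂ hF₂ t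
    have hH0 : (0:ℝ) ≤ (μ (X₁ ⁻¹' Set.Ioi s ∩ X₂ ⁻¹' Set.Ioi t)).toReal :=
      ENNReal.toReal_nonneg
    rcases le_or_gt ((1 - F₂ t) - F₁ s) 0 with h | h
    · rw [ENNReal.ofReal_of_nonpos h]
      simp only [ENNReal.toReal_zero]
      linarith
    · rw [ENNReal.toReal_ofReal h.le]
      have h3 : FrechetAux.SV μ X₁ s + FrechetAux.SV μ X₂ t - 1 ≤
          (μ (X₁ ⁻¹' Set.Ioi s ∩ X₂ ⁻¹' Set.Ioi t)).toReal :=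
        FrechetAux.H_ge μ (hX₂ measurableSet_Ioi)
      linarith
  have hcov_up : (∫ ω, X₁ ω * X₂ ω ∂μ) - (∫ ω, X₁ ω ∂μ) * (∫ ω, X₂ ω ∂μ) ≤
      (∫ u, FrechetAux.qf F₁ u * FrechetAux.qf F₂ u ∂(volume.restrict (Set.Icc (0:ℝ) 1))) -
        (∫ u, FrechetAux.qf F₁ u ∂(volume.restrict (Set.Icc (0:ℝ) 1))) *
          (∫ u, FrechetAux.qf F₂ u ∂(volume.restrict (Set.Icc (0:ℝ) 1))) := by
    rw [hKc, hCc]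
    refine integral_mono hKb hCb fun s => ?_
    exact integral_mono (hKa s) (hCa s) fun t => hupper s t
  have hcov_lo :
      (∫ u, FrechetAux.qf F₁ u * FrechetAux.qf F₂ (1 - u)
          ∂(volume.restrict (Set.Icc (0:ℝ) 1))) -
        (∫ u, FrechetAux.qf F₁ u ∂(volume.restrict (Set.Icc (0:ℝ) 1))) *
          (∫ u, FrechetAux.qf F₂ (1 - u) ∂(volume.restrict (Set.Icc (0:ℝ) 1))) ≤
      (∫ ω, X₁ ω * X₂ ω ∂μ) - (∫ ω, X₁ ω ∂μ) * (∫ ω, X₂ ω ∂μ) := by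
    rw [hKc, hDc]
    refine integral_mono hDb hKb fun s => ?_
    exact integral_mono (hDa s) (hKa s) fun t => hlower s t
  have hvar₁ : variance (FrechetAux.qf F₁) (volume.restrict (Set.Icc (0:ℝ) 1)) =
      variance X₁ μ := FrechetAux.variance_transfer μ hg₁m hmap₁ hX₁ hm₁
  have hvar₂ : variance (FrechetAux.qf F₂) (volume.restrict (Set.Icc (0:ℝ) 1)) =
      variance X₂ μ := FrechetAux.variance_transfer μ hg₂m hmap₂ hX₂ hm₂
  have hvar₂' : variance (fun u => FrechetAux.qf F₂ (1 - u))
      (volume.restrict (Set.Icc (0:ℝ) 1)) = variance X₂ μ :=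
    FrechetAux.variance_transfer μ hg₂'m hmap₂' hX₂ hm₂
  have hVpos : 0 < Real.sqrt (variance X₁ μ * variance X₂ μ) :=
    Real.sqrt_pos.mpr (mul_pos ((variance_nonneg X₁ μ).lt_of_ne (Ne.symm hv₁))
      ((variance_nonneg X₂ μ).lt_of_ne (Ne.symm hv₂)))
  constructor
  · unfold corr
    rw [hvar₁, hvar₂']
    exact div_le_div_of_nonneg_right hcov_lo hVpos.le |>.trans_eq rfl
  · unfold corr
    rw [hvar₁, hvar₂]
    exact div_le_div_of_nonneg_right hcov_up hVpos.le |>.trans_eq rfl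
end

section
/- Let p ∈ [1/2, 1). Then ∫₀¹ χ_p(u) χ_p(1−u) du = 0, and consequently the minimum correlation between two Geometric(p) random variables equals ρ₋(p,p) = (0 − ((1−p)/p)²) / ((1−p)/p²) = p − 1. -/
open MeasureTheory

lemma floor_log_div_eq_zero {x c : ℝ} (hc : c < 0) (hx : x ≤ 0) (hxc : c < x) :
    ⌊x / c⌋ = 0 := by
  rw [Int.floor_eq_zero_iff]
  constructor
  · exact div_nonneg_of_nonpos hx hc.le
  · rw [div_lt_one_iff]
    exact Or.inr (Or.inr ⟨hc, hxc⟩)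

/-- For `p ∈ [1/2, 1)`, the antithetic product integral
`∫₀¹ χ_p(u) χ_p(1−u) du` vanishes (where `χ_p(u) = ⌊ln(1−u)/ln(1−p)⌋` and
`χ_p(1−u) = ⌊ln u / ln(1−p)⌋`), and hence the minimum correlation between two
Geometric(p) random variables is `ρ₋(p,p) = (0 − ((1−p)/p)²)/((1−p)/p²) = p − 1`. -/
theorem min_correlation_geometric_half_le (p : ℝ) (hp : p ∈ Set.Ico (1 / 2 : ℝ) 1) :
    (∫ u in Set.Ioo (0 : ℝ) 1,
        (⌊Real.log (1 - u) / Real.log (1 - p)⌋ : ℝ) * (⌊Real.log u / Real.log (1 - p)⌋ : ℝ))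
      = 0 ∧
    ((∫ u in Set.Ioo (0 : ℝ) 1,
        (⌊Real.log (1 - u) / Real.log (1 - p)⌋ : ℝ) * (⌊Real.log u / Real.log (1 - p)⌋ : ℝ))
        - ((1 - p) / p) ^ 2) / ((1 - p) / p ^ 2) = p - 1 := by
  obtain ⟨hp1, hp2⟩ := hp
  have hp0 : 0 < p := by linarith
  have h1p : 0 < 1 - p := by linarith
  have hlogp : Real.log (1 - p) < 0 := Real.log_neg h1p (by linarith)
  have hzero : (∫ u in Set.Ioo (0 : ℝ) 1,
      (⌊Real.log (1 - u) / Real.log (1 - p)⌋ : ℝ) * (⌊Real.log u / Real.log (1 - p)⌋ : ℝ)) = 0 := by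
    have hae : ∀ᵐ u : ℝ, u ∈ Set.Ioo (0:ℝ) 1 →
        (⌊Real.log (1 - u) / Real.log (1 - p)⌋ : ℝ) * (⌊Real.log u / Real.log (1 - p)⌋ : ℝ)
          = 0 := by
      have hne : ∀ᵐ u : ℝ, u ≠ (1/2 : ℝ) := by
        rw [MeasureTheory.ae_iff]
        simp
      filter_upwards [hne] with u hu hu01
      obtain ⟨hu0, hu1⟩ := hu01
      rcases lt_or_gt_of_ne hu with h | h
      · -- u < 1/2 ≤ p : first factor is 0
        have : ⌊Real.log (1 - u) / Real.log (1 - p)⌋ = 0 := by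
          apply floor_log_div_eq_zero hlogp
          · exact Real.log_nonpos (by linarith) (by linarith)
          · exact Real.log_lt_log h1p (by linarith)
        simp [this]
      · -- u > 1/2 ≥ 1 - p : second factor is 0
        have : ⌊Real.log u / Real.log (1 - p)⌋ = 0 := by
          apply floor_log_div_eq_zero hlogp
          · exact Real.log_nonpos hu0.le hu1.le
          · exact Real.log_lt_log h1p (by linarith)
        simp [this]
    have := MeasureTheory.setIntegral_congr_ae measurableSet_Ioo hae
    simpa using this
  constructor
  · exact hzero
  · rw [hzero]
    field_simp
    ring
end

section
/- For p = 1/4: ∫₀¹ χ_{1/4}(u) χ_{1/4}(1−u) du = 221/128, and consequently the minimum correlation between two Geometric(1/4) random variables equals ρ₋(1/4,1/4) = (221/128 − 9)/12 = −931/1536. -/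
open MeasureTheory Set

noncomputable def geomF (u : ℝ) : ℝ :=
  (⌊Real.log (1 - u) / Real.log (1 - (1/4 : ℝ))⌋ : ℝ) *
    (⌊Real.log u / Real.log (1 - (1/4 : ℝ))⌋ : ℝ)

lemma floor_log_eq (k : ℕ) {x : ℝ} (h1 : (3/4:ℝ)^(k+1) < x) (h2 : x ≤ (3/4:ℝ)^k) :
    ⌊Real.log x / Real.log (1 - (1/4 : ℝ))⌋ = (k : ℤ) := by
  have hq : (1 - (1/4:ℝ)) = 3/4 := by norm_num
  rw [hq]
  have hlog : Real.log (3/4:ℝ) < 0 := Real.log_neg (by norm_num) (by norm_num)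
  have hx : 0 < x := lt_trans (by positivity) h1
  rw [Int.floor_eq_iff]
  constructor
  · rw [le_div_iff_of_neg hlog]
    have := Real.log_le_log hx h2
    rwa [Real.log_pow] at this
  · push_cast
    rw [div_lt_iff_of_neg hlog]
    have := Real.log_lt_log (by positivity) h1
    rw [Real.log_pow] at this
    push_cast at this
    linarith

lemma piece_eq {a b c : ℝ} (hab : a ≤ b) (h : ∀ u ∈ Ioo a b, geomF u = c) :
    ∫ u in Ioo a b, geomF u = c * (b - a) := by
  rw [setIntegral_congr_fun measurableSet_Ioo h, setIntegral_const,
    Real.volume_real_Ioo, max_eq_left (by linarith : (0:ℝ) ≤ b - a), smul_eq_mul]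
  ring

lemma piece_int {a b c : ℝ} (h : ∀ u ∈ Ioo a b, geomF u = c) :
    IntegrableOn geomF (Ioo a b) := by
  exact (integrableOn_const measure_Ioo_lt_top.ne).congr_fun
    (fun u hu => (h u hu).symm) measurableSet_Ioo

lemma ioo_ae (a b c : ℝ) (hab : a ≤ b) (hbc : b < c) :
    Ioo a c =ᶠ[ae volume] ((Ioo a b ∪ Ioo b c : Set ℝ)) := by
  rw [← Ioc_union_Ioo_eq_Ioo hab hbc]
  have h1 : Ioo a b =ᶠ[ae volume] Ioc a b := Ioo_ae_eq_Ioc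
  have h2 : Ioo b c =ᶠ[ae volume] Ioo b c := Filter.EventuallyEq.refl _ _
  exact (h1.union h2).symm

lemma ioo_disj (a b c : ℝ) : Disjoint (Ioo a b) (Ioo b c) := by
  rw [Set.disjoint_left]
  rintro x ⟨_, h1⟩ ⟨h2, _⟩
  exact absurd h1 (not_lt.2 h2.le)

lemma glue_int {a b c : ℝ} (hab : a ≤ b) (hbc : b < c)
    (h1 : IntegrableOn geomF (Ioo a b)) (h2 : IntegrableOn geomF (Ioo b c)) :
    IntegrableOn geomF (Ioo a c) := by
  have := h1.union h2
  exact this.congr_set_ae (ioo_ae a b c hab hbc)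

lemma glue {a b c : ℝ} (hab : a ≤ b) (hbc : b < c)
    (h1 : IntegrableOn geomF (Ioo a b)) (h2 : IntegrableOn geomF (Ioo b c)) :
    ∫ u in Ioo a c, geomF u = (∫ u in Ioo a b, geomF u) + ∫ u in Ioo b c, geomF u := by
  rw [setIntegral_congr_set (ioo_ae a b c hab hbc),
    setIntegral_union (ioo_disj a b c) measurableSet_Ioo h1 h2]

/-- For `p = 1/4`: the antithetic product integral
`∫₀¹ χ_{1/4}(u) χ_{1/4}(1−u) du` equals `221/128`, and consequently the minimum
correlation between two Geometric(1/4) random variables equals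
`ρ₋(1/4,1/4) = (221/128 − 9)/12 = −931/1536`. -/
theorem min_correlation_geometric_quarter :
    (∫ u in Set.Ioo (0 : ℝ) 1,
        (⌊Real.log (1 - u) / Real.log (1 - (1/4 : ℝ))⌋ : ℝ) *
          (⌊Real.log u / Real.log (1 - (1/4 : ℝ))⌋ : ℝ)) = 221 / 128 ∧
    ((∫ u in Set.Ioo (0 : ℝ) 1,
        (⌊Real.log (1 - u) / Real.log (1 - (1/4 : ℝ))⌋ : ℝ) *
          (⌊Real.log u / Real.log (1 - (1/4 : ℝ))⌋ : ℝ)) - 9) / 12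
      = -931 / 1536 := by
  have key : (∫ u in Set.Ioo (0 : ℝ) 1, geomF u) = 221 / 128 := by
    -- piecewise values
    have p1 : ∀ u ∈ Ioo (0:ℝ) (1/4), geomF u = 0 := by
      intro u ⟨h1, h2⟩
      unfold geomF
      rw [floor_log_eq 0 (x := 1 - u) (by norm_num; linarith) (by norm_num; linarith)]
      norm_num
    have p2 : ∀ u ∈ Ioo (1/4:ℝ) (81/256), geomF u = 4 := by
      intro u ⟨h1, h2⟩
      unfold geomF
      rw [floor_log_eq 1 (x := 1 - u) (by norm_num; linarith) (by norm_num; linarith),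
          floor_log_eq 4 (x := u) (by norm_num; linarith) (by norm_num; linarith)]
      norm_num
    have p3 : ∀ u ∈ Ioo (81/256:ℝ) (27/64), geomF u = 3 := by
      intro u ⟨h1, h2⟩
      unfold geomF
      rw [floor_log_eq 1 (x := 1 - u) (by norm_num; linarith) (by norm_num; linarith),
          floor_log_eq 3 (x := u) (by norm_num; linarith) (by norm_num; linarith)]
      norm_num
    have p4 : ∀ u ∈ Ioo (27/64:ℝ) (7/16), geomF u = 2 := by
      intro u ⟨h1, h2⟩
      unfold geomF
      rw [floor_log_eq 1 (x := 1 - u) (by norm_num; linarith) (by norm_num; linarith),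
          floor_log_eq 2 (x := u) (by norm_num; linarith) (by norm_num; linarith)]
      norm_num
    have p5 : ∀ u ∈ Ioo (7/16:ℝ) (9/16), geomF u = 4 := by
      intro u ⟨h1, h2⟩
      unfold geomF
      rw [floor_log_eq 2 (x := 1 - u) (by norm_num; linarith) (by norm_num; linarith),
          floor_log_eq 2 (x := u) (by norm_num; linarith) (by norm_num; linarith)]
      norm_num
    have p6 : ∀ u ∈ Ioo (9/16:ℝ) (37/64), geomF u = 2 := by
      intro u ⟨h1, h2⟩
      unfold geomF
      rw [floor_log_eq 2 (x := 1 - u) (by norm_num; linarith) (by norm_num; linarith),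
          floor_log_eq 1 (x := u) (by norm_num; linarith) (by norm_num; linarith)]
      norm_num
    have p7 : ∀ u ∈ Ioo (37/64:ℝ) (175/256), geomF u = 3 := by
      intro u ⟨h1, h2⟩
      unfold geomF
      rw [floor_log_eq 3 (x := 1 - u) (by norm_num; linarith) (by norm_num; linarith),
          floor_log_eq 1 (x := u) (by norm_num; linarith) (by norm_num; linarith)]
      norm_num
    have p8 : ∀ u ∈ Ioo (175/256:ℝ) (3/4), geomF u = 4 := by
      intro u ⟨h1, h2⟩
      unfold geomF
      rw [floor_log_eq 4 (x := 1 - u) (by norm_num; linarith) (by norm_num; linarith),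
          floor_log_eq 1 (x := u) (by norm_num; linarith) (by norm_num; linarith)]
      norm_num
    have p9 : ∀ u ∈ Ioo (3/4:ℝ) 1, geomF u = 0 := by
      intro u ⟨h1, h2⟩
      unfold geomF
      rw [floor_log_eq 0 (x := u) (by norm_num; linarith) (by norm_num; linarith)]
      norm_num
    -- integrability on pieces
    have i1 := piece_int p1
    have i2 := piece_int p2
    have i3 := piece_int p3
    have i4 := piece_int p4
    have i5 := piece_int p5
    have i6 := piece_int p6
    have i7 := piece_int p7
    have i8 := piece_int p8
    have i9 := piece_int p9
    -- glue left to right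
    have j2 := glue_int (by norm_num) (by norm_num) i1 i2
    have j3 := glue_int (by norm_num) (by norm_num) j2 i3
    have j4 := glue_int (by norm_num) (by norm_num) j3 i4
    have j5 := glue_int (by norm_num) (by norm_num) j4 i5
    have j6 := glue_int (by norm_num) (by norm_num) j5 i6
    have j7 := glue_int (by norm_num) (by norm_num) j6 i7
    have j8 := glue_int (by norm_num) (by norm_num) j7 i8
    rw [glue (a := 0) (b := 3/4) (c := 1) (by norm_num) (by norm_num) j8 i9,
        glue (a := 0) (b := 175/256) (by norm_num) (by norm_num) j7 i8,
        glue (a := 0) (b := 37/64) (by norm_num) (by norm_num) j6 i7,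
        glue (a := 0) (b := 9/16) (by norm_num) (by norm_num) j5 i6,
        glue (a := 0) (b := 7/16) (by norm_num) (by norm_num) j4 i5,
        glue (a := 0) (b := 27/64) (by norm_num) (by norm_num) j3 i4,
        glue (a := 0) (b := 81/256) (by norm_num) (by norm_num) j2 i3,
        glue (a := 0) (b := 1/4) (by norm_num) (by norm_num) i1 i2,
        piece_eq (by norm_num) p1, piece_eq (by norm_num) p2, piece_eq (by norm_num) p3,
        piece_eq (by norm_num) p4, piece_eq (by norm_num) p5, piece_eq (by norm_num) p6,
        piece_eq (by norm_num) p7, piece_eq (by norm_num) p8, piece_eq (by norm_num) p9]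
    norm_num
  refine ⟨key, ?_⟩
  rw [show (∫ u in Set.Ioo (0 : ℝ) 1,
        (⌊Real.log (1 - u) / Real.log (1 - (1/4 : ℝ))⌋ : ℝ) *
          (⌊Real.log u / Real.log (1 - (1/4 : ℝ))⌋ : ℝ)) = 221/128 from key]
  norm_num
end

section
/- The integral ∫₀¹ ln(1−u) ln(u) du converges and equals 2 − π²/6. -/
open MeasureTheory Real Set Filter intervalIntegral

-- On (0,1), -log u ≤ 2 * u ^ (-(1/2) : ℝ)
lemma neg_log_le_two_rpow {u : ℝ} (hu : 0 < u) : -Real.log u ≤ 2 * u ^ (-(1/2) : ℝ) := by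
  have h1 : Real.log (u ^ (-(1/2) : ℝ)) ≤ u ^ (-(1/2) : ℝ) - 1 :=
    Real.log_le_sub_one_of_pos (Real.rpow_pos_of_pos hu _)
  rw [Real.log_rpow hu] at h1
  nlinarith [Real.rpow_pos_of_pos hu (-(1/2) : ℝ)]

-- integrability of log(1-u) * log u on (0,1)
lemma integrableOn_f : IntegrableOn (fun u : ℝ => Real.log (1 - u) * Real.log u) (Ioo (0:ℝ) 1) := by
  have hbound : IntegrableOn
      (fun u : ℝ => 2 * u ^ (-(1/2) : ℝ) + 2 * (1 - u) ^ (-(1/2) : ℝ)) (Ioo (0:ℝ) 1) := by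
    have h1 : IntervalIntegrable (fun u : ℝ => u ^ (-(1/2) : ℝ)) volume 0 1 :=
      intervalIntegral.intervalIntegrable_rpow' (by norm_num)
    have h2 : IntervalIntegrable (fun u : ℝ => (1 - u) ^ (-(1/2) : ℝ)) volume 0 1 := by
      have := h1.comp_sub_left 1
      simpa using this.symm
    have := ((h1.const_mul 2).add (h2.const_mul 2))
    rw [intervalIntegrable_iff_integrableOn_Ioc_of_le (by norm_num : (0:ℝ) ≤ 1)] at this
    exact this.mono_set Ioo_subset_Ioc_self
  have hmeas : AEStronglyMeasurable (fun u : ℝ => Real.log (1 - u) * Real.log u)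
      (volume.restrict (Ioo (0:ℝ) 1)) := by
    apply ContinuousOn.aestronglyMeasurable _ measurableSet_Ioo
    apply ContinuousOn.mul
    · exact (Real.continuousOn_log.comp (continuousOn_const.sub continuousOn_id)
        (fun x hx => by simp [sub_ne_zero]; exact fun h => absurd h.symm (ne_of_lt hx.2)))
    · exact Real.continuousOn_log.mono (fun x hx => ne_of_gt hx.1)
  refine hbound.mono' hmeas ?_
  filter_upwards [ae_restrict_mem measurableSet_Ioo] with u hu
  obtain ⟨hu0, hu1⟩ := hu
  have hu1' : 0 < 1 - u := by linarith
  have hl1 : 0 ≤ -Real.log u := by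
    simpa using neg_nonneg.2 (Real.log_nonpos hu0.le hu1.le)
  have hl2 : 0 ≤ -Real.log (1 - u) := by
    simpa using neg_nonneg.2 (Real.log_nonpos hu1'.le (by linarith))
  have key : Real.log (1 - u) * Real.log u ≤ (-Real.log u) + (-Real.log (1 - u)) := by
    have heq : Real.log (1 - u) * Real.log u = (-Real.log (1 - u)) * (-Real.log u) := by ring
    rw [heq]
    rcases le_total u (1/2) with h | h
    · have : -Real.log (1 - u) ≤ 1 := by
        have := Real.log_le_sub_one_of_pos (show (0:ℝ) < (1-u)⁻¹ by positivity)
        rw [Real.log_inv] at this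
        have hi : (1 - u)⁻¹ ≤ 2 := by
          rw [inv_le_comm₀ (by linarith) (by norm_num)]; linarith
        linarith
      nlinarith
    · have : -Real.log u ≤ 1 := by
        have := Real.log_le_sub_one_of_pos (show (0:ℝ) < u⁻¹ by positivity)
        rw [Real.log_inv] at this
        have hi : u⁻¹ ≤ 2 := by rw [inv_le_comm₀ hu0 (by norm_num)]; linarith
        linarith
      nlinarith
  have hnn : 0 ≤ Real.log (1 - u) * Real.log u := by nlinarith
  rw [Real.norm_eq_abs, abs_of_nonneg hnn]
  calc Real.log (1 - u) * Real.log u ≤ (-Real.log u) + (-Real.log (1 - u)) := key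
    _ ≤ 2 * u ^ (-(1/2) : ℝ) + 2 * (1 - u) ^ (-(1/2) : ℝ) := by
        have := neg_log_le_two_rpow hu0
        have := neg_log_le_two_rpow hu1'
        linarith

lemma auxIntOn (m : ℕ) : IntegrableOn (fun u : ℝ => u ^ (m+1) * Real.log u) (Ioc (0:ℝ) 1) := by
  apply Measure.integrableOn_of_bounded (M := 1) (by simp)
  · exact ((measurable_id.pow_const _).mul Real.measurable_log).aestronglyMeasurable
  · filter_upwards [ae_restrict_mem measurableSet_Ioc] with u hu
    obtain ⟨hu0, hu1⟩ := hu
    have hlog : -Real.log u ≤ u⁻¹ := by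
      have := Real.log_le_sub_one_of_pos (show (0:ℝ) < u⁻¹ by positivity)
      rw [Real.log_inv] at this; linarith [inv_pos.2 hu0, this]
    have hpow : (0:ℝ) < u ^ (m+1) := pow_pos hu0 _
    rw [Real.norm_eq_abs, abs_mul, abs_of_pos hpow, abs_of_nonpos (Real.log_nonpos hu0.le hu1)]
    calc u ^ (m+1) * -Real.log u ≤ u ^ (m+1) * u⁻¹ := by
          exact mul_le_mul_of_nonneg_left hlog hpow.le
      _ = u ^ m := by field_simp [pow_succ]; ring
      _ ≤ 1 := pow_le_one₀ hu0.le hu1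

lemma aux_integral (m : ℕ) :
    ∫ u in (0:ℝ)..1, u ^ (m+1) * Real.log u = -(1/((m:ℝ)+2)^2) := by
  have hint : IntervalIntegrable (fun u : ℝ => u ^ (m+1) * Real.log u) volume 0 1 := by
    rw [intervalIntegrable_iff_integrableOn_Ioc_of_le (by norm_num)]
    exact auxIntOn m
  set F : ℝ → ℝ := fun u => (u ^ (m+2) * (((m:ℝ)+2) * Real.log u - 1)) / ((m:ℝ)+2)^2 with hF
  have hm2 : ((m:ℝ)+2) ≠ 0 := by positivity
  have hderiv : ∀ x ∈ Ioo (0:ℝ) 1, HasDerivAt F (x ^ (m+1) * Real.log x) x := by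
    intro x hx
    have hx0 : x ≠ 0 := ne_of_gt hx.1
    have h1 : HasDerivAt (fun u : ℝ => u ^ (m+2)) (((m:ℝ)+2) * x ^ (m+1)) x := by
      have := hasDerivAt_pow (m+2) x
      convert this using 1
      any_goals rfl
      push_cast; ring
    have h2 : HasDerivAt (fun u : ℝ => ((m:ℝ)+2) * Real.log u - 1) (((m:ℝ)+2) * x⁻¹) x :=
      ((Real.hasDerivAt_log hx0).const_mul ((m:ℝ)+2)).sub_const 1
    have := (h1.mul h2).div_const (((m:ℝ)+2)^2)
    convert this using 1
    any_goals rfl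
    field_simp
    ring
  have h0 : Tendsto F (nhdsWithin 0 (Ioi (0:ℝ))) (nhds 0) := by
    have hlog : Tendsto (fun x : ℝ => Real.log x * x ^ (m+2)) (nhdsWithin 0 (Ioi (0:ℝ))) (nhds 0) := by
      have := tendsto_log_mul_rpow_nhdsGT_zero (show (0:ℝ) < (m:ℝ)+2 by positivity)
      refine this.congr' ?_
      filter_upwards [self_mem_nhdsWithin] with x hx
      rw [show ((m:ℝ)+2) = ((m+2 : ℕ) : ℝ) by push_cast; ring, Real.rpow_natCast]
    have hpow : Tendsto (fun x : ℝ => x ^ (m+2)) (nhdsWithin 0 (Ioi (0:ℝ))) (nhds 0) := by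
      have : Tendsto (fun x : ℝ => x ^ (m+2)) (nhds 0) (nhds 0) := by
        simpa using (continuous_pow (m+2)).tendsto (0:ℝ)
      exact this.mono_left nhdsWithin_le_nhds
    have : Tendsto (fun x : ℝ => (((m:ℝ)+2) * (Real.log x * x ^ (m+2)) - x ^ (m+2)) / ((m:ℝ)+2)^2)
        (nhdsWithin 0 (Ioi (0:ℝ))) (nhds ((((m:ℝ)+2) * 0 - 0) / ((m:ℝ)+2)^2)) :=
      (((hlog.const_mul _).sub hpow).div_const _)
    simp only [mul_zero, sub_zero, zero_div] at this
    refine this.congr (fun x => ?_)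
    simp only [hF]; ring
  have h1 : Tendsto F (nhdsWithin 1 (Iio (1:ℝ))) (nhds (-(1/((m:ℝ)+2)^2))) := by
    have hc : ContinuousAt F 1 := by
      apply ContinuousAt.div_const
      exact (continuousAt_pow _ _).mul (((Real.continuousAt_log one_ne_zero).const_mul _).sub continuousAt_const)
    have : F 1 = -(1/((m:ℝ)+2)^2) := by rw [hF]; norm_num; ring
    rw [← this]
    exact hc.continuousWithinAt.tendsto
  have := intervalIntegral.integral_eq_sub_of_hasDerivAt_of_tendsto (by norm_num) hderiv hint h0 h1
  rw [this]; ring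

lemma hasSum_c : HasSum (fun n : ℕ => 1/(((n:ℝ)+1)*((n:ℝ)+2)^2)) (2 - Real.pi^2/6) := by
  have h2 : HasSum (fun n : ℕ => (1:ℝ)/((n:ℝ)+2)^2) (Real.pi^2/6 - 1) := by
    have key : HasSum (fun n : ℕ => (1:ℝ)/(((n+2:ℕ)):ℝ)^2) (Real.pi^2/6 - 1) := by
      refine (hasSum_nat_add_iff (f := fun n : ℕ => (1:ℝ)/(n:ℝ)^2) 2).mpr ?_
      convert hasSum_zeta_two using 1
      any_goals rfl
      norm_num [Finset.sum_range_succ]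
    refine key.congr_fun fun n => by push_cast; ring_nf
  have htel : HasSum (fun n : ℕ => (1:ℝ)/((n:ℝ)+1) - 1/((n:ℝ)+2)) 1 := by
    rw [hasSum_iff_tendsto_nat_of_nonneg]
    · have hsum : ∀ n : ℕ, ∑ i ∈ Finset.range n, ((1:ℝ)/((i:ℝ)+1) - 1/((i:ℝ)+2)) = 1 - 1/((n:ℝ)+1) := by
        intro n
        have hcg : ∀ i ∈ Finset.range n, ((1:ℝ)/((i:ℝ)+1) - 1/((i:ℝ)+2))
            = (fun i : ℕ => (1:ℝ)/((i:ℝ)+1)) i - (fun i : ℕ => (1:ℝ)/((i:ℝ)+1)) (i+1) := by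
          intro i _
          push_cast
          ring
        rw [Finset.sum_congr rfl hcg, Finset.sum_range_sub']
        norm_num
      simp only [hsum]
      have h0 : Tendsto (fun n : ℕ => 1/((n:ℝ)+1)) atTop (nhds 0) := tendsto_one_div_add_atTop_nhds_zero_nat
      simpa using ((tendsto_const_nhds (x := (1:ℝ))).sub h0)
    · intro i
      have h1 : (0:ℝ) < (i:ℝ)+1 := by positivity
      have h2 : (0:ℝ) < (i:ℝ)+2 := by positivity
      rw [sub_nonneg, div_le_div_iff₀ h2 h1]
      linarith
  have heq : (fun n : ℕ => 1/(((n:ℝ)+1)*((n:ℝ)+2)^2))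
      = fun n : ℕ => ((1:ℝ)/((n:ℝ)+1) - 1/((n:ℝ)+2)) - 1/((n:ℝ)+2)^2 := by
    funext n
    have h1 : ((n:ℝ)+1) ≠ 0 := by positivity
    have h2 : ((n:ℝ)+2) ≠ 0 := by positivity
    field_simp
    ring
  rw [heq, show (2:ℝ) - Real.pi^2/6 = 1 - (Real.pi^2/6 - 1) by ring]
  exact htel.sub h2

open MeasureTheory

/-- The integral `∫₀¹ ln(1−u) ln u du` converges and equals `2 − π²/6`. -/
theorem integral_log_one_sub_mul_log :
    IntegrableOn (fun u : ℝ => Real.log (1 - u) * Real.log u) (Set.Ioo (0 : ℝ) 1) ∧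
      ∫ u in Set.Ioo (0 : ℝ) 1, Real.log (1 - u) * Real.log u = 2 - Real.pi ^ 2 / 6 := by
  refine ⟨integrableOn_f, ?_⟩
  set g : ℕ → ℝ → ℝ := fun n u => (u ^ (n+1) / ((n:ℝ)+1)) * (-Real.log u) with hg
  have hgeq : ∀ n : ℕ, (fun u : ℝ => g n u)
      = fun u : ℝ => (-(1/((n:ℝ)+1))) * (u ^ (n+1) * Real.log u) := by
    intro n; funext u; rw [hg]; ring
  have h_int : ∀ n : ℕ, Integrable (g n) (volume.restrict (Ioo (0:ℝ) 1)) := by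
    intro n
    have h1 : IntegrableOn (fun u : ℝ => u ^ (n+1) * Real.log u) (Ioo (0:ℝ) 1) :=
      (auxIntOn n).mono_set Ioo_subset_Ioc_self
    have := h1.const_mul (-(1/((n:ℝ)+1)))
    exact this.congr (Filter.Eventually.of_forall fun u => by rw [hg]; ring)
  have h_val : ∀ n : ℕ, ∫ u in Ioo (0:ℝ) 1, g n u = 1/(((n:ℝ)+1)*((n:ℝ)+2)^2) := by
    intro n
    rw [hgeq n]
    rw [MeasureTheory.integral_const_mul]
    have : ∫ u in Ioo (0:ℝ) 1, u ^ (n+1) * Real.log u = -(1/((n:ℝ)+2)^2) := by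
      rw [← MeasureTheory.integral_Ioc_eq_integral_Ioo,
        ← intervalIntegral.integral_of_le (by norm_num : (0:ℝ) ≤ 1)]
      exact aux_integral n
    rw [this]
    have h1 : ((n:ℝ)+1) ≠ 0 := by positivity
    have h2 : ((n:ℝ)+2) ≠ 0 := by positivity
    field_simp
  have h_sum : Summable (fun n : ℕ => ∫ u in Ioo (0:ℝ) 1, ‖g n u‖) := by
    have hnorm : ∀ n : ℕ, ∫ u in Ioo (0:ℝ) 1, ‖g n u‖ = 1/(((n:ℝ)+1)*((n:ℝ)+2)^2) := by
      intro n
      rw [← h_val n]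
      apply setIntegral_congr_fun measurableSet_Ioo
      intro u hu
      have h1 : 0 ≤ g n u := by
        rw [hg]
        apply mul_nonneg
        · exact div_nonneg (pow_nonneg hu.1.le _) (by positivity)
        · simpa using neg_nonneg.2 (Real.log_nonpos hu.1.le hu.2.le)
      show ‖g n u‖ = g n u
      rw [Real.norm_eq_abs, abs_of_nonneg h1]
    simp only [hnorm]
    exact hasSum_c.summable
  have key := MeasureTheory.integral_tsum_of_summable_integral_norm h_int h_sum
  have hpt : ∀ u ∈ Ioo (0:ℝ) 1, (∑' n, g n u) = Real.log (1-u) * Real.log u := by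
    intro u hu
    have habs : |u| < 1 := abs_lt.mpr ⟨by linarith [hu.1], hu.2⟩
    have h := (hasSum_pow_div_log_of_abs_lt_one habs).mul_right (-Real.log u)
    have h' : HasSum (fun n : ℕ => g n u) (Real.log (1-u) * Real.log u) := by
      refine HasSum.congr_fun ?_ (fun n => by rw [hg]; try norm_cast)
      convert h using 1
      any_goals rfl
      ring
    exact h'.tsum_eq
  have hswap : ∫ u in Ioo (0:ℝ) 1, Real.log (1-u) * Real.log u
      = ∫ u in Ioo (0:ℝ) 1, (∑' n, g n u) :=
    setIntegral_congr_fun measurableSet_Ioo (fun u hu => (hpt u hu).symm)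
  rw [hswap, ← key]
  calc ∑' n, ∫ u in Ioo (0:ℝ) 1, g n u
      = ∑' n : ℕ, 1/(((n:ℝ)+1)*((n:ℝ)+2)^2) := tsum_congr h_val
    _ = 2 - Real.pi ^ 2 / 6 := hasSum_c.tsum_eq
end

section
/- Let p₁, p₂ ∈ (0,1). Then ∫₀¹ ⌊ln(1−u)/ln(1−p₁)⌋ · ⌊ln(u)/ln(1−p₂)⌋ du ≤ (2 − π²/6) / (ln(1−p₁) · ln(1−p₂)). -/
open MeasureTheory

/-- `∫ x in 0..1, x^n * (x * log x) = -1/(n+2)^2`. -/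
lemma aux_integral_pow_mul_log (n : ℕ) :
    ∫ x in (0:ℝ)..1, x ^ n * (x * Real.log x) = -(1 / ((n : ℝ) + 2) ^ 2) := by
  have h2 : (0:ℝ) < (n : ℝ) + 2 := by positivity
  set F : ℝ → ℝ := fun x => x ^ (n + 1) * (x * Real.log x) / ((n : ℝ) + 2)
      - x ^ (n + 2) / ((n : ℝ) + 2) ^ 2 with hF
  have hFcont : Continuous F := by
    apply Continuous.sub
    · exact ((continuous_pow (n + 1)).mul Real.continuous_mul_log).div_const _
    · exact (continuous_pow (n + 2)).div_const _
  have hderiv : ∀ x ∈ Set.Ioo (0:ℝ) 1, HasDerivAt F (x ^ n * (x * Real.log x)) x := by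
    intro x hx
    have hx0 : x ≠ 0 := ne_of_gt hx.1
    have hFeq : F = fun x => x ^ (n + 2) * Real.log x / ((n : ℝ) + 2)
        - x ^ (n + 2) / ((n : ℝ) + 2) ^ 2 := by
      funext y; simp only [hF]; ring
    rw [hFeq]
    have h1 : HasDerivAt (fun x : ℝ => x ^ (n + 2) * Real.log x)
        ((↑(n + 2) * x ^ (n + 2 - 1)) * Real.log x + x ^ (n + 2) * x⁻¹) x :=
      (hasDerivAt_pow (n + 2) x).mul (Real.hasDerivAt_log hx0)
    have h3 : HasDerivAt (fun x : ℝ => x ^ (n + 2)) (↑(n + 2) * x ^ (n + 2 - 1)) x :=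
      hasDerivAt_pow (n + 2) x
    have := (h1.div_const ((n : ℝ) + 2)).sub (h3.div_const (((n : ℝ) + 2) ^ 2))
    refine this.congr_deriv ?_
    push_cast
    have hne : ((n : ℝ) + 2) ≠ 0 := ne_of_gt h2
    field_simp
    ring
  have hint : IntervalIntegrable (fun x : ℝ => x ^ n * (x * Real.log x)) volume 0 1 :=
    ((continuous_pow n).mul Real.continuous_mul_log).intervalIntegrable 0 1
  have hF0 : F 0 = 0 := by simp [hF]
  have hF1 : F 1 = -(1 / ((n : ℝ) + 2) ^ 2) := by simp [hF]
  have h0 : Filter.Tendsto F (nhdsWithin 0 (Set.Ioi 0)) (nhds (F 0)) :=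
    (hFcont.tendsto 0).mono_left nhdsWithin_le_nhds
  rw [hF0] at h0
  have h1' : Filter.Tendsto F (nhdsWithin 1 (Set.Iio 1)) (nhds (F 1)) :=
    (hFcont.tendsto 1).mono_left nhdsWithin_le_nhds
  rw [hF1] at h1'
  have := intervalIntegral.integral_eq_sub_of_hasDerivAt_of_tendsto (by norm_num : (0:ℝ) < 1)
    hderiv hint h0 h1'
  rw [this]; ring

/-- Telescoping sum. -/
lemma aux_hasSum_telescope :
    HasSum (fun n : ℕ => 1 / (((n : ℝ) + 1) * ((n : ℝ) + 2))) 1 := by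
  have hnn : ∀ n : ℕ, 0 ≤ 1 / (((n : ℝ) + 1) * ((n : ℝ) + 2)) := by
    intro n; positivity
  rw [hasSum_iff_tendsto_nat_of_nonneg hnn]
  have hsum : ∀ N : ℕ, ∑ n ∈ Finset.range N, 1 / (((n : ℝ) + 1) * ((n : ℝ) + 2))
      = 1 - 1 / ((N : ℝ) + 1) := by
    intro N
    have : ∀ n : ℕ, 1 / (((n : ℝ) + 1) * ((n : ℝ) + 2))
        = (fun k : ℕ => 1 / ((k : ℝ) + 1)) n - (fun k : ℕ => 1 / ((k : ℝ) + 1)) (n + 1) := by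
      intro n
      have h1 : ((n : ℝ) + 1) ≠ 0 := by positivity
      have h2 : ((n : ℝ) + 2) ≠ 0 := by positivity
      have h2' : ((n : ℝ) + 1 + 1) ≠ 0 := by positivity
      push_cast
      rw [div_sub_div _ _ h1 h2']
      congr 1 <;> ring
    rw [Finset.sum_congr rfl fun n _ => this n, Finset.sum_range_sub']
    norm_num
  simp only [hsum]
  have : Filter.Tendsto (fun N : ℕ => 1 / ((N : ℝ) + 1)) Filter.atTop (nhds 0) :=
    tendsto_one_div_add_atTop_nhds_zero_nat
  have := Filter.Tendsto.sub (tendsto_const_nhds (x := (1:ℝ))) this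
  simpa using this

/-- Shifted Basel sum. -/
lemma aux_hasSum_zeta_shift :
    HasSum (fun n : ℕ => 1 / ((n : ℝ) + 2) ^ 2) (Real.pi ^ 2 / 6 - 1) := by
  have h3 : HasSum (fun n : ℕ => (1 : ℝ) / ((↑(n + 2) : ℝ)) ^ 2) (Real.pi ^ 2 / 6 - 1) := by
    apply (hasSum_nat_add_iff (f := fun n : ℕ => (1 : ℝ) / (n : ℝ) ^ 2) 2).mpr
    have hsum : ∑ i ∈ Finset.range 2, (1 : ℝ) / (i : ℝ) ^ 2 = 1 := by
      simp [Finset.sum_range_succ]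
    rw [hsum]
    rw [sub_add_cancel]
    exact hasSum_zeta_two
  convert h3 using 2 with n
  push_cast
  ring

/-- The key series. -/
lemma aux_hasSum_main :
    HasSum (fun n : ℕ => 1 / (((n : ℝ) + 1) * ((n : ℝ) + 2) ^ 2)) (2 - Real.pi ^ 2 / 6) := by
  have h := aux_hasSum_telescope.sub aux_hasSum_zeta_shift
  have hval : (1 : ℝ) - (Real.pi ^ 2 / 6 - 1) = 2 - Real.pi ^ 2 / 6 := by ring
  rw [hval] at h
  refine h.congr_fun fun n => ?_
  have h1 : ((n : ℝ) + 1) ≠ 0 := by positivity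
  have h2 : ((n : ℝ) + 2) ≠ 0 := by positivity
  field_simp
  ring

/-- Integrability of `-log` on `(0,1)`. -/
lemma aux_integrableOn_neg_log :
    IntegrableOn (fun x : ℝ => -Real.log x) (Set.Ioo 0 1) volume := by
  have key : IntegrableOn (fun x : ℝ => -Real.log x) (Set.Ioc 0 1) volume := by
    apply intervalIntegral.integrableOn_deriv_of_nonneg
      (g := fun x : ℝ => x - x * Real.log x)
    · exact (continuous_id.sub Real.continuous_mul_log).continuousOn
    · intro x hx
      have hx0 : x ≠ 0 := ne_of_gt hx.1
      have h1 : HasDerivAt (fun x : ℝ => x * Real.log x) (1 * Real.log x + x * x⁻¹) x :=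
        (hasDerivAt_id x).mul (Real.hasDerivAt_log hx0)
      have := (hasDerivAt_id x).sub h1
      refine this.congr_deriv ?_
      field_simp
      ring
    · intro x hx
      simp only [neg_nonneg]
      exact Real.log_nonpos hx.1.le hx.2.le
  exact key.mono_set Set.Ioo_subset_Ioc_self

/-- Integrability of `-log (1 - ·)` on `(0,1)`. -/
lemma aux_integrableOn_neg_log_one_sub :
    IntegrableOn (fun x : ℝ => -Real.log (1 - x)) (Set.Ioo 0 1) volume := by
  have key : IntegrableOn (fun x : ℝ => -Real.log (1 - x)) (Set.Ioc 0 1) volume := by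
    apply intervalIntegral.integrableOn_deriv_of_nonneg
      (g := fun x : ℝ => (1 - x) * Real.log (1 - x) + x)
    · exact ((Real.continuous_mul_log.comp (continuous_const.sub continuous_id)).add
        continuous_id).continuousOn
    · intro x hx
      have hx1 : (1 : ℝ) - x ≠ 0 := by
        have := hx.2; intro h; rw [sub_eq_zero] at h; exact absurd h.symm (ne_of_lt this)
      have hlog : HasDerivAt (fun x : ℝ => Real.log (1 - x)) ((1 - x)⁻¹ * (0 - 1)) x :=
        (Real.hasDerivAt_log hx1).comp x ((hasDerivAt_const x 1).sub (hasDerivAt_id x))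
      have hmul : HasDerivAt (fun x : ℝ => (1 - x) * Real.log (1 - x))
          ((0 - 1) * Real.log (1 - x) + (1 - x) * ((1 - x)⁻¹ * (0 - 1))) x :=
        ((hasDerivAt_const x 1).sub (hasDerivAt_id x)).mul hlog
      have := hmul.add (hasDerivAt_id x)
      refine this.congr_deriv ?_
      field_simp
      ring
    · intro x hx
      simp only [neg_nonneg]
      exact Real.log_nonpos (by linarith [hx.2]) (by linarith [hx.1])
  exact key.mono_set Set.Ioo_subset_Ioc_self

/-- Integrability of the product. -/
lemma aux_integrableOn_log_mul_log :
    IntegrableOn (fun x : ℝ => Real.log x * Real.log (1 - x)) (Set.Ioo 0 1) volume := by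
  have hC : IntegrableOn
      (fun x : ℝ => Real.log 2 * (-Real.log x + -Real.log (1 - x))) (Set.Ioo 0 1) volume :=
    (aux_integrableOn_neg_log.add aux_integrableOn_neg_log_one_sub).const_mul _
  apply Integrable.mono' hC
  · exact (Real.measurable_log.mul
      (Real.measurable_log.comp (measurable_const.sub measurable_id))).aestronglyMeasurable
  · rw [ae_restrict_iff' measurableSet_Ioo]
    apply Filter.Eventually.of_forall
    intro x hx
    have hlx : 0 ≤ -Real.log x := by
      simp only [neg_nonneg]; exact Real.log_nonpos hx.1.le hx.2.le
    have hl1x : 0 ≤ -Real.log (1 - x) := by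
      simp only [neg_nonneg]; exact Real.log_nonpos (by linarith [hx.2]) (by linarith [hx.1])
    have hlog2 : 0 ≤ Real.log 2 := Real.log_nonneg (by norm_num)
    have heq : Real.log x * Real.log (1 - x) = (-Real.log x) * (-Real.log (1 - x)) := by ring
    rw [Real.norm_eq_abs, heq, abs_of_nonneg (mul_nonneg hlx hl1x)]
    rcases le_total x (1/2 : ℝ) with hhalf | hhalf
    · have hb : -Real.log (1 - x) ≤ Real.log 2 := by
        have h1 : Real.log (1/2 : ℝ) ≤ Real.log (1 - x) :=
          Real.log_le_log (by norm_num) (by linarith)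
        have h2 : Real.log (1/2 : ℝ) = -Real.log 2 := by
          rw [one_div, Real.log_inv]
        linarith
      nlinarith [mul_nonneg hlog2 hlx, mul_nonneg hlog2 hl1x,
        mul_le_mul_of_nonneg_left hb hlx]
    · have hb : -Real.log x ≤ Real.log 2 := by
        have h1 : Real.log (1/2 : ℝ) ≤ Real.log x :=
          Real.log_le_log (by norm_num) (by linarith)
        have h2 : Real.log (1/2 : ℝ) = -Real.log 2 := by
          rw [one_div, Real.log_inv]
        linarith
      nlinarith [mul_nonneg hlog2 hlx, mul_nonneg hlog2 hl1x,
        mul_le_mul_of_nonneg_left hb hl1x]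

/-- The value of the integral. -/
lemma aux_integral_log_mul_log :
    ∫ x in Set.Ioo (0:ℝ) 1, Real.log x * Real.log (1 - x) = 2 - Real.pi ^ 2 / 6 := by
  set F : ℕ → ℝ → ℝ := fun n x => (x ^ n * (x * Real.log x)) * (-(1 / ((n : ℝ) + 1))) with hFdef
  have hFcont : ∀ n, Continuous (F n) := fun n =>
    ((continuous_pow n).mul Real.continuous_mul_log).mul continuous_const
  have hFint : ∀ n, Integrable (F n) (volume.restrict (Set.Ioo (0:ℝ) 1)) := fun n =>
    ((hFcont n).integrableOn_Icc (a := 0) (b := 1)).mono_set Set.Ioo_subset_Icc_self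
  have hFval : ∀ n, ∫ x in Set.Ioo (0:ℝ) 1, F n x
      = 1 / (((n : ℝ) + 1) * ((n : ℝ) + 2) ^ 2) := by
    intro n
    rw [← MeasureTheory.integral_Ioc_eq_integral_Ioo,
      ← intervalIntegral.integral_of_le (by norm_num : (0:ℝ) ≤ 1)]
    have : ∫ x in (0:ℝ)..1, F n x
        = (∫ x in (0:ℝ)..1, x ^ n * (x * Real.log x)) * (-(1 / ((n : ℝ) + 1))) := by
      simp only [hFdef]
      exact intervalIntegral.integral_mul_const _ _
    rw [this, aux_integral_pow_mul_log]
    have h1 : ((n : ℝ) + 1) ≠ 0 := by positivity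
    have h2 : ((n : ℝ) + 2) ≠ 0 := by positivity
    field_simp
  have hFnonneg : ∀ n, ∀ x ∈ Set.Ioo (0:ℝ) 1, 0 ≤ F n x := by
    intro n x hx
    have h1 : x * Real.log x ≤ 0 :=
      mul_nonpos_of_nonneg_of_nonpos hx.1.le (Real.log_nonpos hx.1.le hx.2.le)
    have h2 : x ^ n * (x * Real.log x) ≤ 0 :=
      mul_nonpos_of_nonneg_of_nonpos (pow_nonneg hx.1.le n) h1
    have h3 : -(1 / ((n : ℝ) + 1)) ≤ 0 := neg_nonpos.mpr (by positivity)
    have h4 := mul_nonneg (neg_nonneg.mpr h2) (neg_nonneg.mpr h3)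
    rw [neg_mul_neg] at h4
    simpa [hFdef] using h4
  have hFnormval : ∀ n, ∫ x in Set.Ioo (0:ℝ) 1, ‖F n x‖
      = 1 / (((n : ℝ) + 1) * ((n : ℝ) + 2) ^ 2) := by
    intro n
    rw [setIntegral_congr_fun measurableSet_Ioo
      (fun x hx => Real.norm_of_nonneg (hFnonneg n x hx))]
    exact hFval n
  have hsummable : Summable fun n : ℕ => ∫ x in Set.Ioo (0:ℝ) 1, ‖F n x‖ := by
    apply Summable.congr aux_hasSum_main.summable
    intro n
    exact (hFnormval n).symm
  have hpointwise : ∀ x ∈ Set.Ioo (0:ℝ) 1,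
      Real.log x * Real.log (1 - x) = ∑' n : ℕ, F n x := by
    intro x hx
    have habs : |x| < 1 := abs_lt.mpr ⟨by linarith [hx.1], hx.2⟩
    have h := (Real.hasSum_pow_div_log_of_abs_lt_one habs).mul_right (-Real.log x)
    have h2 : HasSum (fun n : ℕ => F n x) (Real.log x * Real.log (1 - x)) := by
      have hv : Real.log x * Real.log (1 - x) = -Real.log (1 - x) * -Real.log x := by ring
      rw [hv]
      refine h.congr_fun fun n => ?_
      simp only [hFdef]
      ring
    exact h2.tsum_eq.symm
  rw [setIntegral_congr_fun measurableSet_Ioo hpointwise,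
    ← MeasureTheory.integral_tsum_of_summable_integral_norm hFint hsummable]
  rw [tsum_congr hFval]
  exact aux_hasSum_main.tsum_eq

/-- For `p₁, p₂ ∈ (0,1)`:
`∫₀¹ ⌊ln(1−u)/ln(1−p₁)⌋ ⌊ln u/ln(1−p₂)⌋ du ≤ (2 − π²/6)/(ln(1−p₁) ln(1−p₂))`. -/
theorem antithetic_product_integral_upper_bound (p₁ p₂ : ℝ)
    (h₁ : p₁ ∈ Set.Ioo (0 : ℝ) 1) (h₂ : p₂ ∈ Set.Ioo (0 : ℝ) 1) :
    (∫ u in Set.Ioo (0 : ℝ) 1,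
        (⌊Real.log (1 - u) / Real.log (1 - p₁)⌋ : ℝ) * (⌊Real.log u / Real.log (1 - p₂)⌋ : ℝ))
      ≤ (2 - Real.pi ^ 2 / 6) / (Real.log (1 - p₁) * Real.log (1 - p₂)) := by
  set a := Real.log (1 - p₁) with ha_def
  set b := Real.log (1 - p₂) with hb_def
  have ha : a < 0 := Real.log_neg (by linarith [h₁.2]) (by linarith [h₁.1])
  have hb : b < 0 := Real.log_neg (by linarith [h₂.2]) (by linarith [h₂.1])
  have hab : 0 < a * b := mul_pos_of_neg_of_neg ha hb
  -- the dominating function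
  set g : ℝ → ℝ := fun x => (Real.log x * Real.log (1 - x)) / (a * b) with hg_def
  have hgint : Integrable g (volume.restrict (Set.Ioo (0:ℝ) 1)) :=
    aux_integrableOn_log_mul_log.div_const _
  have hf_nonneg : 0 ≤ᵐ[volume.restrict (Set.Ioo (0:ℝ) 1)] fun u : ℝ =>
      (⌊Real.log (1 - u) / a⌋ : ℝ) * (⌊Real.log u / b⌋ : ℝ) := by
    refine (ae_restrict_iff' measurableSet_Ioo).mpr (Filter.Eventually.of_forall fun x hx => ?_)
    have h1 : 0 ≤ Real.log (1 - x) / a :=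
      div_nonneg_of_nonpos (Real.log_nonpos (by linarith [hx.2]) (by linarith [hx.1])) ha.le
    have h2 : 0 ≤ Real.log x / b :=
      div_nonneg_of_nonpos (Real.log_nonpos hx.1.le hx.2.le) hb.le
    have hf1 : (0:ℝ) ≤ (⌊Real.log (1 - x) / a⌋ : ℝ) := by
      exact_mod_cast Int.floor_nonneg.mpr h1
    have hf2 : (0:ℝ) ≤ (⌊Real.log x / b⌋ : ℝ) := by
      exact_mod_cast Int.floor_nonneg.mpr h2
    exact mul_nonneg hf1 hf2
  have hle : (fun u : ℝ => (⌊Real.log (1 - u) / a⌋ : ℝ) * (⌊Real.log u / b⌋ : ℝ))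
      ≤ᵐ[volume.restrict (Set.Ioo (0:ℝ) 1)] g := by
    refine (ae_restrict_iff' measurableSet_Ioo).mpr (Filter.Eventually.of_forall fun x hx => ?_)
    have h1 : 0 ≤ Real.log (1 - x) / a :=
      div_nonneg_of_nonpos (Real.log_nonpos (by linarith [hx.2]) (by linarith [hx.1])) ha.le
    have h2 : 0 ≤ Real.log x / b :=
      div_nonneg_of_nonpos (Real.log_nonpos hx.1.le hx.2.le) hb.le
    have hf2 : (0:ℝ) ≤ (⌊Real.log x / b⌋ : ℝ) := by
      exact_mod_cast Int.floor_nonneg.mpr h2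
    have hprod : (⌊Real.log (1 - x) / a⌋ : ℝ) * (⌊Real.log x / b⌋ : ℝ)
        ≤ (Real.log (1 - x) / a) * (Real.log x / b) :=
      mul_le_mul (Int.floor_le _) (Int.floor_le _) hf2 h1
    calc (⌊Real.log (1 - x) / a⌋ : ℝ) * (⌊Real.log x / b⌋ : ℝ)
        ≤ (Real.log (1 - x) / a) * (Real.log x / b) := hprod
      _ = g x := by simp only [hg_def]; ring
  calc (∫ u in Set.Ioo (0 : ℝ) 1,
        (⌊Real.log (1 - u) / a⌋ : ℝ) * (⌊Real.log u / b⌋ : ℝ))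
      ≤ ∫ u in Set.Ioo (0 : ℝ) 1, g u := integral_mono_of_nonneg hf_nonneg hgint hle
    _ = (2 - Real.pi ^ 2 / 6) / (a * b) := by
        simp only [hg_def]
        rw [integral_div, aux_integral_log_mul_log]
end

section
/- Let p₁, p₂ ∈ (0,1). Then the minimum correlation satisfies ρ₋(p₁,p₂) ≤ g(p₁,p₂), where g(p₁,p₂) = [p₁/ln(1−p₁)]·[p₂/ln(1−p₂)] / √((1−p₁)(1−p₂)) · (2 − π²/6) − √((1−p₁)(1−p₂)). -/
open MeasureTheory

open Set Filter Real

namespace MinCorrAux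

/-- `x^(m+1) * log x → 0` as `x → 0⁺`. -/
lemma aux_tendsto (m : ℕ) :
    Tendsto (fun x : ℝ => x ^ (m + 1) * Real.log x) (nhdsWithin 0 (Set.Ioi 0)) (nhds 0) := by
  have h := tendsto_log_mul_rpow_nhdsGT_zero (r := (m + 1 : ℝ)) (by positivity)
  refine h.congr' ?_
  filter_upwards [self_mem_nhdsWithin] with x hx
  rw [show ((m : ℝ) + 1) = ((m + 1 : ℕ) : ℝ) by push_cast; ring, Real.rpow_natCast]
  ring

lemma pow_neg_log_le_one {m : ℕ} {x : ℝ} (hx : 0 < x) (hx1 : x ≤ 1) :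
    x ^ (m + 1) * (-Real.log x) ≤ 1 := by
  have hlog : 0 ≤ -Real.log x := neg_nonneg.2 (Real.log_nonpos hx.le hx1)
  have h1 : x ^ (m + 1) ≤ x := by
    simpa using pow_le_pow_of_le_one hx.le hx1 (show 1 ≤ m + 1 by omega)
  have h2 : -Real.log x ≤ x⁻¹ - 1 := by
    have := Real.log_le_sub_one_of_pos (inv_pos.2 hx)
    rwa [Real.log_inv] at this
  have h3 : x ^ (m + 1) * (-Real.log x) ≤ x * (x⁻¹ - 1) :=
    mul_le_mul h1 h2 hlog hx.le
  have h4 : x * (x⁻¹ - 1) = 1 - x := by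
    field_simp
  nlinarith

lemma integrableOn_pow_neg_log (m : ℕ) :
    IntegrableOn (fun x : ℝ => x ^ (m + 1) * (-Real.log x)) (Ioc 0 1) volume := by
  have hmeas : AEStronglyMeasurable (fun x : ℝ => x ^ (m + 1) * (-Real.log x))
      (volume.restrict (Ioc (0:ℝ) 1)) :=
    ((measurable_id.pow_const (m + 1)).mul Real.measurable_log.neg).aestronglyMeasurable
  have hconst : IntegrableOn (fun _ : ℝ => (1 : ℝ)) (Ioc 0 1) volume :=
    integrableOn_const (by simp [Real.volume_Ioc])
  refine hconst.mono' hmeas ?_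
  rw [ae_restrict_iff' measurableSet_Ioc]
  filter_upwards with x hx
  have h1 := pow_neg_log_le_one (m := m) hx.1 hx.2
  have hlog : 0 ≤ -Real.log x := neg_nonneg.2 (Real.log_nonpos hx.1.le hx.2)
  have h0 : 0 ≤ x ^ (m + 1) * (-Real.log x) := mul_nonneg (pow_nonneg hx.1.le _) hlog
  rw [Real.norm_of_nonneg h0]
  exact h1

lemma integral_pow_neg_log (m : ℕ) :
    ∫ x in Ioo (0:ℝ) 1, x ^ (m + 1) * (-Real.log x) = 1 / (m + 2 : ℝ) ^ 2 := by
  set G : ℝ → ℝ := fun x => x ^ (m + 2) / (m + 2 : ℝ) ^ 2 - x ^ (m + 2) * Real.log x / (m + 2)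
    with hG
  have hm2 : ((m : ℝ) + 2) ≠ 0 := by positivity
  have hcont : ContinuousOn G (Icc 0 1) := by
    intro x hx
    rcases eq_or_ne x 0 with rfl | hne
    · -- continuity at 0
      have hsub : Icc (0:ℝ) 1 ⊆ Ici 0 := Icc_subset_Ici_self
      refine (ContinuousWithinAt.mono ?_ hsub)
      rw [← Set.Ioi_insert, continuousWithinAt_insert_self]
      unfold ContinuousWithinAt
      have hG0 : G 0 = 0 := by simp [hG]
      rw [hG0]
      have t1 : Tendsto (fun x : ℝ => x ^ (m + 2) / (m + 2 : ℝ) ^ 2) (nhdsWithin 0 (Ioi 0))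
          (nhds 0) := by
        have : Tendsto (fun x : ℝ => x ^ (m + 2) / (m + 2 : ℝ) ^ 2) (nhds 0) (nhds 0) := by
          have := ((continuous_pow (m + 2)).div_const ((m + 2 : ℝ) ^ 2)).tendsto (0 : ℝ)
          simpa using this
        exact this.mono_left nhdsWithin_le_nhds
      have t2 : Tendsto (fun x : ℝ => x ^ (m + 2) * Real.log x / (m + 2)) (nhdsWithin 0 (Ioi 0))
          (nhds 0) := by
        have := (aux_tendsto (m + 1)).div_const ((m : ℝ) + 2)
        simpa using this
      have := t1.sub t2
      simpa using this
    · have hx0 : 0 < x := lt_of_le_of_ne hx.1 (Ne.symm hne)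
      exact (((continuous_pow (m+2)).continuousAt.div_const _).sub
        (((continuous_pow (m+2)).continuousAt.mul (Real.continuousAt_log hne)).div_const _)).continuousWithinAt
  have hderiv : ∀ x ∈ Ioo (0:ℝ) 1,
      HasDerivWithinAt G (x ^ (m + 1) * (-Real.log x)) (Ioi x) x := by
    intro x hx
    have hx0 : 0 < x := hx.1
    have h1 : HasDerivAt (fun y : ℝ => y ^ (m + 2)) ((m + 2 : ℕ) * x ^ (m + 1)) x := by
      simpa using hasDerivAt_pow (m + 2) x
    have h2 : HasDerivAt Real.log x⁻¹ x := Real.hasDerivAt_log hx0.ne'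
    have h3 := (h1.mul h2)
    have h4 := (h1.div_const ((m + 2 : ℝ) ^ 2)).sub (h3.div_const ((m : ℝ) + 2))
    have hxx : x ^ (m + 2) * x⁻¹ = x ^ (m + 1) := by
      rw [pow_succ, mul_assoc, mul_inv_cancel₀ hx0.ne', mul_one]
    have heq : ((m + 2 : ℕ) : ℝ) * x ^ (m + 1) / (m + 2 : ℝ) ^ 2 -
        (((m + 2 : ℕ) : ℝ) * x ^ (m + 1) * Real.log x + x ^ (m + 2) * x⁻¹) / ((m : ℝ) + 2)
        = x ^ (m + 1) * (-Real.log x) := by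
      rw [hxx]
      push_cast
      field_simp
      ring
    rw [← heq]
    exact h4.hasDerivWithinAt
  have hint : IntervalIntegrable (fun x : ℝ => x ^ (m + 1) * (-Real.log x)) volume 0 1 := by
    rw [intervalIntegrable_iff_integrableOn_Ioc_of_le zero_le_one]
    exact integrableOn_pow_neg_log m
  have hftc := intervalIntegral.integral_eq_sub_of_hasDeriv_right_of_le zero_le_one hcont hderiv hint
  have hG1 : G 1 = 1 / (m + 2 : ℝ) ^ 2 := by simp [hG]
  have hG0 : G 0 = 0 := by simp [hG]
  rw [hG1, hG0, sub_zero] at hftc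
  rw [← MeasureTheory.integral_Ioc_eq_integral_Ioo, ← intervalIntegral.integral_of_le zero_le_one]
  exact hftc

lemma hasSum_telescope :
    HasSum (fun n : ℕ => 1 / ((n : ℝ) + 1) - 1 / ((n : ℝ) + 2)) 1 := by
  rw [hasSum_iff_tendsto_nat_of_nonneg]
  · have key : ∀ N : ℕ, ∑ i ∈ Finset.range N, (1 / ((i : ℝ) + 1) - 1 / ((i : ℝ) + 2))
        = 1 - 1 / ((N : ℝ) + 1) := by
      intro N
      have h2 : ∑ i ∈ Finset.range N, (1 / ((i : ℝ) + 1) - 1 / ((i : ℝ) + 2))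
          = ∑ i ∈ Finset.range N,
            ((fun i : ℕ => 1 / ((i : ℝ) + 1)) i - (fun i : ℕ => 1 / ((i : ℝ) + 1)) (i + 1)) :=
        Finset.sum_congr rfl (fun i _ => by push_cast; ring)
      rw [h2, Finset.sum_range_sub']
      norm_num
    simp_rw [key]
    have h : Tendsto (fun n : ℕ => 1 / ((n : ℝ) + 1)) atTop (nhds 0) :=
      tendsto_one_div_add_atTop_nhds_zero_nat
    simpa using tendsto_const_nhds.sub h
  · intro i
    have h1 : (0:ℝ) < (i : ℝ) + 1 := by positivity
    have h2 : (1:ℝ) / ((i : ℝ) + 2) ≤ 1 / ((i : ℝ) + 1) :=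
      one_div_le_one_div_of_le h1 (by linarith)
    linarith

lemma hasSum_shifted_basel :
    HasSum (fun n : ℕ => 1 / ((n : ℝ) + 2) ^ 2) (π ^ 2 / 6 - 1) := by
  have h := (hasSum_nat_add_iff (f := fun n : ℕ => (1 : ℝ) / (n : ℝ) ^ 2) 2 (g := π ^ 2 / 6 - 1)).2 ?_
  · refine h.congr_fun fun n => ?_
    push_cast
    ring_nf
  · have : (π ^ 2 / 6 - 1) + ∑ i ∈ Finset.range 2, (1 : ℝ) / (i : ℝ) ^ 2 = π ^ 2 / 6 := by
      norm_num [Finset.sum_range_succ]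
    rw [this]
    exact hasSum_zeta_two

lemma hasSum_S :
    HasSum (fun n : ℕ => 1 / (((n : ℝ) + 1) * ((n : ℝ) + 2) ^ 2)) (2 - π ^ 2 / 6) := by
  have h3 := hasSum_telescope.sub hasSum_shifted_basel
  have hfun : ∀ n : ℕ, (1 / ((n : ℝ) + 1) - 1 / ((n : ℝ) + 2)) - 1 / ((n : ℝ) + 2) ^ 2
      = 1 / (((n : ℝ) + 1) * ((n : ℝ) + 2) ^ 2) := by
    intro n
    have h1 : ((n : ℝ) + 1) ≠ 0 := by positivity
    have h2 : ((n : ℝ) + 2) ≠ 0 := by positivity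
    field_simp
    ring
  have hval : (1 : ℝ) - (π ^ 2 / 6 - 1) = 2 - π ^ 2 / 6 := by ring
  rw [← hval]
  exact h3.congr_fun fun n => (hfun n).symm

lemma key_integral :
    ∫ u in Ioo (0:ℝ) 1, Real.log (1 - u) * Real.log u = 2 - π ^ 2 / 6 := by
  set F : ℕ → ℝ → ℝ := fun n u => (u ^ (n + 1) * (-Real.log u)) / ((n : ℝ) + 1) with hF
  have hFint : ∀ n, Integrable (F n) (volume.restrict (Ioo (0:ℝ) 1)) := by
    intro n
    have := ((integrableOn_pow_neg_log n).mono_set Ioo_subset_Ioc_self).div_const ((n : ℝ) + 1)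
    exact this
  have hFval : ∀ n, ∫ u in Ioo (0:ℝ) 1, F n u = 1 / (((n : ℝ) + 1) * ((n : ℝ) + 2) ^ 2) := by
    intro n
    rw [hF]
    simp only
    rw [integral_div, integral_pow_neg_log n, div_div]
    rw [mul_comm]
  have hFnorm : ∀ n, ∫ u in Ioo (0:ℝ) 1, ‖F n u‖ = 1 / (((n : ℝ) + 1) * ((n : ℝ) + 2) ^ 2) := by
    intro n
    rw [← hFval n]
    apply setIntegral_congr_fun measurableSet_Ioo
    intro u hu
    apply Real.norm_of_nonneg
    apply div_nonneg _ (by positivity)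
    exact mul_nonneg (pow_nonneg hu.1.le _)
      (neg_nonneg.2 (Real.log_nonpos hu.1.le hu.2.le))
  have hsum : Summable fun n => ∫ u in Ioo (0:ℝ) 1, ‖F n u‖ := by
    simp_rw [hFnorm]
    exact hasSum_S.summable
  have heq := integral_tsum_of_summable_integral_norm hFint hsum
  have hLHS : ∑' n, ∫ u in Ioo (0:ℝ) 1, F n u = 2 - π ^ 2 / 6 := by
    simp_rw [hFval]
    exact hasSum_S.tsum_eq
  have hRHS : ∫ u in Ioo (0:ℝ) 1, (∑' n, F n u)
      = ∫ u in Ioo (0:ℝ) 1, Real.log (1 - u) * Real.log u := by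
    apply setIntegral_congr_fun measurableSet_Ioo
    intro u hu
    have habs : |u| < 1 := by rw [abs_of_pos hu.1]; exact hu.2
    have h := hasSum_pow_div_log_of_abs_lt_one habs
    have h2 := h.mul_left (-Real.log u)
    have h3 : ∑' n : ℕ, (-Real.log u) * (u ^ (n + 1) / ((n : ℝ) + 1))
        = (-Real.log u) * (-Real.log (1 - u)) := h2.tsum_eq
    calc (∑' n, F n u) = ∑' n : ℕ, (-Real.log u) * (u ^ (n + 1) / ((n : ℝ) + 1)) := by
          apply tsum_congr
          intro n
          rw [hF]
          push_cast
          ring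
      _ = (-Real.log u) * (-Real.log (1 - u)) := h3
      _ = Real.log (1 - u) * Real.log u := by ring
  rw [← hRHS, ← heq, hLHS]

lemma neg_log_le_rpow {x : ℝ} (hx : 0 < x) (hx1 : x ≤ 1) :
    -Real.log x ≤ 4 * x ^ (-(1/4) : ℝ) := by
  have h1 : x ^ (-(1/4) : ℝ) = Real.exp (-Real.log x * (1/4)) := by
    rw [Real.rpow_def_of_pos hx]
    congr 1
    ring
  rw [h1]
  set t : ℝ := -Real.log x with ht
  nlinarith [Real.add_one_le_exp (t * (1/4)), Real.exp_pos (t * (1/4))]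

lemma integrableOn_logprod :
    IntegrableOn (fun u : ℝ => Real.log (1 - u) * Real.log u) (Ioo 0 1) volume := by
  have hbound : IntegrableOn
      (fun u : ℝ => 16 * (u ^ (-(1/2) : ℝ) + (1 - u) ^ (-(1/2) : ℝ))) (Ioo 0 1) volume := by
    have h1 : IntervalIntegrable (fun x : ℝ => x ^ (-(1/2) : ℝ)) volume 0 1 :=
      intervalIntegral.intervalIntegrable_rpow' (by norm_num)
    have h2 : IntervalIntegrable (fun x : ℝ => (1 - x) ^ (-(1/2) : ℝ)) volume 0 1 := by
      have := h1.comp_sub_left 1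
      simpa using this.symm
    have h3 := ((h1.add h2).const_mul 16)
    rw [intervalIntegrable_iff_integrableOn_Ioc_of_le zero_le_one] at h3
    exact h3.mono_set Ioo_subset_Ioc_self
  have hmeas : AEStronglyMeasurable (fun u : ℝ => Real.log (1 - u) * Real.log u)
      (volume.restrict (Ioo (0:ℝ) 1)) :=
    ((Real.measurable_log.comp (measurable_const.sub measurable_id)).mul
      Real.measurable_log).aestronglyMeasurable
  refine hbound.mono' hmeas ?_
  rw [ae_restrict_iff' measurableSet_Ioo]
  filter_upwards with u hu
  have hu0 : 0 < u := hu.1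
  have hu1 : u < 1 := hu.2
  have hv0 : 0 < 1 - u := by linarith
  have hA : -Real.log u ≤ 4 * u ^ (-(1/4) : ℝ) := neg_log_le_rpow hu0 hu1.le
  have hB : -Real.log (1 - u) ≤ 4 * (1 - u) ^ (-(1/4) : ℝ) := neg_log_le_rpow hv0 (by linarith)
  have hA0 : 0 ≤ -Real.log u := neg_nonneg.2 (Real.log_nonpos hu0.le hu1.le)
  have hB0 : 0 ≤ -Real.log (1 - u) := neg_nonneg.2 (Real.log_nonpos hv0.le (by linarith))
  have hnorm : ‖Real.log (1 - u) * Real.log u‖ = (-Real.log (1 - u)) * (-Real.log u) := by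
    rw [Real.norm_eq_abs, abs_mul, abs_of_nonpos (Real.log_nonpos hv0.le (by linarith)),
      abs_of_nonpos (Real.log_nonpos hu0.le hu1.le)]
  rw [hnorm]
  have hprod : (-Real.log (1 - u)) * (-Real.log u)
      ≤ (4 * (1 - u) ^ (-(1/4) : ℝ)) * (4 * u ^ (-(1/4) : ℝ)) :=
    mul_le_mul hB hA hA0 (by positivity)
  have hsq1 : (u ^ (-(1/4) : ℝ)) * (u ^ (-(1/4) : ℝ)) = u ^ (-(1/2) : ℝ) := by
    rw [← Real.rpow_add hu0]
    norm_num
  have hsq2 : ((1 - u) ^ (-(1/4) : ℝ)) * ((1 - u) ^ (-(1/4) : ℝ)) = (1 - u) ^ (-(1/2) : ℝ) := by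
    rw [← Real.rpow_add hv0]
    norm_num
  have hab : ((1 - u) ^ (-(1/4) : ℝ)) * (u ^ (-(1/4) : ℝ))
      ≤ u ^ (-(1/2) : ℝ) + (1 - u) ^ (-(1/2) : ℝ) := by
    nlinarith [sq_nonneg ((1 - u) ^ (-(1/4) : ℝ) - u ^ (-(1/4) : ℝ)),
      Real.rpow_nonneg hu0.le (-(1/4) : ℝ), Real.rpow_nonneg hv0.le (-(1/4) : ℝ)]
  calc (-Real.log (1 - u)) * (-Real.log u)
      ≤ (4 * (1 - u) ^ (-(1/4) : ℝ)) * (4 * u ^ (-(1/4) : ℝ)) := hprod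
    _ = 16 * (((1 - u) ^ (-(1/4) : ℝ)) * (u ^ (-(1/4) : ℝ))) := by ring
    _ ≤ 16 * (u ^ (-(1/2) : ℝ) + (1 - u) ^ (-(1/2) : ℝ)) := by linarith

end MinCorrAux

open MinCorrAux in
/-- Upper bound on the minimum correlation between Geometric(p₁) and Geometric(p₂)
random variables:  `ρ₋(p₁,p₂) ≤ g(p₁,p₂)` where
`g(p₁,p₂) = [p₁/ln(1−p₁)][p₂/ln(1−p₂)]/√((1−p₁)(1−p₂)) · (2 − π²/6) − √((1−p₁)(1−p₂))`
and `ρ₋(p₁,p₂) = (∫₀¹ χ_{p₁}(u) χ_{p₂}(1−u) du − m₁m₂)/(σ₁σ₂)`. -/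
theorem min_correlation_upper_bound (p₁ p₂ : ℝ)
    (h₁ : p₁ ∈ Set.Ioo (0 : ℝ) 1) (h₂ : p₂ ∈ Set.Ioo (0 : ℝ) 1) :
    ((∫ u in Set.Ioo (0 : ℝ) 1,
        (⌊Real.log (1 - u) / Real.log (1 - p₁)⌋ : ℝ) * (⌊Real.log u / Real.log (1 - p₂)⌋ : ℝ))
        - ((1 - p₁) / p₁) * ((1 - p₂) / p₂)) /
      ((Real.sqrt (1 - p₁) / p₁) * (Real.sqrt (1 - p₂) / p₂))
    ≤ (p₁ / Real.log (1 - p₁)) * (p₂ / Real.log (1 - p₂)) / Real.sqrt ((1 - p₁) * (1 - p₂))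
        * (2 - Real.pi ^ 2 / 6) - Real.sqrt ((1 - p₁) * (1 - p₂)) := by
  obtain ⟨hp₁0, hp₁1⟩ := h₁
  obtain ⟨hp₂0, hp₂1⟩ := h₂
  have hq₁ : (0:ℝ) < 1 - p₁ := by linarith
  have hq₂ : (0:ℝ) < 1 - p₂ := by linarith
  set a : ℝ := Real.log (1 - p₁) with ha_def
  set b : ℝ := Real.log (1 - p₂) with hb_def
  have ha : a < 0 := Real.log_neg hq₁ (by linarith)
  have hb : b < 0 := Real.log_neg hq₂ (by linarith)
  -- the comparison function
  set g : ℝ → ℝ := fun u => (Real.log (1 - u) / a) * (Real.log u / b) with hg_def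
  have hgeq : g = fun u => (Real.log (1 - u) * Real.log u) / (a * b) := by
    funext u
    rw [hg_def]
    simp only
    rw [div_mul_div_comm]
  have hgint : IntegrableOn g (Ioo (0:ℝ) 1) volume := by
    rw [hgeq]
    exact integrableOn_logprod.div_const (a * b)
  set f : ℝ → ℝ := fun u =>
    (⌊Real.log (1 - u) / a⌋ : ℝ) * (⌊Real.log u / b⌋ : ℝ) with hf_def
  have hfmeas : AEStronglyMeasurable f (volume.restrict (Ioo (0:ℝ) 1)) := by
    apply Measurable.aestronglyMeasurable
    have m1 : Measurable fun u : ℝ => (⌊Real.log (1 - u) / a⌋ : ℝ) :=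
      (measurable_from_top (f := (Int.cast : ℤ → ℝ))).comp
        (((Real.measurable_log.comp (measurable_const.sub measurable_id)).div_const a).floor)
    have m2 : Measurable fun u : ℝ => (⌊Real.log u / b⌋ : ℝ) :=
      (measurable_from_top (f := (Int.cast : ℤ → ℝ))).comp
        ((Real.measurable_log.div_const b).floor)
    exact m1.mul m2
  have hfg : ∀ u ∈ Ioo (0:ℝ) 1, f u ≤ g u := by
    intro u hu
    have hu0 : 0 < u := hu.1
    have hu1 : u < 1 := hu.2
    have hX : 0 ≤ Real.log (1 - u) / a :=
      div_nonneg_of_nonpos (Real.log_nonpos (by linarith) (by linarith)) ha.le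
    have hY : 0 ≤ Real.log u / b :=
      div_nonneg_of_nonpos (Real.log_nonpos hu0.le hu1.le) hb.le
    have hfX : (⌊Real.log (1 - u) / a⌋ : ℝ) ≤ Real.log (1 - u) / a := Int.floor_le _
    have hfY : (⌊Real.log u / b⌋ : ℝ) ≤ Real.log u / b := Int.floor_le _
    have hfY0 : (0:ℝ) ≤ (⌊Real.log u / b⌋ : ℝ) := by
      exact_mod_cast Int.floor_nonneg.2 hY
    exact mul_le_mul hfX hfY hfY0 hX
  have hfint : IntegrableOn f (Ioo (0:ℝ) 1) volume := by
    refine hgint.mono' hfmeas ?_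
    rw [ae_restrict_iff' measurableSet_Ioo]
    filter_upwards with u hu
    have hf0 : 0 ≤ f u := by
      have hX : 0 ≤ Real.log (1 - u) / a :=
        div_nonneg_of_nonpos (Real.log_nonpos (by linarith [hu.2]) (by linarith [hu.1])) ha.le
      have hY : 0 ≤ Real.log u / b :=
        div_nonneg_of_nonpos (Real.log_nonpos hu.1.le hu.2.le) hb.le
      exact mul_nonneg (by exact_mod_cast Int.floor_nonneg.2 hX)
        (by exact_mod_cast Int.floor_nonneg.2 hY)
    rw [Real.norm_of_nonneg hf0]
    exact hfg u hu
  have hmono : ∫ u in Ioo (0:ℝ) 1, f u ≤ ∫ u in Ioo (0:ℝ) 1, g u :=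
    setIntegral_mono_on hfint hgint measurableSet_Ioo hfg
  have hgval : ∫ u in Ioo (0:ℝ) 1, g u = (2 - π ^ 2 / 6) / (a * b) := by
    rw [hgeq]
    rw [integral_div, key_integral]
  rw [hgval] at hmono
  -- algebra
  set s₁ : ℝ := Real.sqrt (1 - p₁) with hs₁_def
  set s₂ : ℝ := Real.sqrt (1 - p₂) with hs₂_def
  have hs₁ : 0 < s₁ := Real.sqrt_pos.2 hq₁
  have hs₂ : 0 < s₂ := Real.sqrt_pos.2 hq₂
  have hs₁sq : s₁ ^ 2 = 1 - p₁ := Real.sq_sqrt hq₁.le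
  have hs₂sq : s₂ ^ 2 = 1 - p₂ := Real.sq_sqrt hq₂.le
  have hsm : Real.sqrt ((1 - p₁) * (1 - p₂)) = s₁ * s₂ := Real.sqrt_mul hq₁.le _
  have hσ : 0 < (s₁ / p₁) * (s₂ / p₂) := by positivity
  have step1 : ((∫ u in Ioo (0:ℝ) 1, f u) - ((1 - p₁) / p₁) * ((1 - p₂) / p₂)) /
      ((s₁ / p₁) * (s₂ / p₂))
      ≤ ((2 - π ^ 2 / 6) / (a * b) - ((1 - p₁) / p₁) * ((1 - p₂) / p₂)) /
      ((s₁ / p₁) * (s₂ / p₂)) :=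
    (div_le_div_iff_of_pos_right hσ).2 (sub_le_sub_right hmono _)
  rw [hsm]
  refine le_trans step1 (le_of_eq ?_)
  rw [← hs₁sq, ← hs₂sq]
  have hane : a ≠ 0 := ha.ne
  have hbne : b ≠ 0 := hb.ne
  field_simp
end

section
/- For every p ∈ (0, 1/2], the following two-sided bound holds: 1 − (2 − 1/ln 2)·p ≤ −p/ln(1−p) ≤ 1 − (1/2)p − (1/12)p². -/
lemma hasDerivAt_lin_aux (c x : ℝ) (h1 : 1 - c*x ≠ 0) (h2 : (1:ℝ) - x ≠ 0) :
    HasDerivAt (fun y : ℝ => y/(1 - c*y) + Real.log (1 - y))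
      (1/(1-c*x)^2 - 1/(1-x)) x := by
  have hv : HasDerivAt (fun y : ℝ => 1 - c*y) (-c) x := by
    simpa using ((hasDerivAt_id x).const_mul c).const_sub 1
  have hu : HasDerivAt (fun y : ℝ => y/(1-c*y)) ((1*(1-c*x) - x*(-c))/(1-c*x)^2) x :=
    (hasDerivAt_id x).div hv h1
  have hw : HasDerivAt (fun y : ℝ => 1 - y) (-1) x := by
    simpa using (hasDerivAt_id x).const_sub 1
  have hl : HasDerivAt (fun y : ℝ => Real.log (1 - y)) ((-1)/(1-x)) x := by
    simpa using hw.log h2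
  have := hu.add hl
  refine this.congr_deriv ?_
  field_simp
  ring

lemma hasDerivAt_quad_aux (x : ℝ) (h1 : 1 - x/2 - x^2/12 ≠ 0) (h2 : (1:ℝ) - x ≠ 0) :
    HasDerivAt (fun y : ℝ => y/(1 - y/2 - y^2/12) + Real.log (1 - y))
      ((1 + x^2/12)/(1 - x/2 - x^2/12)^2 - 1/(1-x)) x := by
  have hv : HasDerivAt (fun y : ℝ => 1 - y/2 - y^2/12) (-(1/2) - x/6) x := by
    have h0 : HasDerivAt (fun y : ℝ => y^2) (2*x) x := by simpa using hasDerivAt_pow 2 x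
    have := (((hasDerivAt_id x).div_const 2).const_sub 1).sub (h0.div_const 12)
    refine this.congr_deriv ?_
    ring
  have hu : HasDerivAt (fun y : ℝ => y/(1 - y/2 - y^2/12))
      ((1*(1 - x/2 - x^2/12) - x*(-(1/2) - x/6))/(1 - x/2 - x^2/12)^2) x :=
    (hasDerivAt_id x).div hv h1
  have hw : HasDerivAt (fun y : ℝ => 1 - y) (-1) x := by
    simpa using (hasDerivAt_id x).const_sub 1
  have hl : HasDerivAt (fun y : ℝ => Real.log (1 - y)) ((-1)/(1-x)) x := by
    simpa using hw.log h2
  have := hu.add hl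
  refine this.congr_deriv ?_
  have h3 : 1*(1 - x/2 - x^2/12) - x*(-(1/2) - x/6) = 1 + x^2/12 := by ring
  rw [h3]
  ring

/-- Key lemma for the lower bound, with opaque `c`. -/
lemma lower_aux (c p : ℝ) (hcl : (0.55:ℝ) < c) (hcu : c < 0.56)
    (hend : (1:ℝ)/2/(1 - c*(1/2)) + Real.log (1 - 1/2) = 0)
    (hp0 : 0 < p) (hp2 : p ≤ 1/2) :
    0 ≤ p/(1 - c*p) + Real.log (1 - p) := by
  have hden : ∀ x : ℝ, 0 ≤ x → x ≤ 1/2 → (0:ℝ) < 1 - c*x := by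
    intro x h0 h1
    have h2 : c * x ≤ 0.56 * x := mul_le_mul_of_nonneg_right (le_of_lt hcu) h0
    nlinarith
  have hden' : ∀ x : ℝ, 0 ≤ x → x ≤ 1/2 → (1:ℝ) - x ≠ 0 := by
    intro x h0 h1; intro h; nlinarith
  have hcpos : (0:ℝ) < c := by linarith
  have hc2pos : (0:ℝ) < c^2 := by positivity
  set a : ℝ := (2*c - 1)/c^2 with ha
  have ha_pos : 0 < a := div_pos (by linarith) hc2pos
  have ha_half : a < 1/2 := by
    rw [ha, div_lt_iff₀ hc2pos]
    nlinarith
  have hmono : MonotoneOn (fun y : ℝ => y/(1 - c*y) + Real.log (1 - y)) (Set.Icc 0 a) := by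
    apply monotoneOn_of_hasDerivWithinAt_nonneg (convex_Icc 0 a)
      (f' := fun x => 1/(1-c*x)^2 - 1/(1-x))
    · intro x hx
      have h0 := hx.1
      have h1 : x ≤ 1/2 := le_trans hx.2 (le_of_lt ha_half)
      exact ((hasDerivAt_lin_aux c x (ne_of_gt (hden x h0 h1)) (hden' x h0 h1)).continuousAt).continuousWithinAt
    · intro x hx
      rw [interior_Icc] at hx
      have h0 := le_of_lt hx.1
      have h1 : x ≤ 1/2 := le_of_lt (lt_trans hx.2 ha_half)
      exact (hasDerivAt_lin_aux c x (ne_of_gt (hden x h0 h1)) (hden' x h0 h1)).hasDerivWithinAt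
    · intro x hx
      rw [interior_Icc] at hx
      obtain ⟨hx1, hx2⟩ := hx
      have hxh : x ≤ 1/2 := le_of_lt (lt_trans hx2 ha_half)
      have hcx : (0:ℝ) < 1 - c*x := hden x (le_of_lt hx1) hxh
      have h1x : (0:ℝ) < 1 - x := by linarith
      have key : (1 - c*x)^2 ≤ 1 - x := by
        have hxa : c^2 * x ≤ 2*c - 1 := by
          rw [ha, lt_div_iff₀ hc2pos] at hx2
          nlinarith
        nlinarith
      have h2 : 1/(1-x) ≤ 1/(1-c*x)^2 :=
        one_div_le_one_div_of_le (by positivity) key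

      linarith
  have hanti : AntitoneOn (fun y : ℝ => y/(1 - c*y) + Real.log (1 - y)) (Set.Icc a (1/2)) := by
    apply antitoneOn_of_hasDerivWithinAt_nonpos (convex_Icc a (1/2))
      (f' := fun x => 1/(1-c*x)^2 - 1/(1-x))
    · intro x hx
      have h0 : (0:ℝ) ≤ x := le_trans (le_of_lt ha_pos) hx.1
      have h1 := hx.2
      exact ((hasDerivAt_lin_aux c x (ne_of_gt (hden x h0 h1)) (hden' x h0 h1)).continuousAt).continuousWithinAt
    · intro x hx
      rw [interior_Icc] at hx
      have h0 : (0:ℝ) ≤ x := le_of_lt (lt_trans ha_pos hx.1)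
      have h1 := le_of_lt hx.2
      exact (hasDerivAt_lin_aux c x (ne_of_gt (hden x h0 h1)) (hden' x h0 h1)).hasDerivWithinAt
    · intro x hx
      rw [interior_Icc] at hx
      obtain ⟨hx1, hx2⟩ := hx
      have hx0 : 0 < x := lt_trans ha_pos hx1
      have hcx : (0:ℝ) < 1 - c*x := hden x (le_of_lt hx0) (le_of_lt hx2)
      have h1x : (0:ℝ) < 1 - x := by linarith
      have key : 1 - x ≤ (1 - c*x)^2 := by
        have hxa : 2*c - 1 ≤ c^2 * x := by
          rw [ha, div_lt_iff₀ hc2pos] at hx1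
          nlinarith
        nlinarith
      have h2 : 1/(1-c*x)^2 ≤ 1/(1-x) :=
        one_div_le_one_div_of_le (by positivity) key

      linarith
  rcases le_or_gt p a with hpa | hpa
  · have := hmono (Set.mem_Icc.mpr ⟨le_refl 0, le_of_lt ha_pos⟩)
      (Set.mem_Icc.mpr ⟨le_of_lt hp0, hpa⟩) (le_of_lt hp0)
    simpa using this
  · have := hanti (Set.mem_Icc.mpr ⟨le_of_lt hpa, hp2⟩)
      (Set.mem_Icc.mpr ⟨le_of_lt (lt_of_lt_of_le hpa hp2), le_refl _⟩) hp2
    simp only [] at this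
    linarith [this, hend]

/-- Key lemma for the upper bound. -/
lemma upper_aux (p : ℝ) (hp0 : 0 < p) (hp2 : p ≤ 1/2) :
    p/(1 - p/2 - p^2/12) + Real.log (1 - p) ≤ 0 := by
  have hq : ∀ x : ℝ, 0 ≤ x → x ≤ 1/2 → (0:ℝ) < 1 - x/2 - x^2/12 := by
    intro x h0 h1; nlinarith
  have hden' : ∀ x : ℝ, 0 ≤ x → x ≤ 1/2 → (1:ℝ) - x ≠ 0 := by
    intro x h0 h1; intro h; nlinarith
  have hanti : AntitoneOn (fun y : ℝ => y/(1 - y/2 - y^2/12) + Real.log (1 - y))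
      (Set.Icc 0 (1/2)) := by
    apply antitoneOn_of_hasDerivWithinAt_nonpos (convex_Icc 0 (1/2))
      (f' := fun x => (1 + x^2/12)/(1 - x/2 - x^2/12)^2 - 1/(1-x))
    · intro x hx
      exact ((hasDerivAt_quad_aux x (ne_of_gt (hq x hx.1 hx.2)) (hden' x hx.1 hx.2)).continuousAt).continuousWithinAt
    · intro x hx
      rw [interior_Icc] at hx
      exact (hasDerivAt_quad_aux x (ne_of_gt (hq x (le_of_lt hx.1) (le_of_lt hx.2)))
        (hden' x (le_of_lt hx.1) (le_of_lt hx.2))).hasDerivWithinAt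
    · intro x hx
      rw [interior_Icc] at hx
      obtain ⟨hx1, hx2⟩ := hx
      have hqx : (0:ℝ) < 1 - x/2 - x^2/12 := hq x (le_of_lt hx1) (le_of_lt hx2)
      have h1x : (0:ℝ) < 1 - x := by linarith
      have key : (1 + x^2/12) * (1 - x) ≤ (1 - x/2 - x^2/12)^2 := by nlinarith
      have h2 : (1 + x^2/12)/(1 - x/2 - x^2/12)^2 ≤ 1/(1-x) := by
        rw [div_le_div_iff₀ (by positivity) h1x]
        linarith

      linarith
  have := hanti (Set.mem_Icc.mpr ⟨le_refl (0:ℝ), by norm_num⟩)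
    (Set.mem_Icc.mpr ⟨le_of_lt hp0, hp2⟩) (le_of_lt hp0)
  simpa using this

/-- For `p ∈ (0, 1/2]`:
`1 − (2 − 1/ln 2)·p ≤ −p/ln(1−p) ≤ 1 − p/2 − p²/12`. -/
theorem neg_p_div_log_bounds (p : ℝ) (hp : p ∈ Set.Ioc (0 : ℝ) (1 / 2)) :
    1 - (2 - (Real.log 2)⁻¹) * p ≤ -p / Real.log (1 - p) ∧
      -p / Real.log (1 - p) ≤ 1 - (1 / 2) * p - (1 / 12) * p ^ 2 := by
  obtain ⟨hp0, hp2⟩ := hp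
  have hl2 : (0.6931471803 : ℝ) < Real.log 2 := Real.log_two_gt_d9
  have hl2' : Real.log 2 < 0.6931471808 := Real.log_two_lt_d9
  have hlog2pos : (0:ℝ) < Real.log 2 := by linarith
  have hlog2ne : Real.log 2 ≠ 0 := ne_of_gt hlog2pos
  have hinv_ub : (Real.log 2)⁻¹ < 1.45 := by
    have h1 : (Real.log 2)⁻¹ < (0.6931471803 : ℝ)⁻¹ := by
      apply inv_strictAnti₀ (by norm_num) hl2
    have h2 : (0.6931471803 : ℝ)⁻¹ < 1.45 := by norm_num
    linarith
  have hinv_lb : (1.44 : ℝ) < (Real.log 2)⁻¹ := by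
    have h1 : (0.6931471808 : ℝ)⁻¹ < (Real.log 2)⁻¹ := by
      apply inv_strictAnti₀ hlog2pos hl2'
    have h2 : (1.44 : ℝ) < (0.6931471808 : ℝ)⁻¹ := by norm_num
    linarith
  have h1p : (0:ℝ) < 1 - p := by linarith
  have hlogneg : Real.log (1 - p) < 0 := Real.log_neg (by linarith) (by linarith)
  have hLpos : 0 < -Real.log (1 - p) := by linarith
  have hrw : -p / Real.log (1 - p) = p / (-Real.log (1 - p)) := by
    rw [div_neg, neg_div]
  have hloghalf : Real.log (1 - 1/2 : ℝ) = -Real.log 2 := by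
    rw [show (1:ℝ) - 1/2 = 2⁻¹ by norm_num, Real.log_inv]
  constructor
  · have hend : (1:ℝ)/2/(1 - (2 - (Real.log 2)⁻¹)*(1/2)) + Real.log (1 - 1/2) = 0 := by
      rw [hloghalf, show (1:ℝ) - (2 - (Real.log 2)⁻¹)*(1/2) = (Real.log 2)⁻¹/2 by ring]
      field_simp
      ring
    have hmain := lower_aux (2 - (Real.log 2)⁻¹) p (by linarith) (by linarith) hend hp0 hp2
    have hcp : (0:ℝ) < 1 - (2 - (Real.log 2)⁻¹)*p := by nlinarith
    have hkey : -Real.log (1 - p) ≤ p / (1 - (2 - (Real.log 2)⁻¹)*p) := by linarith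
    rw [hrw, le_div_iff₀ hLpos]
    have h4 : (-Real.log (1 - p)) * (1 - (2 - (Real.log 2)⁻¹)*p) ≤ p := by
      calc (-Real.log (1 - p)) * (1 - (2 - (Real.log 2)⁻¹)*p)
          ≤ (p / (1 - (2 - (Real.log 2)⁻¹)*p)) * (1 - (2 - (Real.log 2)⁻¹)*p) := by
            apply mul_le_mul_of_nonneg_right hkey (le_of_lt hcp)
        _ = p := div_mul_cancel₀ p (ne_of_gt hcp)
    nlinarith
  · have hmain := upper_aux p hp0 hp2
    have hqp : (0:ℝ) < 1 - p/2 - p^2/12 := by nlinarith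
    have hkey : p / (1 - p/2 - p^2/12) ≤ -Real.log (1 - p) := by linarith
    rw [hrw, div_le_iff₀ hLpos]
    have h4 : p ≤ (1 - p/2 - p^2/12) * (-Real.log (1 - p)) := by
      have := (div_le_iff₀ hqp).mp hkey
      linarith
    nlinarith
end

section
/- Let λ > 0 and p = 1 − e^{−λ}. Let X be Geometric(p) and let A be an independent random variable with density λe^{−λa}/(1 − e^{−λ}) on [0,1] (an exponential of rate λ conditioned to lie in [0,1]). Then X + A is exponentially distributed with rate λ. -/
open MeasureTheory ProbabilityTheory

lemma aux_smul_prod {α β : Type*} [MeasurableSpace α] [MeasurableSpace β]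
    (c : ENNReal) (m : Measure α) (n : Measure β) [SFinite m] [SFinite n] :
    (c • m).prod n = c • (m.prod n) := by
  ext s hs
  rw [Measure.prod_apply hs, Measure.smul_apply, Measure.prod_apply hs,
    lintegral_smul_measure, smul_eq_mul]

lemma aux_map_add_withDensity (f : ℝ → ENNReal) (c : ℝ) :
    (volume.withDensity f).map (fun a => c + a)
      = volume.withDensity (fun x => f (x - c)) := by
  ext s hs
  rw [Measure.map_apply (measurable_const_add c) hs,
    withDensity_apply _ (hs.preimage (measurable_const_add c)),
    withDensity_apply _ hs]
  have := (measurePreserving_add_left volume c).setLIntegral_comp_preimage_emb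
    (measurableEmbedding_addLeft c) (fun x => f (x - c)) s
  simpa using this

/-- Let `λ > 0` and `p = 1 − e^{−λ}`.  If `X` is Geometric(p) (viewed as ℝ-valued),
`A` is independent of `X` with density `λ e^{−λa}/(1 − e^{−λ})` on `[0,1]`
(an exponential of rate `λ` conditioned to lie in `[0,1]`), then `X + A` is
exponentially distributed with rate `λ`. -/
theorem geometric_plus_truncated_exponential {Ω : Type*} [MeasurableSpace Ω]
    (μ : Measure Ω) [IsProbabilityMeasure μ] (l : ℝ) (hl : 0 < l) (p : ℝ)
    (hp : p = 1 - Real.exp (-l)) (X A : Ω → ℝ) (hX : Measurable X) (hA : Measurable A)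
    (hindep : IndepFun X A μ)
    (hXlaw : μ.map X =
      Measure.sum (fun i : ℕ => ENNReal.ofReal (p * (1 - p) ^ i) • Measure.dirac (i : ℝ)))
    (hAlaw : μ.map A = volume.withDensity (fun a =>
      ENNReal.ofReal (Set.indicator (Set.Icc (0 : ℝ) 1)
        (fun a => l * Real.exp (-l * a) / (1 - Real.exp (-l))) a))) :
    μ.map (fun ω => X ω + A ω) = volume.withDensity (fun x =>
      ENNReal.ofReal (Set.indicator (Set.Ici (0 : ℝ)) (fun x => l * Real.exp (-l * x)) x)) := by
  have hexp : Real.exp (-l) < 1 := by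
    rw [Real.exp_lt_one_iff]; linarith
  have hppos : 0 < p := by rw [hp]; linarith
  set g : ℝ → ENNReal := fun a =>
      ENNReal.ofReal (Set.indicator (Set.Icc (0 : ℝ) 1)
        (fun a => l * Real.exp (-l * a) / (1 - Real.exp (-l))) a) with hg
  have hgmeas : Measurable g := by
    apply Measurable.ennreal_ofReal
    exact Measurable.indicator (by fun_prop) measurableSet_Icc
  -- step 1 : law of the sum as a map of the product law
  have hprod : μ.map (fun ω => (X ω, A ω)) = (μ.map X).prod (μ.map A) :=
    (indepFun_iff_map_prod_eq_prod_map_map hX.aemeasurable hA.aemeasurable).mp hindep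
  have hmap : μ.map (fun ω => X ω + A ω)
      = ((μ.map X).prod (μ.map A)).map (fun q : ℝ × ℝ => q.1 + q.2) := by
    rw [← hprod, Measure.map_map (by fun_prop) (by fun_prop)]
    rfl
  rw [hmap, hXlaw, hAlaw]
  -- step 2 : compute the convolution as a sum of translated densities
  rw [Measure.prod_sum_left, Measure.map_sum (by fun_prop)]
  have hterm : ∀ i : ℕ,
      (((ENNReal.ofReal (p * (1 - p) ^ i) • Measure.dirac (i : ℝ)).prod
        (volume.withDensity g)).map (fun q : ℝ × ℝ => q.1 + q.2))
      = volume.withDensity (fun x => ENNReal.ofReal (p * (1 - p) ^ i) • g (x - i)) := by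
    intro i
    rw [aux_smul_prod, Measure.map_smul, Measure.dirac_prod,
      Measure.map_map (by fun_prop) (by fun_prop)]
    have : ((fun q : ℝ × ℝ => q.1 + q.2) ∘ Prod.mk (i : ℝ)) = fun a => (i : ℝ) + a := rfl
    rw [this, aux_map_add_withDensity]
    rw [← withDensity_smul' _ _ ENNReal.ofReal_ne_top]
    rfl
  simp_rw [hterm]
  rw [← withDensity_tsum (fun i => by fun_prop)]
  -- step 3 : identify the densities almost everywhere
  apply withDensity_congr_ae
  have hnull : volume (Set.range ((↑·) : ℤ → ℝ)) = 0 :=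
    Set.Countable.measure_zero (Set.countable_range _) _
  filter_upwards [measure_eq_zero_iff_ae_notMem.mp hnull] with x hx
  rw [tsum_apply (Pi.summable.2 fun _ => ENNReal.summable)]
  simp only [Pi.smul_apply, smul_eq_mul]
  have hxint : ∀ n : ℤ, x ≠ (n : ℝ) := by
    intro n hn; exact hx ⟨n, hn.symm⟩
  rcases lt_or_ge x 0 with hx0 | hx0
  · have : ∀ i : ℕ, ENNReal.ofReal (p * (1 - p) ^ i) * g (x - i) = 0 := by
      intro i
      have : x - (i : ℝ) ∉ Set.Icc (0:ℝ) 1 := by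
        intro h
        have := h.1
        have : (0:ℝ) ≤ x - i := this
        have : (i:ℝ) ≤ x := by linarith
        have : (0:ℝ) ≤ x := le_trans (Nat.cast_nonneg i) this
        linarith
      rw [hg]
      simp [Set.indicator_of_notMem this]
    rw [tsum_congr this, tsum_zero]
    rw [Set.indicator_of_notMem (by simpa using hx0)]
    simp
  · have hx0' : 0 < x := lt_of_le_of_ne hx0 (fun h => hxint 0 (by exact_mod_cast h.symm))
    set n : ℕ := ⌊x⌋₊ with hn
    have hn1 : (n : ℝ) ≤ x := Nat.floor_le hx0
    have hn2 : x < n + 1 := Nat.lt_floor_add_one x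
    have hn1' : (n : ℝ) < x := lt_of_le_of_ne hn1 (fun h => hxint n (by exact_mod_cast h.symm))
    have key : ∀ i : ℕ, i ≠ n → ENNReal.ofReal (p * (1 - p) ^ i) * g (x - i) = 0 := by
      intro i hi
      have : x - (i : ℝ) ∉ Set.Icc (0:ℝ) 1 := by
        intro h
        rcases lt_or_gt_of_ne hi with h' | h'
        · -- i < n, so x - i > 1
          have : (i : ℝ) + 1 ≤ n := by exact_mod_cast Nat.succ_le_of_lt h'
          have : (1:ℝ) < x - i := by linarith
          linarith [h.2]
        · -- i > n, so x - i < 0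
          have : (n : ℝ) + 1 ≤ i := by exact_mod_cast Nat.succ_le_of_lt h'
          have : x - (i:ℝ) < 0 := by linarith
          linarith [h.1]
      rw [hg]
      simp [Set.indicator_of_notMem this]
    rw [tsum_eq_single n key]
    have hmem : x - (n : ℝ) ∈ Set.Icc (0:ℝ) 1 := by
      constructor <;> [linarith; linarith]
    rw [hg]
    simp only [Set.indicator_of_mem hmem]
    rw [Set.indicator_of_mem (by simpa using hx0)]
    have h1pn : (0:ℝ) ≤ 1 - p := by
      rw [hp]; have := Real.exp_nonneg (-l); linarith
    rw [← ENNReal.ofReal_mul (mul_nonneg hppos.le (pow_nonneg h1pn _))]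
    congr 1
    have h1p : 1 - p = Real.exp (-l) := by rw [hp]; ring
    have hpne : (1 : ℝ) - Real.exp (-l) ≠ 0 := by linarith
    rw [h1p, hp, ← Real.exp_nat_mul]
    rw [div_eq_mul_inv]
    have : (1 - Real.exp (-l)) * Real.exp ((n:ℝ) * -l) *
        (l * Real.exp (-l * (x - n)) * (1 - Real.exp (-l))⁻¹)
        = l * (Real.exp ((n:ℝ) * -l) * Real.exp (-l * (x - n))) := by
      field_simp
    rw [this, ← Real.exp_add]
    ring_nf
end

section
/- Let i be a positive integer and let x be a real number with (1/2)^{1/i} ≤ x < (1/2)^{1/(i+1)}. Then x^{i+3} + x^i < 1. Consequently, for q ∈ (1/2, 1) and k = ⌊ln(1/2)/ln q⌋, one has q^{k+3} < 1 − q^k, so the only powers q^j (j ≥ k+1) that can lie in the interval [1 − q^k, 1/2] are q^{k+1} and q^{k+2}. -/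
lemma part1_aux : ∀ i : ℕ, 0 < i → ∀ x : ℝ,
    (1 / 2 : ℝ) ^ ((1 : ℝ) / i) ≤ x → x < (1 / 2 : ℝ) ^ ((1 : ℝ) / (i + 1)) →
    x ^ (i + 3) + x ^ i < 1 := by
  intro i hi x hx1 hx2
  set t : ℝ := (1 / 2 : ℝ) ^ ((1 : ℝ) / (i + 1)) with ht_def
  have hexp : ((1 : ℝ) / (i + 1)) = (((i + 1 : ℕ) : ℝ))⁻¹ := by push_cast; ring
  have ht_pow : t ^ (i + 1) = 1 / 2 := by
    rw [ht_def, hexp, Real.rpow_inv_natCast_pow (by norm_num) (by omega)]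
  have ht0 : 0 < t := Real.rpow_pos_of_pos (by norm_num) _
  have ht1 : t < 1 := Real.rpow_lt_one (by norm_num) (by norm_num) (by positivity)
  have hx0 : 0 < x :=
    lt_of_lt_of_le (Real.rpow_pos_of_pos (by norm_num) _) hx1
  -- lower bound on t : t ≥ (1/2)^(1/2), so t^2 ≥ 1/2 and t > 0.7
  have hs : (1 / 2 : ℝ) ^ ((1 : ℝ) / 2) ≤ t := by
    apply Real.rpow_le_rpow_of_exponent_ge (by norm_num) (by norm_num)
    rw [div_le_div_iff₀ (by positivity) (by norm_num)]
    have : (1 : ℝ) ≤ (i : ℝ) := by exact_mod_cast hi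
    linarith
  have hs2 : ((1 / 2 : ℝ) ^ ((1 : ℝ) / 2)) ^ 2 = 1 / 2 := by
    rw [show ((1 : ℝ) / 2) = (((2 : ℕ) : ℝ))⁻¹ by norm_num,
      Real.rpow_inv_natCast_pow (by norm_num) (by norm_num)]
  have hs0 : (0 : ℝ) ≤ (1 / 2 : ℝ) ^ ((1 : ℝ) / 2) :=
    (Real.rpow_pos_of_pos (by norm_num) _).le
  have ht2 : (1 / 2 : ℝ) ≤ t ^ 2 := by
    calc (1 / 2 : ℝ) = ((1 / 2 : ℝ) ^ ((1 : ℝ) / 2)) ^ 2 := hs2.symm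
    _ ≤ t ^ 2 := pow_le_pow_left₀ hs0 hs 2
  have htkey : t ^ 3 + 1 < 2 * t := by
    -- from t^2 + t - 1 > 0 and t < 1 : (1-t)(t^2+t-1) > 0
    have h07 : (7 : ℝ) / 10 < (1 / 2 : ℝ) ^ ((1 : ℝ) / 2) := by
      nlinarith [hs2, hs0]
    have htlow : t ^ 2 + t - 1 > 0 := by nlinarith
    nlinarith [mul_pos (sub_pos.mpr ht1) htlow]
  -- key inequality for t
  have e1 : t ^ (i + 3) = 1 / 2 * t ^ 2 := by
    rw [show i + 3 = (i + 1) + 2 by ring, pow_add, ht_pow]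
  have e2 : t ^ i * t = 1 / 2 := by rw [← pow_succ, ht_pow]
  have e2' : t ^ i = 1 / (2 * t) := by
    field_simp
    linarith [e2]
  have hkey : t ^ (i + 3) + t ^ i < 1 := by
    rw [e1, e2']
    rw [show (1 / 2 * t ^ 2 + 1 / (2 * t) : ℝ) = (t ^ 3 + 1) / (2 * t) by
      field_simp]
    rw [div_lt_one (by positivity)]
    linarith
  have h1 : x ^ (i + 3) < t ^ (i + 3) := pow_lt_pow_left₀ hx2 hx0.le (by omega)
  have h2 : x ^ i < t ^ i := pow_lt_pow_left₀ hx2 hx0.le (by omega)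
  linarith

/-- (1) For a positive integer `i` and `(1/2)^{1/i} ≤ x < (1/2)^{1/(i+1)}`,
one has `x^{i+3} + x^i < 1`.  (2) Consequently, for `q ∈ (1/2,1)` and
`k = ⌊ln(1/2)/ln q⌋`, one has `q^{k+3} < 1 − q^k`, so the only powers `q^j`
(`j ≥ k+1`) that can lie in `[1 − q^k, 1/2]` are `q^{k+1}` and `q^{k+2}`. -/
theorem powers_in_interval :
    (∀ i : ℕ, 0 < i → ∀ x : ℝ,
        (1 / 2 : ℝ) ^ ((1 : ℝ) / i) ≤ x → x < (1 / 2 : ℝ) ^ ((1 : ℝ) / (i + 1)) →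
        x ^ (i + 3) + x ^ i < 1) ∧
    (∀ q : ℝ, q ∈ Set.Ioo (1 / 2 : ℝ) 1 → ∀ k : ℤ,
        k = ⌊Real.log (1 / 2) / Real.log q⌋ →
        q ^ (k + 3) < 1 - q ^ k ∧
          ∀ j : ℤ, k + 1 ≤ j → q ^ j ∈ Set.Icc (1 - q ^ k) (1 / 2 : ℝ) →
            j = k + 1 ∨ j = k + 2) := by
  refine ⟨part1_aux, ?_⟩
  rintro q ⟨hqh, hq1⟩ k hk
  have hq0 : (0 : ℝ) < q := by linarith
  have hlogq : Real.log q < 0 := Real.log_neg hq0 hq1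
  have hloghalf : Real.log (1 / 2 : ℝ) < Real.log q :=
    (Real.log_lt_log_iff (by norm_num) hq0).mpr hqh
  set L : ℝ := Real.log (1 / 2) / Real.log q with hL
  have hL1 : 1 < L := by
    rw [hL, lt_div_iff_of_neg hlogq]
    linarith
  have hk1 : 1 ≤ k := by
    rw [hk]
    exact Int.le_floor.mpr (by exact_mod_cast hL1.le)
  have hkL : (k : ℝ) ≤ L := hk ▸ Int.floor_le L
  have hkL' : L < (k : ℝ) + 1 := hk ▸ Int.lt_floor_add_one L
  -- q^k ≥ 1/2
  have hqk : (1 / 2 : ℝ) ≤ q ^ k := by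
    rw [← Real.log_le_log_iff (by norm_num) (zpow_pos hq0 k), Real.log_zpow]
    rw [hL, le_div_iff_of_neg hlogq] at hkL
    linarith
  -- q^(k+1) < 1/2
  have hqk1 : q ^ (k + 1) < 1 / 2 := by
    rw [← Real.log_lt_log_iff (zpow_pos hq0 _) (by norm_num), Real.log_zpow]
    rw [hL, div_lt_iff_of_neg hlogq] at hkL'
    push_cast
    linarith
  set n : ℕ := k.toNat with hn
  have hkn : (n : ℤ) = k := Int.toNat_of_nonneg (by omega)
  have hn0 : 0 < n := by omega
  have hzk : q ^ k = q ^ n := by rw [← hkn, zpow_natCast]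
  have hzk3 : q ^ (k + 3) = q ^ (n + 3) := by
    rw [show k + 3 = ((n + 3 : ℕ) : ℤ) by omega, zpow_natCast]
  have hzk1 : q ^ (k + 1) = q ^ (n + 1) := by
    rw [show k + 1 = ((n + 1 : ℕ) : ℤ) by omega, zpow_natCast]
  -- hypotheses of part1
  have hroot1 : (1 / 2 : ℝ) ^ ((1 : ℝ) / n) ≤ q := by
    rw [← pow_le_pow_iff_left₀ (Real.rpow_pos_of_pos (by norm_num) _).le hq0.le
      (n := n) (by omega)]
    rw [show ((1 : ℝ) / n) = (((n : ℕ) : ℝ))⁻¹ by push_cast; ring,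
      Real.rpow_inv_natCast_pow (by norm_num) (by omega)]
    rw [hzk] at hqk
    exact hqk
  have hroot2 : q < (1 / 2 : ℝ) ^ ((1 : ℝ) / (n + 1)) := by
    rw [← pow_lt_pow_iff_left₀ hq0.le (Real.rpow_pos_of_pos (by norm_num) _).le
      (n := n + 1) (by omega)]
    rw [show ((1 : ℝ) / (n + 1)) = (((n + 1 : ℕ) : ℝ))⁻¹ by push_cast; ring,
      Real.rpow_inv_natCast_pow (by norm_num) (by omega)]
    rw [hzk1] at hqk1
    exact hqk1
  have hmain := part1_aux n hn0 q hroot1 hroot2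
  have hfirst : q ^ (k + 3) < 1 - q ^ k := by
    rw [hzk3, hzk]; linarith
  refine ⟨hfirst, ?_⟩
  intro j hj ⟨hjl, _⟩
  by_contra hcon
  push_neg at hcon
  have hj3 : k + 3 ≤ j := by omega
  have : q ^ j ≤ q ^ (k + 3) :=
    zpow_le_zpow_right_of_le_one₀ hq0 hq1.le hj3
  linarith
end

section
/- Let p̄ ∈ (0, 1/2) and suppose there exist positive integers i and j with (1−p̄)^i + (1−p̄)^j = 1. Define ρ₋(p) = (h(p) − m(p)²)/σ(p)², where h(p) = ∫₀¹ ⌊ln(1−u)/ln(1−p)⌋·⌊ln(u)/ln(1−p)⌋ du, m(p) = (1−p)/p and σ(p)² = (1−p)/p². Then the left and right one-sided derivatives of ρ₋ at p̄ exist and are unequal; in particular ρ₋ is not differentiable at p̄, i.e., the derivative of ρ₋ is discontinuous at p̄. -/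
open MeasureTheory

open Set
open scoped ENNReal


lemma mem_iff_left (q u : ℝ) (hq0 : 0 < q) (hq1 : q < 1) (hu0 : 0 < u) (hu1 : u < 1) (k : ℕ) :
    1 - q ^ (k+1) ≤ u ↔ (k : ℤ) < ⌊Real.log (1-u) / Real.log q⌋ := by
  have hlq : Real.log q < 0 := Real.log_neg hq0 hq1
  have h1u : 0 < 1 - u := by linarith
  have h1 : 1 - q ^ (k+1) ≤ u ↔ 1 - u ≤ q ^ (k+1) := by constructor <;> intro <;> linarith
  rw [h1, ← Real.log_le_log_iff h1u (pow_pos hq0 _), Real.log_pow,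
    ← le_div_iff_of_neg hlq, Int.lt_iff_add_one_le, Int.le_floor]
  push_cast
  exact Iff.rfl

lemma mem_iff_right (q u : ℝ) (hq0 : 0 < q) (hq1 : q < 1) (hu0 : 0 < u) (hu1 : u < 1) (l : ℕ) :
    u ≤ q ^ (l+1) ↔ (l : ℤ) < ⌊Real.log u / Real.log q⌋ := by
  have hlq : Real.log q < 0 := Real.log_neg hq0 hq1
  rw [← Real.log_le_log_iff hu0 (pow_pos hq0 _), Real.log_pow,
    ← le_div_iff_of_neg hlq, Int.lt_iff_add_one_le, Int.le_floor]
  push_cast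
  exact Iff.rfl

lemma pointwise_tsum (q u : ℝ) (hq0 : 0 < q) (hq1 : q < 1) (hu0 : 0 < u) (hu1 : u < 1) :
    ENNReal.ofReal ((⌊Real.log (1-u) / Real.log q⌋ : ℝ) * (⌊Real.log u / Real.log q⌋ : ℝ))
      = ∑' kl : ℕ × ℕ,
          (Set.Icc (1 - q ^ (kl.1+1)) (q ^ (kl.2+1))).indicator (fun _ => (1:ℝ≥0∞)) u := by
  have hlq : Real.log q < 0 := Real.log_neg hq0 hq1
  set a := ⌊Real.log (1-u) / Real.log q⌋ with ha
  set b := ⌊Real.log u / Real.log q⌋ with hb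
  have ha0 : 0 ≤ a := Int.le_floor.mpr (by
    push_cast
    exact div_nonneg_of_nonpos (Real.log_nonpos (by linarith) (by linarith)) hlq.le)
  have hb0 : 0 ≤ b := Int.le_floor.mpr (by
    push_cast
    exact div_nonneg_of_nonpos (Real.log_nonpos hu0.le hu1.le) hlq.le)
  set A := a.toNat with hA
  set B := b.toNat with hB
  have haA : (A : ℤ) = a := Int.toNat_of_nonneg ha0
  have hbB : (B : ℤ) = b := Int.toNat_of_nonneg hb0
  have key : ∀ kl : ℕ × ℕ,
      (Set.Icc (1 - q ^ (kl.1+1)) (q ^ (kl.2+1))).indicator (fun _ => (1:ℝ≥0∞)) u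
        = if kl ∈ Finset.range A ×ˢ Finset.range B then 1 else 0 := by
    intro ⟨k, l⟩
    rw [Set.indicator_apply]
    congr 1
    simp only [Set.mem_Icc, Finset.mem_product, Finset.mem_range, eq_iff_iff]
    rw [mem_iff_left q u hq0 hq1 hu0 hu1 k, mem_iff_right q u hq0 hq1 hu0 hu1 l,
      ← ha, ← hb, ← haA, ← hbB]
    exact and_congr (by exact_mod_cast Iff.rfl) (by exact_mod_cast Iff.rfl)
  rw [tsum_congr key, tsum_eq_sum (s := Finset.range A ×ˢ Finset.range B)
    (fun kl hkl => by simp [hkl])]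
  simp only [Finset.sum_ite_mem, Finset.inter_self, Finset.sum_const, nsmul_eq_mul, mul_one]
  have : (a : ℝ) * (b : ℝ) = ((A * B : ℕ) : ℝ) := by push_cast [← haA, ← hbB]; ring
  rw [this, ENNReal.ofReal_natCast]
  simp [Finset.card_product]

lemma h_eq (q : ℝ) (hq0 : 0 < q) (hq1 : q < 1) (N : ℕ) (hN : q ^ N < 1 - q) :
    ∫ u in Set.Ioo (0:ℝ) 1,
        (⌊Real.log (1-u) / Real.log q⌋ : ℝ) * (⌊Real.log u / Real.log q⌋ : ℝ)
      = ∑ kl ∈ Finset.range N ×ˢ Finset.range N,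
          max (q ^ (kl.1+1) + q ^ (kl.2+1) - 1) 0 := by
  have hmeas : Measurable (fun u : ℝ =>
      (⌊Real.log (1 - u) / Real.log q⌋ : ℝ) * (⌊Real.log u / Real.log q⌋ : ℝ)) := by
    apply Measurable.mul
    · exact measurable_from_top.comp ((Real.measurable_log.comp
        (measurable_const.sub measurable_id)).div_const _).floor
    · exact measurable_from_top.comp (Real.measurable_log.div_const _).floor
  have hlq : Real.log q < 0 := Real.log_neg hq0 hq1
  -- nonnegativity on Ioo
  have hnn : ∀ u ∈ Set.Ioo (0:ℝ) 1, 0 ≤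
      (⌊Real.log (1-u) / Real.log q⌋ : ℝ) * (⌊Real.log u / Real.log q⌋ : ℝ) := by
    intro u hu
    obtain ⟨hu0, hu1⟩ := hu
    have h1 : (0:ℝ) ≤ (⌊Real.log (1-u) / Real.log q⌋ : ℝ) := by
      have : (0:ℤ) ≤ ⌊Real.log (1-u) / Real.log q⌋ := Int.le_floor.mpr (by
        push_cast
        exact div_nonneg_of_nonpos (Real.log_nonpos (by linarith) (by linarith)) hlq.le)
      exact_mod_cast this
    have h2 : (0:ℝ) ≤ (⌊Real.log u / Real.log q⌋ : ℝ) := by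
      have : (0:ℤ) ≤ ⌊Real.log u / Real.log q⌋ := Int.le_floor.mpr (by
        push_cast
        exact div_nonneg_of_nonpos (Real.log_nonpos hu0.le hu1.le) hlq.le)
      exact_mod_cast this
    exact mul_nonneg h1 h2
  rw [integral_eq_lintegral_of_nonneg_ae
    ((ae_restrict_iff' measurableSet_Ioo).2 (ae_of_all _ hnn))
    hmeas.aestronglyMeasurable]
  -- rewrite lintegral via pointwise tsum
  have hcong : ∫⁻ u in Set.Ioo (0:ℝ) 1, ENNReal.ofReal
      ((⌊Real.log (1-u) / Real.log q⌋ : ℝ) * (⌊Real.log u / Real.log q⌋ : ℝ))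
      = ∫⁻ u in Set.Ioo (0:ℝ) 1, ∑' kl : ℕ × ℕ,
          (Set.Icc (1 - q ^ (kl.1+1)) (q ^ (kl.2+1))).indicator (fun _ => (1:ℝ≥0∞)) u := by
    apply lintegral_congr_ae
    refine (ae_restrict_iff' measurableSet_Ioo).2 (ae_of_all _ ?_)
    intro u hu
    exact pointwise_tsum q u hq0 hq1 hu.1 hu.2
  rw [hcong, lintegral_tsum (fun kl =>
    ((measurable_const.indicator measurableSet_Icc).aemeasurable))]
  -- each term
  have hterm : ∀ kl : ℕ × ℕ, ∫⁻ u in Set.Ioo (0:ℝ) 1,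
      (Set.Icc (1 - q ^ (kl.1+1)) (q ^ (kl.2+1))).indicator (fun _ => (1:ℝ≥0∞)) u
      = ENNReal.ofReal (max (q ^ (kl.1+1) + q ^ (kl.2+1) - 1) 0) := by
    intro ⟨k, l⟩
    rw [lintegral_indicator measurableSet_Icc, setLIntegral_one,
      Measure.restrict_apply measurableSet_Icc]
    have ha : (0:ℝ) ≤ 1 - q ^ (k+1) := by
      have := pow_le_one₀ hq0.le hq1.le (n := k+1); linarith
    have hb : q ^ (l+1) ≤ 1 := pow_le_one₀ hq0.le hq1.le
    have hvol : volume (Set.Icc (1 - q ^ (k+1)) (q ^ (l+1)) ∩ Set.Ioo (0:ℝ) 1)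
        = ENNReal.ofReal (q ^ (l+1) - (1 - q ^ (k+1))) := by
      apply le_antisymm
      · calc volume (Set.Icc (1 - q^(k+1)) (q^(l+1)) ∩ Set.Ioo (0:ℝ) 1)
            ≤ volume (Set.Icc (1 - q^(k+1)) (q^(l+1))) := measure_mono Set.inter_subset_left
          _ = _ := Real.volume_Icc
      · calc ENNReal.ofReal (q^(l+1) - (1 - q^(k+1)))
            = volume (Set.Ioo (1 - q^(k+1)) (q^(l+1))) := Real.volume_Ioo.symm
          _ ≤ _ := by
              apply measure_mono
              intro x hx
              exact ⟨⟨hx.1.le, hx.2.le⟩, lt_of_le_of_lt ha hx.1, lt_of_lt_of_le hx.2 hb⟩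
    rw [hvol]
    rcases le_total (q ^ (k+1) + q ^ (l+1) - 1) 0 with h | h
    · rw [max_eq_right h, ENNReal.ofReal_of_nonpos (by linarith), ENNReal.ofReal_zero]
    · rw [max_eq_left h]
      congr 1
      ring
  rw [tsum_congr hterm]
  -- reduce tsum to finite sum
  have hzero : ∀ kl : ℕ × ℕ, kl ∉ Finset.range N ×ˢ Finset.range N →
      ENNReal.ofReal (max (q ^ (kl.1+1) + q ^ (kl.2+1) - 1) 0) = 0 := by
    intro ⟨k, l⟩ hkl
    simp only [Finset.mem_product, Finset.mem_range, not_and_or, not_lt] at hkl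
    have hsmall : q ^ (k+1) + q ^ (l+1) - 1 ≤ 0 := by
      have e1 : ∀ m : ℕ, N ≤ m → q ^ (m+1) ≤ q ^ N := fun m hm =>
        pow_le_pow_of_le_one hq0.le hq1.le (by omega)
      have e2 : ∀ m : ℕ, q ^ (m+1) ≤ q := fun m =>
        calc q ^ (m+1) ≤ q ^ 1 := pow_le_pow_of_le_one hq0.le hq1.le (by omega)
          _ = q := pow_one q
      rcases hkl with h | h
      · have := e1 k h; have := e2 l; linarith
      · have := e1 l h; have := e2 k; linarith
    rw [max_eq_right hsmall, ENNReal.ofReal_zero]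
  rw [tsum_eq_sum hzero, ← ENNReal.ofReal_sum_of_nonneg (fun kl _ => le_max_right _ _),
    ENNReal.toReal_ofReal (Finset.sum_nonneg (fun kl _ => le_max_right _ _))]

def phiF (kl : ℕ × ℕ) (q : ℝ) : ℝ := q ^ (kl.1+1) + q ^ (kl.2+1)

lemma phiF_mono {q q' : ℝ} (h0 : 0 ≤ q) (h : q ≤ q') (kl : ℕ × ℕ) : phiF kl q ≤ phiF kl q' :=
  add_le_add (pow_le_pow_left₀ h0 h _) (pow_le_pow_left₀ h0 h _)

lemma phiF_cont (kl : ℕ × ℕ) : Continuous (fun p : ℝ => phiF kl (1 - p)) := by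
  unfold phiF; fun_prop

lemma phiF_diff (kl : ℕ × ℕ) (x : ℝ) : DifferentiableAt ℝ (fun p : ℝ => phiF kl (1 - p) - 1) x := by
  unfold phiF; fun_prop

lemma phiF_hasDeriv (kl : ℕ × ℕ) (x : ℝ) :
    HasDerivAt (fun p : ℝ => phiF kl (1 - p) - 1)
      (-(((kl.1+1) : ℝ) * (1-x)^kl.1 + ((kl.2+1) : ℝ) * (1-x)^kl.2)) x := by
  have hb : HasDerivAt (fun p : ℝ => 1 - p) (-1) x := (hasDerivAt_id x).const_sub 1
  have h1 : HasDerivAt (fun p : ℝ => (1-p)^(kl.1+1))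
      (-(((kl.1+1):ℝ) * (1-x)^kl.1)) x := by
    have := (hasDerivAt_pow (kl.1+1) (1-x)).comp x hb
    refine this.congr_deriv ?_
    push_cast
    simp
  have h2 : HasDerivAt (fun p : ℝ => (1-p)^(kl.2+1))
      (-(((kl.2+1):ℝ) * (1-x)^kl.2)) x := by
    have := (hasDerivAt_pow (kl.2+1) (1-x)).comp x hb
    refine this.congr_deriv ?_
    push_cast
    simp
  have := (h1.add h2).sub_const 1
  refine this.congr_deriv ?_
  ring

/-- The minimum correlation `ρ₋(p) = (h(p) − m(p)²)/σ(p)²` between two Geometric(p)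
random variables, where `h(p) = ∫₀¹ ⌊ln(1−u)/ln(1−p)⌋ ⌊ln u/ln(1−p)⌋ du`,
`m(p) = (1−p)/p`, `σ(p)² = (1−p)/p²`. -/
noncomputable def rhoMinus (p : ℝ) : ℝ :=
  ((∫ u in Set.Ioo (0 : ℝ) 1,
      (⌊Real.log (1 - u) / Real.log (1 - p)⌋ : ℝ) * (⌊Real.log u / Real.log (1 - p)⌋ : ℝ))
    - ((1 - p) / p) ^ 2) / ((1 - p) / p ^ 2)

/-- If `p̄ ∈ (0,1/2)` and there are positive integers `i, j` with
`(1−p̄)^i + (1−p̄)^j = 1`, then the left and right one-sided derivatives of `ρ₋`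
at `p̄` exist but are unequal; in particular `ρ₋` is not differentiable at `p̄`,
i.e. its derivative is discontinuous there. -/
theorem rhoMinus_deriv_discontinuous (pb : ℝ) (hpb : pb ∈ Set.Ioo (0 : ℝ) (1 / 2))
    (i j : ℕ) (hi : 0 < i) (hj : 0 < j) (hij : (1 - pb) ^ i + (1 - pb) ^ j = 1) :
    (∃ dL dR : ℝ, HasDerivWithinAt rhoMinus dL (Set.Iio pb) pb ∧
        HasDerivWithinAt rhoMinus dR (Set.Ioi pb) pb ∧ dL ≠ dR) ∧
      ¬ DifferentiableAt ℝ rhoMinus pb := by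
  classical
  obtain ⟨hpb0, hpb2⟩ := hpb
  have hr1 : 1 - pb < 1 := by linarith
  have hrh : 1/2 < 1 - pb := by linarith
  have hr0 : (0:ℝ) < 1 - pb := by linarith
  set qp : ℝ := (1 + (1 - pb))/2 with hqp_def
  have hrqp : 1 - pb < qp := by rw [hqp_def]; linarith
  have hqp1 : qp < 1 := by rw [hqp_def]; linarith
  have hqp0 : 0 < qp := by linarith
  obtain ⟨N, hN⟩ := exists_pow_lt_of_lt_one (x := 1 - qp) (y := qp) (by linarith) hqp1
  set T : Finset (ℕ × ℕ) := Finset.range N ×ˢ Finset.range N with hT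
  set Tpos : Finset (ℕ × ℕ) := T.filter (fun kl => 1 < phiF kl (1 - pb)) with hTpos
  set Teq : Finset (ℕ × ℕ) := T.filter (fun kl => phiF kl (1 - pb) = 1) with hTeq
  -- integral formula on the relevant range
  have hI : ∀ p : ℝ, 0 < p → p < 1 → 1 - p ≤ qp →
      rhoMinus p = ((∑ kl ∈ T, max (phiF kl (1 - p) - 1) 0)
        - ((1-p)/p)^2) / ((1-p)/p^2) := by
    intro p h0 h1 hle
    have hq0 : 0 < 1 - p := by linarith
    have hNp : (1-p) ^ N < 1 - (1-p) := by
      have h2 : (1-p)^N ≤ qp^N := pow_le_pow_left₀ hq0.le hle N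
      have h3 : 1 - qp ≤ 1 - (1-p) := by linarith
      linarith
    unfold rhoMinus
    rw [h_eq (1-p) hq0 (by linarith) N hNp]
    rfl
  -- the eventual good set
  have hev : ∀ᶠ p in nhds pb, (0 < p ∧ p < 1 ∧ 1 - p ≤ qp) ∧
      ∀ kl ∈ T, (1 < phiF kl (1 - pb) → 1 < phiF kl (1-p)) ∧
        (phiF kl (1 - pb) < 1 → phiF kl (1-p) < 1) := by
    apply Filter.Eventually.and
    · have hmem : Set.Ioo (pb/2) (1/2) ∈ nhds pb :=
        Ioo_mem_nhds (by linarith) (by linarith)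
      filter_upwards [hmem] with p hp
      obtain ⟨hp1, hp2⟩ := hp
      refine ⟨by linarith, by linarith, by rw [hqp_def]; linarith⟩
    · rw [Filter.eventually_all_finset]
      intro kl _
      apply Filter.Eventually.and
      · rcases lt_or_ge 1 (phiF kl (1 - pb)) with h | h
        · have := ((phiF_cont kl).continuousAt (x := pb)).eventually_const_lt h
          filter_upwards [this] with p hp _
          exact hp
        · filter_upwards with p hc
          exact absurd hc h.not_gt
      · rcases lt_or_ge (phiF kl (1 - pb)) 1 with h | h
        · have := ((phiF_cont kl).continuousAt (x := pb)).eventually_lt_const h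
          filter_upwards [this] with p hp _
          exact hp
        · filter_upwards with p hc
          exact absurd hc h.not_gt
  -- right equality (p ≥ pb)
  have keyR : ∀ p : ℝ, ((0 < p ∧ p < 1 ∧ 1 - p ≤ qp) ∧
      ∀ kl ∈ T, (1 < phiF kl (1 - pb) → 1 < phiF kl (1-p)) ∧
        (phiF kl (1 - pb) < 1 → phiF kl (1-p) < 1)) → pb ≤ p →
      rhoMinus p = ((∑ kl ∈ Tpos, (phiF kl (1 - p) - 1)) - ((1-p)/p)^2) / ((1-p)/p^2) := by
    intro p ⟨⟨h0, h1, hle⟩, himp⟩ hpbp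
    rw [hI p h0 h1 hle]
    congr 2
    have hq0 : (0:ℝ) ≤ 1 - p := by linarith
    have hqr : 1 - p ≤ 1 - pb := by linarith
    have step1 : ∑ kl ∈ T, max (phiF kl (1 - p) - 1) 0
        = ∑ kl ∈ Tpos, max (phiF kl (1 - p) - 1) 0 := by
      symm
      apply Finset.sum_subset (Finset.filter_subset _ _)
      intro kl hklT hklnot
      have hle1 : ¬ (1 < phiF kl (1 - pb)) := by
        intro hc
        exact hklnot (Finset.mem_filter.mpr ⟨hklT, hc⟩)
      push_neg at hle1
      have : phiF kl (1 - p) ≤ phiF kl (1 - pb) := phiF_mono hq0 hqr kl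
      exact max_eq_right (by linarith)
    rw [step1]
    apply Finset.sum_congr rfl
    intro kl hkl
    obtain ⟨hklT, hkl1⟩ := Finset.mem_filter.mp hkl
    have := (himp kl hklT).1 hkl1
    exact max_eq_left (by linarith)
  -- left equality (p ≤ pb)
  have keyL : ∀ p : ℝ, ((0 < p ∧ p < 1 ∧ 1 - p ≤ qp) ∧
      ∀ kl ∈ T, (1 < phiF kl (1 - pb) → 1 < phiF kl (1-p)) ∧
        (phiF kl (1 - pb) < 1 → phiF kl (1-p) < 1)) → p ≤ pb →
      rhoMinus p = (((∑ kl ∈ Tpos, (phiF kl (1 - p) - 1))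
          + (∑ kl ∈ Teq, (phiF kl (1 - p) - 1))) - ((1-p)/p)^2) / ((1-p)/p^2) := by
    intro p ⟨⟨h0, h1, hle⟩, himp⟩ hppb
    rw [hI p h0 h1 hle]
    congr 2
    have hdisj : Disjoint Tpos Teq := by
      rw [Finset.disjoint_left]
      intro kl ha hb
      have h1' := (Finset.mem_filter.mp ha).2
      have h2' := (Finset.mem_filter.mp hb).2
      rw [h2'] at h1'
      exact lt_irrefl _ h1'
    rw [← Finset.sum_union hdisj]
    have hq0' : (0:ℝ) ≤ 1 - pb := hr0.le
    have hqr : 1 - pb ≤ 1 - p := by linarith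
    have step1 : ∑ kl ∈ T, max (phiF kl (1 - p) - 1) 0
        = ∑ kl ∈ Tpos ∪ Teq, max (phiF kl (1 - p) - 1) 0 := by
      symm
      apply Finset.sum_subset
      · exact Finset.union_subset (Finset.filter_subset _ _) (Finset.filter_subset _ _)
      · intro kl hklT hklnot
        rw [Finset.mem_union] at hklnot
        push_neg at hklnot
        have hne1 : ¬ (1 < phiF kl (1 - pb)) := fun hc =>
          hklnot.1 (Finset.mem_filter.mpr ⟨hklT, hc⟩)
        have hne2 : phiF kl (1 - pb) ≠ 1 := fun hc =>
          hklnot.2 (Finset.mem_filter.mpr ⟨hklT, hc⟩)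
        push_neg at hne1
        have hlt : phiF kl (1 - pb) < 1 := lt_of_le_of_ne hne1 hne2
        have := (himp kl hklT).2 hlt
        exact max_eq_right (by linarith)
    rw [step1]
    apply Finset.sum_congr rfl
    intro kl hkl
    rw [Finset.mem_union] at hkl
    have hge : 1 ≤ phiF kl (1 - pb) := by
      rcases hkl with h | h
      · exact (Finset.mem_filter.mp h).2.le
      · exact ((Finset.mem_filter.mp h).2).ge
    have : phiF kl (1 - pb) ≤ phiF kl (1 - p) := phiF_mono hq0' hqr kl
    exact max_eq_left (by linarith)
  -- the smooth one-sided extensions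
  set GR : ℝ → ℝ := fun p =>
    ((∑ kl ∈ Tpos, (phiF kl (1 - p) - 1)) - ((1-p)/p)^2) / ((1-p)/p^2) with hGR_def
  set E : ℝ → ℝ := fun p => ∑ kl ∈ Teq, (phiF kl (1 - p) - 1) with hE_def
  set w : ℝ → ℝ := fun p => (1-p)/p^2 with hw_def
  have hwpos : 0 < w pb := div_pos hr0 (pow_pos hpb0 2)
  have hwne : w pb ≠ 0 := ne_of_gt hwpos
  -- differentiability of GR
  have hGRd : DifferentiableAt ℝ GR pb := by
    apply DifferentiableAt.div
    · apply DifferentiableAt.sub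
      · exact DifferentiableAt.fun_sum (fun kl _ => phiF_diff kl pb)
      · exact DifferentiableAt.pow (DifferentiableAt.div (by fun_prop) (by fun_prop) hpb0.ne') 2
    · exact DifferentiableAt.div (by fun_prop) (by fun_prop) (pow_ne_zero 2 hpb0.ne')
    · exact hwne
  have hwd : DifferentiableAt ℝ w pb :=
    DifferentiableAt.div (by fun_prop) (by fun_prop) (pow_ne_zero 2 hpb0.ne')
  -- E vanishes at pb
  have hE0 : E pb = 0 := by
    rw [hE_def]
    apply Finset.sum_eq_zero
    intro kl hkl
    have := (Finset.mem_filter.mp hkl).2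
    simp [this]
  -- derivative of E
  set e' : ℝ := ∑ kl ∈ Teq,
      -(((kl.1+1) : ℝ) * (1-pb)^kl.1 + ((kl.2+1) : ℝ) * (1-pb)^kl.2) with he'_def
  have hEd : HasDerivAt E e' pb := HasDerivAt.fun_sum (fun kl _ => phiF_hasDeriv kl pb)
  -- Teq is nonempty
  have hiN : i < N ∧ j < N := by
    have hrj : (1-pb) ^ j ≤ 1-pb := by
      calc (1-pb)^j ≤ (1-pb)^1 := pow_le_pow_of_le_one hr0.le hr1.le hj
        _ = 1-pb := pow_one _
    have hri : (1-pb) ^ i ≤ 1-pb := by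
      calc (1-pb)^i ≤ (1-pb)^1 := pow_le_pow_of_le_one hr0.le hr1.le hi
        _ = 1-pb := pow_one _
    have h3 : (1-pb) ^ N ≤ qp ^ N := pow_le_pow_left₀ hr0.le hrqp.le N
    constructor
    · have : (1-pb) ^ N < (1-pb) ^ i := by linarith
      exact (pow_lt_pow_iff_right_of_lt_one₀ hr0 hr1).mp this
    · have : (1-pb) ^ N < (1-pb) ^ j := by linarith
      exact (pow_lt_pow_iff_right_of_lt_one₀ hr0 hr1).mp this
  have hTeqne : Teq.Nonempty := by
    refine ⟨(i-1, j-1), Finset.mem_filter.mpr ⟨?_, ?_⟩⟩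
    · rw [hT, Finset.mem_product]
      exact ⟨Finset.mem_range.mpr (by omega), Finset.mem_range.mpr (by omega)⟩
    · show phiF (i-1, j-1) (1 - pb) = 1
      unfold phiF
      simp only
      rw [show i - 1 + 1 = i from by omega, show j - 1 + 1 = j from by omega]
      exact hij
  have he'neg : e' < 0 := by
    rw [he'_def]
    calc ∑ kl ∈ Teq, -(((kl.1+1) : ℝ) * (1-pb)^kl.1 + ((kl.2+1) : ℝ) * (1-pb)^kl.2)
        < ∑ _kl ∈ Teq, (0:ℝ) := by
          apply Finset.sum_lt_sum_of_nonempty hTeqne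
          intro kl _
          have h1 : (0:ℝ) < ((kl.1:ℝ)+1) * (1-pb)^kl.1 + ((kl.2:ℝ)+1) * (1-pb)^kl.2 := by
            positivity
          linarith
      _ = 0 := Finset.sum_const_zero
  -- derivative of E / w
  have hEdiv : HasDerivAt (fun p => E p / w p) (e' / w pb) pb := by
    have h := hEd.div hwd.hasDerivAt hwne
    refine h.congr_deriv ?_
    rw [hE0]
    field_simp
    ring
  set dR : ℝ := deriv GR pb with hdR_def
  have hGRh : HasDerivAt GR dR pb := hGRd.hasDerivAt
  have hGLh : HasDerivAt (fun p => GR p + E p / w p) (dR + e' / w pb) pb := hGRh.add hEdiv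
  have hGLeq : ∀ p : ℝ, p ≠ 0 → 1 - p ≠ 0 →
      GR p + E p / w p = (((∑ kl ∈ Tpos, (phiF kl (1 - p) - 1))
          + (∑ kl ∈ Teq, (phiF kl (1 - p) - 1))) - ((1-p)/p)^2) / ((1-p)/p^2) := by
    intro p hp h1p
    rw [hGR_def, hE_def, hw_def]
    simp only
    field_simp
    ring
  -- dL ≠ dR
  have hediv_neg : e' / w pb < 0 := div_neg_of_neg_of_pos he'neg hwpos
  have hne : dR + e' / w pb ≠ dR := by
    intro h
    have : e' / w pb = 0 := by linarith [congrArg (fun x => x - dR) h]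
    linarith
  -- facts at pb
  have hpbgood : ((0 < pb ∧ pb < 1 ∧ 1 - pb ≤ qp) ∧
      ∀ kl ∈ T, (1 < phiF kl (1 - pb) → 1 < phiF kl (1-pb)) ∧
        (phiF kl (1 - pb) < 1 → phiF kl (1-pb) < 1)) :=
    ⟨⟨hpb0, by linarith, hrqp.le⟩, fun kl _ => ⟨fun h => h, fun h => h⟩⟩
  have hRpb : rhoMinus pb = GR pb := keyR pb hpbgood le_rfl
  have hLpb : rhoMinus pb = GR pb + E pb / w pb := by
    rw [hGLeq pb hpb0.ne' (by linarith)]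
    exact keyL pb hpbgood le_rfl
  -- transfer to one-sided derivatives
  have hdRw : HasDerivWithinAt rhoMinus dR (Set.Ioi pb) pb := by
    apply (hGRh.hasDerivWithinAt (s := Set.Ioi pb)).congr_of_eventuallyEq _ hRpb
    filter_upwards [hev.filter_mono nhdsWithin_le_nhds, self_mem_nhdsWithin] with p hp hmem
    exact keyR p hp (le_of_lt hmem)
  have hdLw : HasDerivWithinAt rhoMinus (dR + e' / w pb) (Set.Iio pb) pb := by
    apply (hGLh.hasDerivWithinAt (s := Set.Iio pb)).congr_of_eventuallyEq _ hLpb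
    filter_upwards [hev.filter_mono nhdsWithin_le_nhds, self_mem_nhdsWithin] with p hp hmem
    have h0 : (0:ℝ) < p := hp.1.1
    have h1 : p < 1 := hp.1.2.1
    rw [keyL p hp (le_of_lt hmem), hGLeq p h0.ne' (by linarith)]
  refine ⟨⟨dR + e' / w pb, dR, hdLw, hdRw, hne⟩, ?_⟩
  intro hdiff
  have h1 := (hdiff.hasDerivAt.hasDerivWithinAt (s := Set.Iio pb))
  have h2 := (hdiff.hasDerivAt.hasDerivWithinAt (s := Set.Ioi pb))
  have e1 : dR + e' / w pb = deriv rhoMinus pb := by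
    rw [← hdLw.derivWithin (uniqueDiffWithinAt_Iio pb)]
    exact h1.derivWithin (uniqueDiffWithinAt_Iio pb)
  have e2 : dR = deriv rhoMinus pb := by
    rw [← hdRw.derivWithin (uniqueDiffWithinAt_Ioi pb)]
    exact h2.derivWithin (uniqueDiffWithinAt_Ioi pb)
  exact hne (e1.trans e2.symm)
end
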